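/- arXiv:1602.05406 — 5 statements merged into one kernel-verified Lean document; each statement's English description precedes it below -/
import Mathlib

section
/- Let K be a simplicial complex and I a vertex of K whose link Lk(I) is contractible. Then the geometric realization of K is homotopy equivalent to the geometric realization of the subcomplex K \ St(I), obtained by removing the open star of I. -/
open scoped Classical

/-- Geometric realization of an abstract simplicial complex with (finite) vertex
set `V`: the set of convex weight functions whose support is a face. -/
def realization {V : Type} [Fintype V] (K : Set (Finset V)) : Set (V → ℝ) :=
  {f | (∀ v, 0 ≤ f v) ∧ (∑ v, f v) = 1 ∧ (Finset.univ.filter fun v => f v ≠ 0) ∈ K}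

/-- The link of a vertex `v` in `K`: the faces `σ` with `v ∉ σ` and `σ ∪ {v} ∈ K`. -/
def link {V : Type} [DecidableEq V] (K : Set (Finset V)) (v : V) : Set (Finset V) :=
  {σ | v ∉ σ ∧ insert v σ ∈ K}

set_option linter.unusedSectionVars false
set_option linter.unusedVariables false

namespace StarProof

variable {V : Type} [Fintype V] [DecidableEq V]

noncomputable section

/-- The support of a weight function. -/
def spt (x : V → ℝ) : Finset V := Finset.univ.filter fun w => x w ≠ 0

lemma mem_spt {x : V → ℝ} {w : V} : w ∈ spt x ↔ x w ≠ 0 := by simp [spt]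

lemma mem_real_iff {M : Set (Finset V)} {x : V → ℝ} :
    x ∈ realization M ↔ (∀ w, 0 ≤ x w) ∧ (∑ w, x w) = 1 ∧ spt x ∈ M := Iff.rfl

lemma real_nonneg {M : Set (Finset V)} {x : V → ℝ} (h : x ∈ realization M) (w : V) :
    0 ≤ x w := h.1 w

lemma real_sum {M : Set (Finset V)} {x : V → ℝ} (h : x ∈ realization M) : ∑ w, x w = 1 := h.2.1

lemma real_spt {M : Set (Finset V)} {x : V → ℝ} (h : x ∈ realization M) : spt x ∈ M := h.2.2

lemma real_le_one {M : Set (Finset V)} {x : V → ℝ} (h : x ∈ realization M) (w : V) : x w ≤ 1 := by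
  rw [← h.2.1]
  exact Finset.single_le_sum (fun i _ => h.1 i) (Finset.mem_univ w)

lemma real_mono {M N : Set (Finset V)} (h : M ⊆ N) : realization M ⊆ realization N :=
  fun _ hx => ⟨hx.1, hx.2.1, h hx.2.2⟩

lemma isClosed_real (M : Set (Finset V)) (hM : ∀ σ ∈ M, ∀ τ ⊆ σ, τ ∈ M) :
    IsClosed (realization M) := by
  have he : realization M = ⋃ σ ∈ M,
      {x : V → ℝ | (∀ w, 0 ≤ x w) ∧ (∑ w, x w) = 1 ∧ ∀ w, w ∉ σ → x w = 0} := by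
    ext x
    simp only [Set.mem_iUnion, Set.mem_setOf_eq]
    constructor
    · intro hx
      exact ⟨spt x, hx.2.2, hx.1, hx.2.1, fun w hw => by
        by_contra h0; exact hw (mem_spt.2 h0)⟩
    · rintro ⟨σ, hσ, h1, h2, h3⟩
      refine ⟨h1, h2, hM σ hσ _ ?_⟩
      intro w hw
      by_contra hw'
      exact (mem_spt.1 hw) (h3 w hw')
  rw [he]
  refine Set.Finite.isClosed_biUnion (Set.toFinite M) fun σ _ => ?_
  have h2 : {x : V → ℝ | (∀ w, 0 ≤ x w) ∧ (∑ w, x w) = 1 ∧ ∀ w, w ∉ σ → x w = 0}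
      = (⋂ w, {x : V → ℝ | 0 ≤ x w}) ∩ ({x : V → ℝ | (∑ w, x w) = 1} ∩
        ⋂ w, {x : V → ℝ | w ∉ σ → x w = 0}) := by
    ext x
    simp only [Set.mem_inter_iff, Set.mem_iInter, Set.mem_setOf_eq]
  rw [h2]
  refine IsClosed.inter (isClosed_iInter fun w =>
    isClosed_le continuous_const (continuous_apply w)) (IsClosed.inter ?_ ?_)
  · exact isClosed_eq (by fun_prop) continuous_const
  · refine isClosed_iInter fun w => ?_
    by_cases hw : w ∈ σ
    · have : {x : V → ℝ | w ∉ σ → x w = 0} = Set.univ := by ext x; simp [hw]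
      rw [this]; exact isClosed_univ
    · have : {x : V → ℝ | w ∉ σ → x w = 0} = {x : V → ℝ | x w = 0} := by ext x; simp [hw]
      rw [this]; exact isClosed_eq (continuous_apply w) continuous_const

/-- Gluing continuity over two relatively closed pieces. -/
lemma glueContOn {α β : Type*} [TopologicalSpace α] [TopologicalSpace β] {f : α → β}
    {A B W : Set α} (hA : IsClosed A) (hB : IsClosed B) (hW : W ⊆ A ∪ B)
    (hfA : ContinuousOn f (W ∩ A)) (hfB : ContinuousOn f (W ∩ B)) :
    ContinuousOn f W := by
  intro x hx
  have hx' : ContinuousWithinAt f ((W ∩ A) ∪ (W ∩ B)) x := by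
    apply ContinuousWithinAt.union
    · by_cases hxA : x ∈ A
      · exact hfA x ⟨hx, hxA⟩
      · exact continuousWithinAt_of_notMem_closure fun hc =>
          hxA (hA.closure_subset ((closure_mono Set.inter_subset_right) hc))
    · by_cases hxB : x ∈ B
      · exact hfB x ⟨hx, hxB⟩
      · exact continuousWithinAt_of_notMem_closure fun hc =>
          hxB (hB.closure_subset ((closure_mono Set.inter_subset_right) hc))
  refine hx'.mono ?_
  intro y hy
  rcases hW hy with h | h
  exacts [Or.inl ⟨hy, h⟩, Or.inr ⟨hy, h⟩]

end
end StarProof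

set_option linter.unusedSectionVars false

namespace StarProof

variable {V : Type} [Fintype V] [DecidableEq V]

noncomputable section

variable (K : Set (Finset V)) (v : V)

/-- Realization of the link. -/
def Lset : Set (V → ℝ) := realization (link K v)

/-- Realization of the closed star. -/
def Sset : Set (V → ℝ) := realization {σ : Finset V | insert v σ ∈ K}

/-- Realization of the complex minus the open star. -/
def Bset : Set (V → ℝ) := realization {σ ∈ K | v ∉ σ}

/-- The vertex `v` as a point of the realization. -/
def dv : V → ℝ := fun w => if w = v then 1 else 0

/-- Renormalized projection away from `v`. -/
def yf : (V → ℝ) → (V → ℝ) := fun x w => if w = v then 0 else x w / (1 - x v)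

variable {K v}

lemma Lset_subset_B (hdown : ∀ σ ∈ K, ∀ τ ⊆ σ, τ ∈ K) : Lset K v ⊆ Bset K v := by
  refine real_mono fun σ hσ => ⟨?_, hσ.1⟩
  exact hdown _ hσ.2 _ (Finset.subset_insert v σ)

lemma Lset_subset_S : Lset K v ⊆ Sset K v := real_mono fun σ hσ => hσ.2

lemma BS_inter : Bset K v ∩ Sset K v ⊆ Lset K v := by
  rintro x ⟨hB, hS⟩
  exact ⟨hB.1, hB.2.1, hB.2.2.2, hS.2.2⟩

lemma Sset_subset (hdown : ∀ σ ∈ K, ∀ τ ⊆ σ, τ ∈ K) : Sset K v ⊆ realization K :=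
  real_mono fun σ hσ => hdown _ hσ _ (Finset.subset_insert v σ)

lemma Bset_subset : Bset K v ⊆ realization K := real_mono fun _ hσ => hσ.1

lemma cover (hdown : ∀ σ ∈ K, ∀ τ ⊆ σ, τ ∈ K) :
    realization K = Bset K v ∪ Sset K v := by
  apply Set.Subset.antisymm
  · intro x hx
    by_cases hvx : v ∈ spt x
    · right
      refine ⟨hx.1, hx.2.1, ?_⟩
      show insert v (spt x) ∈ K
      rw [Finset.insert_eq_self.2 hvx]
      exact hx.2.2
    · left
      exact ⟨hx.1, hx.2.1, hx.2.2, hvx⟩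
  · exact Set.union_subset Bset_subset (Sset_subset hdown)

lemma L_apply_v {x : V → ℝ} (hx : x ∈ Lset K v) : x v = 0 := by
  have h2 : v ∉ spt x := hx.2.2.1
  rw [mem_spt] at h2
  push_neg at h2
  exact h2
    
lemma isClosed_B (hdown : ∀ σ ∈ K, ∀ τ ⊆ σ, τ ∈ K) : IsClosed (Bset K v) := by
  refine isClosed_real _ fun σ hσ τ hτ => ⟨hdown _ hσ.1 _ hτ, fun hv => hσ.2 (hτ hv)⟩

lemma isClosed_S (hdown : ∀ σ ∈ K, ∀ τ ⊆ σ, τ ∈ K) : IsClosed (Sset K v) := by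
  refine isClosed_real _ fun σ hσ τ hτ => ?_
  exact hdown _ hσ _ (Finset.insert_subset_insert v hτ)

lemma spt_dv : spt (dv (V := V) v) = {v} := by
  ext w
  simp only [mem_spt, dv, Finset.mem_singleton]
  split <;> simp_all

lemma dv_mem_S (hv : {v} ∈ K) : dv (V := V) v ∈ Sset K v := by
  refine ⟨fun w => ?_, ?_, ?_⟩
  · unfold dv; split <;> norm_num
  · unfold dv
    rw [Finset.sum_ite_eq' Finset.univ v (fun _ => (1 : ℝ))]
    simp
  · show insert v (spt (dv (V := V) v)) ∈ K
    rw [spt_dv, Finset.insert_eq_self.2 (Finset.mem_singleton_self v)]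
    exact hv

lemma eq_dv_of {x : V → ℝ} (hx : x ∈ Sset K v) (h1 : x v = 1) : x = dv v := by
  have hsum := real_sum hx
  have hrest : ∑ w ∈ Finset.univ.erase v, x w = 0 := by
    have := Finset.add_sum_erase Finset.univ x (Finset.mem_univ v)
    linarith
  funext w
  by_cases hw : w = v
  · rw [hw, h1]; simp [dv]
  · have hz : x w = 0 := by
      have := Finset.sum_eq_zero_iff_of_nonneg
        (fun i _ => real_nonneg hx i) |>.1 hrest w (by simp [hw])
      exact this
    rw [hz]; simp [dv, hw]

lemma spt_yf {x : V → ℝ} (h1 : x v < 1) : spt (yf v x) = (spt x).erase v := by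
  have hne : 1 - x v ≠ 0 := by linarith
  ext w
  simp only [mem_spt, yf, Finset.mem_erase]
  by_cases hw : w = v
  · simp [hw]
  · simp only [hw, if_false, ne_eq, div_eq_zero_iff, not_or]
    tauto

lemma yf_mem_L {x : V → ℝ} (hx : x ∈ Sset K v) (hdown : ∀ σ ∈ K, ∀ τ ⊆ σ, τ ∈ K)
    (h1 : x v < 1) : yf v x ∈ Lset K v := by
  have hne : (0:ℝ) < 1 - x v := by linarith
  refine ⟨fun w => ?_, ?_, ?_⟩
  · unfold yf
    split
    · exact le_refl 0
    · exact div_nonneg (real_nonneg hx w) hne.le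
  · have he : ∀ w, yf v x w = (if w = v then 0 else x w) / (1 - x v) := by
      intro w; unfold yf; split <;> simp
    rw [Finset.sum_congr rfl fun w _ => he w, ← Finset.sum_div]
    have hsum2 : ∑ w, (if w = v then 0 else x w) = 1 - x v := by
      have h3 : ∀ w, (if w = v then 0 else x w) = x w - (if w = v then x w else 0) := by
        intro w; split <;> simp
      rw [Finset.sum_congr rfl fun w _ => h3 w, Finset.sum_sub_distrib, real_sum hx,
        Finset.sum_ite_eq' Finset.univ v x]
      simp
    rw [hsum2]
    field_simp
  · show spt (yf v x) ∈ link K v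
    rw [spt_yf h1]
    refine ⟨Finset.notMem_erase v _, ?_⟩
    exact hdown _ hx.2.2 _ (Finset.insert_subset_insert v (Finset.erase_subset v _))

/-- The basic convex decomposition of a point of the closed star. -/
lemma comb_self {x : V → ℝ} (h1 : x v ≠ 1) :
    x v • dv v + (1 - x v) • yf v x = x := by
  funext w
  simp only [Pi.add_apply, Pi.smul_apply, smul_eq_mul, dv, yf]
  by_cases hw : w = v
  · subst hw; simp
  · have hne : 1 - x v ≠ 0 := by intro h; exact h1 (by linarith)
    simp only [hw, if_false, mul_zero, zero_add]
    field_simp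

lemma comb_mem_S (hdown : ∀ σ ∈ K, ∀ τ ⊆ σ, τ ∈ K) (hv : {v} ∈ K)
    {c : ℝ} (hc0 : 0 ≤ c) (hc1 : c ≤ 1) {z : V → ℝ} (hz : z ∈ Lset K v) :
    c • dv v + (1 - c) • z ∈ Sset K v := by
  have hzS := Lset_subset_S hz
  refine ⟨fun w => ?_, ?_, ?_⟩
  · simp only [Pi.add_apply, Pi.smul_apply, smul_eq_mul]
    have := real_nonneg hzS w
    have hdvw : (0:ℝ) ≤ dv v w := by unfold dv; split <;> norm_num
    nlinarith
  · simp only [Pi.add_apply, Pi.smul_apply, smul_eq_mul]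
    rw [Finset.sum_add_distrib, ← Finset.mul_sum, ← Finset.mul_sum,
      real_sum hzS, real_sum (dv_mem_S hv)]
    ring
  · show spt _ ∈ {σ : Finset V | insert v σ ∈ K}
    have hsub : spt (c • dv v + (1 - c) • z) ⊆ insert v (spt z) := by
      intro w hw
      rw [mem_spt] at hw
      by_cases hwv : w = v
      · subst hwv; exact Finset.mem_insert_self _ _
      · refine Finset.mem_insert_of_mem (mem_spt.2 fun h0 => hw ?_)
        simp only [Pi.add_apply, Pi.smul_apply, smul_eq_mul, dv, h0, hwv, if_false]
        ring
    refine hdown _ hz.2.2.2 _ ?_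
    calc insert v (spt (c • dv v + (1 - c) • z)) ⊆ insert v (insert v (spt z)) :=
          Finset.insert_subset_insert v hsub
      _ = insert v (spt z) := Finset.insert_idem v _

lemma L_nonneg {z : V → ℝ} (hz : z ∈ Lset K v) (w : V) : 0 ≤ z w := real_nonneg hz w
lemma L_le_one {z : V → ℝ} (hz : z ∈ Lset K v) (w : V) : z w ≤ 1 := real_le_one hz w

end
end StarProof

namespace StarProof

variable {V : Type} [Fintype V] [DecidableEq V]

noncomputable section

variable (K : Set (Finset V)) (v : V)
variable (H : C(unitInterval × ↥(Lset K v), ↥(Lset K v)))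

/-- Unbundled extension of the contracting homotopy `H` of the link. -/
def Hx : ℝ × (V → ℝ) → (V → ℝ) := fun q =>
  if h : q.2 ∈ Lset K v then
    (H (Set.projIcc (0:ℝ) 1 zero_le_one q.1, ⟨q.2, h⟩) : V → ℝ)
  else q.2

variable {K v}

lemma Hx_mem {q : ℝ × (V → ℝ)} (h : q.2 ∈ Lset K v) : Hx K v H q ∈ Lset K v := by
  rw [Hx, dif_pos h]
  exact (H (Set.projIcc (0:ℝ) 1 zero_le_one q.1, ⟨q.2, h⟩)).2

lemma Hx_zero (hH0 : ∀ y, H (0, y) = y) {y : V → ℝ} (hy : y ∈ Lset K v) :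
    Hx K v H (0, y) = y := by
  rw [Hx, dif_pos hy]
  have h0 : Set.projIcc (0:ℝ) 1 zero_le_one 0 = 0 := by
    apply Subtype.ext
    simp [Set.projIcc]
  rw [h0, hH0 ⟨y, hy⟩]

lemma Hx_one {pp : V → ℝ} (hH1 : ∀ y, (H (1, y) : V → ℝ) = pp)
    {y : V → ℝ} (hy : y ∈ Lset K v) {s : ℝ} (hs : 1 ≤ s) :
    Hx K v H (s, y) = pp := by
  rw [Hx, dif_pos hy]
  have h1 : Set.projIcc (0:ℝ) 1 zero_le_one s = 1 := by
    apply Subtype.ext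
    simp [Set.projIcc, hs, min_eq_left hs]
  rw [h1]
  exact hH1 _

lemma Hx_contOn : ContinuousOn (Hx K v H) (Set.univ ×ˢ Lset K v) := by
  rw [continuousOn_iff_continuous_restrict]
  have he : ∀ q : ↥((Set.univ : Set ℝ) ×ˢ Lset K v),
      (Set.univ ×ˢ Lset K v).restrict (Hx K v H) q =
      (H (Set.projIcc (0:ℝ) 1 zero_le_one q.1.1, ⟨q.1.2, q.2.2⟩) : V → ℝ) := by
    intro q
    show Hx K v H q.1 = _
    unfold Hx
    exact dif_pos (Set.mem_prod.1 q.2).2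
  refine Continuous.congr ?_ fun q => (he q).symm
  refine continuous_subtype_val.comp (H.continuous.comp ?_)
  refine Continuous.prodMk ?_ ?_
  · exact continuous_projIcc.comp (continuous_fst.comp continuous_subtype_val)
  · exact (continuous_snd.comp continuous_subtype_val).subtype_mk _

variable (K v)

/-- The time-`q.2` image of `q.1` under the star-collapsing homotopy. Here
`q.1` should be a point of the closed star, and `pp` the contraction point. -/
def Zf (pp : V → ℝ) : (V → ℝ) × ℝ → (V → ℝ) := fun q =>
  if 1 - q.1 v ≤ q.2 * q.1 v then pp
  else Hx K v H (q.2 * q.1 v / (1 - q.1 v), yf v q.1)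

/-- The star-collapsing homotopy, on the closed star. -/
def Gr (pp : V → ℝ) : (V → ℝ) × ℝ → (V → ℝ) := fun q =>
  (q.1 v * (1 - q.2)) • dv v + (1 - q.1 v * (1 - q.2)) • Zf K v H pp q

variable {K v}
variable {pp : V → ℝ}

lemma Zf_mem (hpp : pp ∈ Lset K v) (hdown : ∀ σ ∈ K, ∀ τ ⊆ σ, τ ∈ K)
    {q : (V → ℝ) × ℝ} (hq1 : q.1 ∈ Sset K v) (hq2 : 0 ≤ q.2) :
    Zf K v H pp q ∈ Lset K v := by
  rw [Zf]
  split
  · exact hpp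
  · rename_i hc
    push_neg at hc
    have ht1 : q.1 v < 1 := by nlinarith [real_nonneg hq1 v]
    exact Hx_mem H (yf_mem_L hq1 hdown ht1)

lemma Gr_mem_S (hpp : pp ∈ Lset K v) (hdown : ∀ σ ∈ K, ∀ τ ⊆ σ, τ ∈ K) (hv : {v} ∈ K)
    {q : (V → ℝ) × ℝ} (hq1 : q.1 ∈ Sset K v) (hq2 : q.2 ∈ Set.Icc (0:ℝ) 1) :
    Gr K v H pp q ∈ Sset K v := by
  refine comb_mem_S hdown hv ?_ ?_ (Zf_mem H hpp hdown hq1 hq2.1)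
  · exact mul_nonneg (real_nonneg hq1 v) (by linarith [hq2.2])
  · have h1 := real_le_one hq1 v
    have h0 := real_nonneg hq1 v
    nlinarith [hq2.1, hq2.2]

lemma Gr_zero (hH0 : ∀ y, H (0, y) = y) (hdown : ∀ σ ∈ K, ∀ τ ⊆ σ, τ ∈ K)
    {x : V → ℝ} (hx : x ∈ Sset K v) :
    Gr K v H pp (x, 0) = x := by
  by_cases h1 : x v = 1
  · have hx' := eq_dv_of hx h1
    rw [Gr, Zf]
    simp only [h1]
    rw [if_pos (by norm_num)]
    rw [hx']
    funext w
    simp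
  · have hlt : x v < 1 := lt_of_le_of_ne (real_le_one hx v) h1
    rw [Gr, Zf]
    simp only
    rw [if_neg (by simp only [zero_mul]; linarith)]
    have hz : (0:ℝ) * x v / (1 - x v) = 0 := by rw [zero_mul, zero_div]
    rw [hz, Hx_zero H hH0 (yf_mem_L hx hdown hlt)]
    simpa using comb_self h1

lemma Gr_one (x : V → ℝ) : Gr K v H pp (x, 1) = Zf K v H pp (x, 1) := by
  rw [Gr]
  funext w
  simp

lemma Gr_on_L (hH0 : ∀ y, H (0, y) = y) {x : V → ℝ} (hx : x ∈ Lset K v)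
    (s : ℝ) : Gr K v H pp (x, s) = x := by
  have hxv : x v = 0 := L_apply_v hx
  have hyx : yf v x = x := by
    funext w
    rw [yf]
    split
    · rename_i hw; rw [hw, hxv]
    · rw [hxv]; simp
  rw [Gr, Zf]
  simp only [hxv, mul_zero, zero_mul, sub_zero, zero_div, div_one, zero_smul, zero_add, one_smul]
  rw [if_neg (by norm_num), hyx, Hx_zero H hH0 hx]

end
end StarProof

namespace StarProof

open Topology Filter

variable {V : Type} [Fintype V] [DecidableEq V]

noncomputable section

variable {K : Set (Finset V)} {v : V}
variable (H : C(unitInterval × ↥(Lset K v), ↥(Lset K v)))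
variable {pp : V → ℝ}

lemma Gr_contOn (hpp : pp ∈ Lset K v) (hH1 : ∀ y, (H (1, y) : V → ℝ) = pp)
    (hdown : ∀ σ ∈ K, ∀ τ ⊆ σ, τ ∈ K) :
    ContinuousOn (Gr K v H pp) (Sset K v ×ˢ Set.Icc (0:ℝ) 1) := by
  set A2 := Sset K v ×ˢ Set.Icc (0:ℝ) 1 with hA2def
  set U : Set ((V → ℝ) × ℝ) := {r | r.1 v < 1} with hUdef
  -- Main continuity away from the apex.
  have hmain : ContinuousOn (Gr K v H pp) (A2 ∩ U) := by
    have hZ : ContinuousOn (Zf K v H pp) (A2 ∩ U) := by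
      refine glueContOn (A := {r : (V → ℝ) × ℝ | 1 - r.1 v ≤ r.2 * r.1 v})
        (B := {r : (V → ℝ) × ℝ | r.2 * r.1 v ≤ 1 - r.1 v})
        (isClosed_le (by fun_prop) (by fun_prop))
        (isClosed_le (by fun_prop) (by fun_prop))
        (fun r _ => by rcases le_total (1 - r.1 v) (r.2 * r.1 v) with h | h
                       exacts [Or.inl h, Or.inr h]) ?_ ?_
      · exact continuousOn_const.congr fun r hr => by
          have h' : 1 - r.1 v ≤ r.2 * r.1 v := hr.2
          rw [Zf, if_pos h']
      · have hcomp : ContinuousOn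
            (fun r : (V → ℝ) × ℝ => Hx K v H (r.2 * r.1 v / (1 - r.1 v), yf v r.1))
            ((A2 ∩ U) ∩ {r : (V → ℝ) × ℝ | r.2 * r.1 v ≤ 1 - r.1 v}) := by
          have hne : ∀ r : (V → ℝ) × ℝ,
              r ∈ (A2 ∩ U) ∩ {r : (V → ℝ) × ℝ | r.2 * r.1 v ≤ 1 - r.1 v} →
              (1 : ℝ) - r.1 v ≠ 0 := by
            intro r hr
            have : r.1 v < 1 := hr.1.2
            intro h; linarith
          have hinner : ContinuousOn
              (fun r : (V → ℝ) × ℝ => (r.2 * r.1 v / (1 - r.1 v), yf v r.1))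
              ((A2 ∩ U) ∩ {r : (V → ℝ) × ℝ | r.2 * r.1 v ≤ 1 - r.1 v}) := by
            refine ContinuousOn.prodMk ?_ ?_
            · exact ContinuousOn.div (by fun_prop) (by fun_prop) hne
            · refine continuousOn_pi.2 fun w => ?_
              by_cases hw : w = v
              · simpa [yf, hw] using continuousOn_const
              · simp only [yf, hw, if_false]
                exact ContinuousOn.div (by fun_prop) (by fun_prop) hne
          refine (Hx_contOn H).comp hinner ?_
          intro r hr
          refine ⟨Set.mem_univ _, ?_⟩
          exact yf_mem_L hr.1.1.1 hdown hr.1.2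
        refine hcomp.congr fun r hr => ?_
        by_cases hcond : 1 - r.1 v ≤ r.2 * r.1 v
        · have heq2 : r.2 * r.1 v = 1 - r.1 v := le_antisymm hr.2 hcond
          have hne : (1 : ℝ) - r.1 v ≠ 0 := by
            have : r.1 v < 1 := hr.1.2
            intro h; linarith
          rw [Zf, if_pos hcond]
          beta_reduce
          rw [heq2, div_self hne,
            Hx_one H hH1 (yf_mem_L hr.1.1.1 hdown hr.1.2) le_rfl]
        · rw [Zf, if_neg hcond]
    have h1 : ContinuousOn (fun r : (V → ℝ) × ℝ => (r.1 v * (1 - r.2)) • dv v)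
        (A2 ∩ U) := ContinuousOn.smul (f := fun r : (V → ℝ) × ℝ => r.1 v * (1 - r.2)) (by fun_prop) continuousOn_const
    have h2 : ContinuousOn (fun r : (V → ℝ) × ℝ =>
        (1 - r.1 v * (1 - r.2)) • Zf K v H pp r) (A2 ∩ U) :=
      ContinuousOn.smul (f := fun r : (V → ℝ) × ℝ => 1 - r.1 v * (1 - r.2)) (by fun_prop) hZ
    exact h1.add h2
  intro q hq
  have hqS : q.1 ∈ Sset K v := hq.1
  have hqI : q.2 ∈ Set.Icc (0:ℝ) 1 := hq.2
  have htle := real_le_one hqS v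
  rcases lt_or_eq_of_le htle with hlt | heq
  · -- away from apex
    have hU : U ∈ 𝓝 q :=
      (isOpen_lt ((continuous_apply v).comp continuous_fst) continuous_const).mem_nhds hlt
    rw [← continuousWithinAt_inter hU]
    exact hmain q ⟨hq, hlt⟩
  · rcases eq_or_lt_of_le hqI.1 with hs0 | hspos
    · -- the apex at time 0 : direct estimate
      have h2 : q.2 = 0 := hs0.symm
      have hGrq : Gr K v H pp q = dv v := by
        rw [Gr, Zf]
        simp only [heq, h2]
        rw [if_pos (by norm_num)]
        funext w
        simp
      unfold ContinuousWithinAt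
      rw [hGrq, tendsto_pi_nhds]
      intro w
      have hcoef : Tendsto (fun r : (V → ℝ) × ℝ => 1 - r.1 v * (1 - r.2))
          (𝓝[A2] q) (𝓝 0) := by
        have hcont : Continuous (fun r : (V → ℝ) × ℝ => 1 - r.1 v * (1 - r.2)) := by
          fun_prop
        have := (hcont.tendsto q).mono_left (nhdsWithin_le_nhds (s := A2))
        have hval : 1 - q.1 v * (1 - q.2) = 0 := by rw [heq, h2]; ring
        rwa [hval] at this
      have hbound : ∀ᶠ r in 𝓝[A2] q,
          ‖Gr K v H pp r w - dv v w‖ ≤ 1 - r.1 v * (1 - r.2) := by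
        filter_upwards [self_mem_nhdsWithin] with r hr
        have hrS : r.1 ∈ Sset K v := hr.1
        have hrI : r.2 ∈ Set.Icc (0:ℝ) 1 := hr.2
        have hzL := Zf_mem H hpp hdown hrS hrI.1
        have hz0 := L_nonneg hzL w
        have hz1 := L_le_one hzL w
        have hd : dv v w = 0 ∨ dv v w = 1 := by
          unfold dv; split; exacts [Or.inr rfl, Or.inl rfl]
        have hGrw : Gr K v H pp r w =
            r.1 v * (1 - r.2) * dv v w + (1 - r.1 v * (1 - r.2)) * Zf K v H pp r w := by
          rw [Gr]; simp [Pi.add_apply, Pi.smul_apply, smul_eq_mul]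
        have hceq : Gr K v H pp r w - dv v w =
            (1 - r.1 v * (1 - r.2)) * (Zf K v H pp r w - dv v w) := by
          rw [hGrw]; ring
        have hc1 : r.1 v * (1 - r.2) ≤ 1 := by
          nlinarith [real_nonneg hrS v, real_le_one hrS v, hrI.1, hrI.2]
        have habs : |Zf K v H pp r w - dv v w| ≤ 1 := by
          rcases hd with h | h <;> rw [h] <;>
            exact abs_le.2 ⟨by linarith, by linarith⟩
        rw [hceq, Real.norm_eq_abs, abs_mul, abs_of_nonneg (by linarith : (0:ℝ) ≤ 1 - r.1 v * (1 - r.2))]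
        calc (1 - r.1 v * (1 - r.2)) * |Zf K v H pp r w - dv v w|
            ≤ (1 - r.1 v * (1 - r.2)) * 1 :=
              mul_le_mul_of_nonneg_left habs (by linarith)
          _ = 1 - r.1 v * (1 - r.2) := mul_one _
      have hz := squeeze_zero_norm' hbound hcoef
      have hfin := hz.add (tendsto_const_nhds (x := dv v w) (f := 𝓝[A2] q))
      simpa using hfin
    · -- the apex at positive time : locally the explicit cone formula
      have hU' : IsOpen {r : (V → ℝ) × ℝ | 1 - r.1 v < r.2 * r.1 v} :=
        isOpen_lt (by fun_prop) (by fun_prop)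
      have hqU' : q ∈ {r : (V → ℝ) × ℝ | 1 - r.1 v < r.2 * r.1 v} := by
        simp only [Set.mem_setOf_eq, heq]
        nlinarith
      have hfA : Continuous (fun r : (V → ℝ) × ℝ =>
          (r.1 v * (1 - r.2)) • dv v + (1 - r.1 v * (1 - r.2)) • pp) := by
        refine Continuous.add ?_ ?_
        · exact Continuous.smul (f := fun r : (V → ℝ) × ℝ => r.1 v * (1 - r.2)) (by fun_prop) continuous_const
        · exact Continuous.smul (f := fun r : (V → ℝ) × ℝ => 1 - r.1 v * (1 - r.2)) (by fun_prop) continuous_const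
      have hev : (fun r : (V → ℝ) × ℝ =>
          (r.1 v * (1 - r.2)) • dv v + (1 - r.1 v * (1 - r.2)) • pp) =ᶠ[𝓝 q]
          Gr K v H pp := by
        filter_upwards [hU'.mem_nhds hqU'] with r hr
        rw [Gr, Zf, if_pos (le_of_lt hr)]
      exact ((hfA.continuousAt).congr hev).continuousWithinAt

end
end StarProof

namespace StarProof

open Topology Filter

variable {V : Type} [Fintype V] [DecidableEq V]

noncomputable section

variable (K : Set (Finset V)) (v : V)
variable (H : C(unitInterval × ↥(Lset K v), ↥(Lset K v))) (pp : V → ℝ)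

/-- The global star-collapsing homotopy on the realization of `K`. -/
def Gfull : (V → ℝ) × ℝ → (V → ℝ) := fun q =>
  if q.1 ∈ Sset K v then Gr K v H pp q else q.1

variable {K v pp}

lemma Gfull_mem (hpp : pp ∈ Lset K v) (hdown : ∀ σ ∈ K, ∀ τ ⊆ σ, τ ∈ K) (hv : {v} ∈ K)
    {q : (V → ℝ) × ℝ} (hq1 : q.1 ∈ realization K) (hq2 : q.2 ∈ Set.Icc (0:ℝ) 1) :
    Gfull K v H pp q ∈ realization K := by
  rw [Gfull]
  split
  · exact Sset_subset hdown (Gr_mem_S H hpp hdown hv (by assumption) hq2)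
  · exact hq1

lemma Gfull_zero (hH0 : ∀ y, H (0, y) = y) (hdown : ∀ σ ∈ K, ∀ τ ⊆ σ, τ ∈ K)
    (x : V → ℝ) : Gfull K v H pp (x, 0) = x := by
  rw [Gfull]
  split
  · exact Gr_zero H hH0 hdown (by assumption)
  · rfl

lemma Gfull_one_mem (hpp : pp ∈ Lset K v) (hdown : ∀ σ ∈ K, ∀ τ ⊆ σ, τ ∈ K)
    {x : V → ℝ} (hx : x ∈ realization K) :
    Gfull K v H pp (x, 1) ∈ Bset K v := by
  rw [Gfull]
  split
  · rw [Gr_one]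
    exact Lset_subset_B hdown (Zf_mem H hpp hdown (by assumption) (by norm_num))
  · rename_i hS
    have : x ∈ Bset K v ∪ Sset K v := by rw [← cover hdown]; exact hx
    rcases this with h | h
    · exact h
    · exact absurd h hS

lemma Gfull_fix_B (hH0 : ∀ y, H (0, y) = y) {x : V → ℝ} (hx : x ∈ Bset K v)
    (s : ℝ) : Gfull K v H pp (x, s) = x := by
  rw [Gfull]
  split
  · exact Gr_on_L H hH0 (BS_inter ⟨hx, by assumption⟩) s
  · rfl

lemma Gfull_contOn (hpp : pp ∈ Lset K v) (hH0 : ∀ y, H (0, y) = y)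
    (hH1 : ∀ y, (H (1, y) : V → ℝ) = pp) (hdown : ∀ σ ∈ K, ∀ τ ⊆ σ, τ ∈ K) :
    ContinuousOn (Gfull K v H pp) (realization K ×ˢ Set.Icc (0:ℝ) 1) := by
  refine glueContOn (A := Bset K v ×ˢ (Set.univ : Set ℝ))
    (B := Sset K v ×ˢ (Set.univ : Set ℝ))
    ((isClosed_B hdown).prod isClosed_univ)
    ((isClosed_S hdown).prod isClosed_univ) ?_ ?_ ?_
  · intro q hq
    have : q.1 ∈ Bset K v ∪ Sset K v := by rw [← cover hdown]; exact hq.1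
    rcases this with h | h
    · exact Or.inl ⟨h, Set.mem_univ _⟩
    · exact Or.inr ⟨h, Set.mem_univ _⟩
  · refine continuous_fst.continuousOn.congr fun q hq => ?_
    have : Gfull K v H pp (q.1, q.2) = q.1 := Gfull_fix_B H hH0 hq.2.1 q.2
    simpa using this
  · refine ((Gr_contOn H hpp hH1 hdown).mono ?_).congr fun q hq => ?_
    · intro q hq
      exact ⟨hq.2.1, hq.1.2⟩
    · rw [Gfull, if_pos hq.2.1]

end
end StarProof


open StarProof in
/-- If the link of a vertex `v` of a simplicial complex `K` is contractible,
then the geometric realization of `K` is homotopy equivalent to that of the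
subcomplex `K \ St v` obtained by removing the (open) star of `v`. -/
theorem homotopyEquiv_of_contractible_link {V : Type} [Fintype V] [DecidableEq V]
    (K : Set (Finset V))
    (hdown : ∀ σ ∈ K, ∀ τ ⊆ σ, τ ∈ K)
    (v : V) (hv : {v} ∈ K)
    (hlink : ContractibleSpace ↥(realization (link K v))) :
    Nonempty (ContinuousMap.HomotopyEquiv
      ↥(realization K) ↥(realization {σ ∈ K | v ∉ σ})) := by
  classical
  obtain ⟨p, hpH⟩ := id_nullhomotopic ↥(realization (link K v))
  obtain ⟨Hh⟩ := hpH
  let H : C(unitInterval × ↥(Lset K v), ↥(Lset K v)) := Hh.toContinuousMap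
  have hH0 : ∀ y, H (0, y) = y := fun y => Hh.apply_zero y
  have hH1 : ∀ y, (H (1, y) : V → ℝ) = (p : V → ℝ) := fun y => by
    have := Hh.apply_one y
    exact congrArg Subtype.val this
  have hpp : (p : V → ℝ) ∈ Lset K v := p.2
  have hBr : realization {σ ∈ K | v ∉ σ} = Bset K v := rfl
  -- the inclusion
  let ι : C(↥(realization {σ ∈ K | v ∉ σ}), ↥(realization K)) :=
    ⟨fun y => ⟨y.1, Bset_subset y.2⟩, continuous_subtype_val.subtype_mk _⟩
  -- the collapse
  have hGc := Gfull_contOn H hpp hH0 hH1 hdown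
  let φ : C(↥(realization K), ↥(realization {σ ∈ K | v ∉ σ})) :=
    ⟨fun x => ⟨Gfull K v H (p : V → ℝ) (x.1, 1),
        Gfull_one_mem H hpp hdown x.2⟩, by
      refine Continuous.subtype_mk ?_ _
      refine hGc.comp_continuous ?_ ?_
      · exact continuous_subtype_val.prodMk continuous_const
      · intro x; exact ⟨x.2, by norm_num⟩⟩
  -- the homotopy from the identity to ι ∘ φ
  let Gh : ContinuousMap.Homotopy (ContinuousMap.id ↥(realization K)) (ι.comp φ) :=
    { toContinuousMap := ⟨fun su => ⟨Gfull K v H (p : V → ℝ) (su.2.1, su.1.1),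
        Gfull_mem H hpp hdown hv su.2.2 su.1.2⟩, by
          refine Continuous.subtype_mk ?_ _
          refine hGc.comp_continuous ?_ ?_
          · exact (continuous_subtype_val.comp continuous_snd).prodMk
              (continuous_subtype_val.comp continuous_fst)
          · intro su; exact ⟨su.2.2, su.1.2⟩⟩
      map_zero_left := fun x => Subtype.ext (Gfull_zero H hH0 hdown x.1)
      map_one_left := fun x => Subtype.ext rfl }
  refine ⟨⟨φ, ι, ⟨Gh.symm⟩, ?_⟩⟩
  have hri : φ.comp ι = ContinuousMap.id _ := by
    refine ContinuousMap.ext fun y => Subtype.ext ?_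
    exact Gfull_fix_B H hH0 y.2 1
  rw [hri]
end

section
/- Let K_{B_n} be the simplicial complex whose vertices are the nonempty subsets I of {±1, ..., ±n} satisfying (i ∈ I ⟹ -i ∉ I), and whose faces are collections of such subsets that are totally ordered by inclusion (nested chains). Then K_{B_n} is a simplicial sphere of dimension n-1; in particular, every maximal face has exactly n elements. -/
open scoped Classical

/-- An admissible subset `I` of `[±n] = {±1, …, ±n}` (nonempty, with `i ∈ I → -i ∉ I`),
encoded as a function `Fin n → Option Bool`: `some true` at `i` means `i+1 ∈ I`,
`some false` means `-(i+1) ∈ I`, and `none` means neither. -/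
def Adm (n : ℕ) : Type := {f : Fin n → Option Bool // f ≠ fun _ => none}

/-- Admissible subsets are ordered by inclusion. -/
instance (n : ℕ) : PartialOrder (Adm n) where
  le f g := ∀ i b, f.1 i = some b → g.1 i = some b
  le_refl f i b h := h
  le_trans f g h hfg hgh i b hi := hgh i b (hfg i b hi)
  le_antisymm := by
    rintro ⟨f, hf⟩ ⟨g, hg⟩ hfg hgf
    refine Subtype.ext (funext fun i => ?_)
    show f i = g i
    rcases hfi : f i with _ | b
    · rcases hgi : g i with _ | b
      · rfl
      · exact absurd (hgf i b hgi) (by show ¬ f i = some b; rw [hfi]; simp)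
    · exact (hfg i b hfi).symm

noncomputable instance (n : ℕ) : Fintype (Adm n) := by
  unfold Adm; exact Subtype.fintype _

/-- The number of elements of the admissible set (the cardinality `|I|`). -/
noncomputable def Adm.size {n : ℕ} (f : Adm n) : ℕ :=
  (Finset.univ.filter fun i => f.1 i ≠ none).card

/-- `I^± = (I ∪ -I) ∩ [n]`, as a subset of `Fin n`. -/
noncomputable def Adm.supp {n : ℕ} (f : Adm n) : Finset (Fin n) :=
  Finset.univ.filter fun i => f.1 i ≠ none

/-- The faces of the order complex on the vertices satisfying `P`:
finite chains (under inclusion) of admissible sets satisfying `P`. -/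
def chainComplex {n : ℕ} (P : Adm n → Prop) : Set (Finset (Adm n)) :=
  {σ | (∀ I ∈ σ, P I) ∧ IsChain (· ≤ ·) (σ : Set (Adm n))}

/-- The base point of the `d`-sphere. -/
noncomputable def spherePt (d : ℕ) :
    Metric.sphere (0 : EuclideanSpace ℝ (Fin (d + 1))) 1 :=
  ⟨EuclideanSpace.single 0 1, by simp⟩

def IsWedgeBase (r d : ℕ)
    (x : Unit ⊕ (Fin r × Metric.sphere (0 : EuclideanSpace ℝ (Fin (d + 1))) 1)) : Prop :=
  x = Sum.inl () ∨ ∃ i, x = Sum.inr (i, spherePt d)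

noncomputable def wedgeSetoid (r d : ℕ) :
    Setoid (Unit ⊕ (Fin r × Metric.sphere (0 : EuclideanSpace ℝ (Fin (d + 1))) 1)) where
  r x y := x = y ∨ (IsWedgeBase r d x ∧ IsWedgeBase r d y)
  iseqv := by
    constructor
    · intro x; exact Or.inl rfl
    · rintro x y (rfl | ⟨hx, hy⟩); exacts [Or.inl rfl, Or.inr ⟨hy, hx⟩]
    · rintro x y z (rfl | ⟨hx, hy⟩) (rfl | ⟨hy', hz⟩)
      · exact Or.inl rfl
      · exact Or.inr ⟨hy', hz⟩
      · exact Or.inr ⟨hx, hy⟩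
      · exact Or.inr ⟨hx, hz⟩

/-- The wedge of `r` copies of the `d`-sphere (a single point when `r = 0`). -/
noncomputable def WedgeOfSpheres (r d : ℕ) : Type := Quotient (wedgeSetoid r d)

noncomputable instance (r d : ℕ) : TopologicalSpace (WedgeOfSpheres r d) :=
  instTopologicalSpaceQuotient

namespace KBn
variable {n : ℕ}

lemma le_def {I J : Adm n} : I ≤ J ↔ ∀ i b, I.1 i = some b → J.1 i = some b := Iff.rfl

lemma supp_mono {I J : Adm n} (h : I ≤ J) : I.supp ⊆ J.supp := by
  intro i hi
  simp only [Adm.supp, Finset.mem_filter, Finset.mem_univ, true_and] at hi ⊢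
  rcases hIi : I.1 i with _ | b
  · exact absurd hIi hi
  · rw [h i b hIi]; simp

lemma size_eq_card_supp (I : Adm n) : I.size = I.supp.card := rfl

lemma size_mono {I J : Adm n} (h : I ≤ J) : I.size ≤ J.size :=
  Finset.card_le_card (supp_mono h)

lemma eq_of_le_of_size_le {I J : Adm n} (h : I ≤ J) (hs : J.size ≤ I.size) : I = J := by
  have hsupp : I.supp = J.supp := Finset.eq_of_subset_of_card_le (supp_mono h) hs
  refine Subtype.ext (funext fun i => ?_)
  rcases hIi : I.1 i with _ | b
  · have : i ∉ J.supp := by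
      rw [← hsupp]; simp [Adm.supp, hIi]
    simp only [Adm.supp, Finset.mem_filter, Finset.mem_univ, true_and, not_not] at this
    exact this.symm
  · exact (h i b hIi).symm

lemma one_le_size (I : Adm n) : 1 ≤ I.size := by
  rcases Finset.eq_empty_or_nonempty I.supp with h | h
  · exfalso
    apply I.2
    funext i
    by_contra hi
    have : i ∈ I.supp := by simp [Adm.supp, hi]
    simp [h] at this
  · exact Finset.card_pos.2 h

lemma size_le (I : Adm n) : I.size ≤ n := by
  calc I.size ≤ (Finset.univ : Finset (Fin n)).card := Finset.card_le_card (Finset.subset_univ _)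
  _ = n := by simp

/-- Intermediate set between two nested "partial sign vectors". -/
lemma exists_between (f g : Fin n → Option Bool)
    (hle : ∀ i b, f i = some b → g i = some b) (k : ℕ)
    (hk1 : (Finset.univ.filter fun i => f i ≠ none).card ≤ k)
    (hk2 : k ≤ (Finset.univ.filter fun i => g i ≠ none).card) :
    ∃ h : Fin n → Option Bool,
      (∀ i b, f i = some b → h i = some b) ∧ (∀ i b, h i = some b → g i = some b) ∧
      (Finset.univ.filter fun i => h i ≠ none).card = k := by
  set A := (Finset.univ.filter fun i => f i ≠ none) with hA
  set B := (Finset.univ.filter fun i => g i ≠ none) with hB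
  have hAB : A ⊆ B := by
    intro i hi
    simp only [hA, hB, Finset.mem_filter, Finset.mem_univ, true_and] at hi ⊢
    rcases hfi : f i with _ | b
    · exact absurd hfi hi
    · rw [hle i b hfi]; simp
  obtain ⟨C, hAC, hCB, hC⟩ := Finset.exists_subsuperset_card_eq (n := A.card + (k - A.card)) hAB (by omega) (by omega)
  have hCcard : C.card = k := by rw [hC]; omega
  refine ⟨fun i => if i ∈ C then g i else none, ?_, ?_, ?_⟩
  · intro i b hfi
    have hiA : i ∈ A := by simp [hA, hfi]
    show (if i ∈ C then g i else none) = some b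
    rw [if_pos (hAC hiA)]
    exact hle i b hfi
  · intro i b hi
    replace hi : (if i ∈ C then g i else none) = some b := hi
    by_cases hiC : i ∈ C
    · rwa [if_pos hiC] at hi
    · rw [if_neg hiC] at hi; exact absurd hi (by simp)
  · rw [← hCcard]
    congr 1
    ext i
    simp only [Finset.mem_filter, Finset.mem_univ, true_and]
    by_cases hiC : i ∈ C
    · simp only [if_pos hiC, hiC, iff_true]
      have := hCB hiC
      simp only [hB, Finset.mem_filter, Finset.mem_univ, true_and] at this
      exact this
    · simp [hiC]

/-- A chain Finset has a least element. -/
lemma chain_exists_min {s : Finset (Adm n)} (hc : IsChain (· ≤ ·) (s : Set (Adm n)))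
    (hs : s.Nonempty) : ∃ m ∈ s, ∀ a ∈ s, m ≤ a := by
  obtain ⟨m, hm, hmin⟩ := s.exists_minimal hs
  refine ⟨m, hm, fun a ha => ?_⟩
  rcases eq_or_ne a m with rfl | hne
  · exact le_refl _
  · rcases hc ha hm hne with h | h
    · exact hmin ha h
    · exact h

lemma chain_exists_max {s : Finset (Adm n)} (hc : IsChain (· ≤ ·) (s : Set (Adm n)))
    (hs : s.Nonempty) : ∃ m ∈ s, ∀ a ∈ s, a ≤ m := by
  obtain ⟨m, hm, hmax⟩ := s.exists_maximal hs
  refine ⟨m, hm, fun a ha => ?_⟩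
  rcases eq_or_ne a m with rfl | hne
  · exact le_refl _
  · rcases hc ha hm hne with h | h
    · exact h
    · exact hmax ha h

theorem part1 (n : ℕ) (hn : 1 ≤ n) (σ : Finset (Adm n))
    (hσ : IsChain (· ≤ ·) (σ : Set (Adm n)))
    (hmax : ∀ τ : Finset (Adm n), IsChain (· ≤ ·) (τ : Set (Adm n)) → σ ⊆ τ → σ = τ) :
    σ.card = n := by
  -- surjectivity of size onto Icc 1 n
  have hsurj : ∀ k, 1 ≤ k → k ≤ n → ∃ I ∈ σ, I.size = k := by
    intro k hk1 hkn
    by_contra hno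
    push_neg at hno
    -- lower and upper bounding functions
    set σlo := σ.filter (fun I => I.size < k) with hσlo
    set σhi := σ.filter (fun I => k < I.size) with hσhi
    have hmemsplit : ∀ I ∈ σ, I ∈ σlo ∨ I ∈ σhi := by
      intro I hI
      have := hno I hI
      rcases lt_or_gt_of_ne this with h | h
      · left; simp [hσlo, hI, h]
      · right; simp [hσhi, hI, h]
    have hcl : IsChain (· ≤ ·) (σlo : Set (Adm n)) :=
      hσ.mono (by intro x hx; simp only [hσlo, Finset.coe_filter, Set.mem_setOf_eq] at hx; exact hx.1)
    have hch : IsChain (· ≤ ·) (σhi : Set (Adm n)) :=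
      hσ.mono (by intro x hx; simp only [hσhi, Finset.coe_filter, Set.mem_setOf_eq] at hx; exact hx.1)
    -- f : lower bound function
    obtain ⟨f, hflo, hfhi, hfsize⟩ :
        ∃ f : Fin n → Option Bool,
          (∀ I ∈ σlo, ∀ i b, I.1 i = some b → f i = some b) ∧
          (∀ I ∈ σhi, ∀ i b, f i = some b → I.1 i = some b) ∧
          ((Finset.univ.filter fun i => f i ≠ none).card ≤ k) := by
      by_cases hne : σlo.Nonempty
      · obtain ⟨M, hM, hMtop⟩ := chain_exists_max hcl hne
        have hMσ : M ∈ σ := (Finset.mem_filter.1 hM).1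
        have hMk : M.size < k := (Finset.mem_filter.1 hM).2
        refine ⟨M.1, fun I hI i b hb => (hMtop I hI) i b hb, ?_, le_of_lt hMk⟩
        intro I hI i b hb
        have hIσ : I ∈ σ := (Finset.mem_filter.1 hI).1
        have hIk : k < I.size := (Finset.mem_filter.1 hI).2
        have hMI : M ≤ I := by
          rcases eq_or_ne M I with rfl | hne'
          · exact le_refl _
          · rcases hσ hMσ hIσ hne' with h | h
            · exact h
            · exact absurd (size_mono h) (by omega)
        exact hMI i b hb
      · refine ⟨fun _ => none, fun I hI => absurd ⟨I, hI⟩ hne, fun I _ i b hb => absurd hb (by simp), ?_⟩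
        simp
    -- g : upper bound function, with f ≤ g
    obtain ⟨g, hfg, hghi, hgsize⟩ :
        ∃ g : Fin n → Option Bool,
          (∀ i b, f i = some b → g i = some b) ∧
          (∀ I ∈ σhi, ∀ i b, g i = some b → I.1 i = some b) ∧
          (k ≤ (Finset.univ.filter fun i => g i ≠ none).card) := by
      by_cases hne : σhi.Nonempty
      · obtain ⟨M, hM, hMbot⟩ := chain_exists_min hch hne
        refine ⟨M.1, ?_, fun I hI i b hb => (hMbot I hI) i b hb, ?_⟩
        · intro i b hb
          exact hfhi M hM i b hb
        · have : k < M.size := by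
            have := hM; simp only [hσhi, Finset.mem_filter] at this; exact this.2
          exact le_of_lt this
      · refine ⟨fun i => some ((f i).getD true), ?_, fun I hI => absurd ⟨I, hI⟩ hne, ?_⟩
        · intro i b hb; show some ((f i).getD true) = some b; rw [hb]; rfl
        · have : (Finset.univ.filter fun i => (some ((f i).getD true) : Option Bool) ≠ none) = Finset.univ := by
            ext i; simp
          rw [this]; simpa using hkn
    obtain ⟨h, hfh, hhg, hhsize⟩ := exists_between f g hfg k hfsize hgsize
    have hhne : h ≠ fun _ => none := by
      intro heq
      rw [heq] at hhsize
      simp at hhsize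
      omega
    set K : Adm n := ⟨h, hhne⟩ with hK
    have hKsize : K.size = k := hhsize
    have hKcomp : ∀ J ∈ σ, K ≤ J ∨ J ≤ K := by
      intro J hJ
      rcases hmemsplit J hJ with hJlo | hJhi
      · right
        intro i b hb
        exact hfh i b (hflo J hJlo i b hb)
      · left
        intro i b hb
        exact hghi J hJhi i b (hhg i b hb)
    have hchain' : IsChain (· ≤ ·) ((insert K σ : Finset (Adm n)) : Set (Adm n)) := by
      rw [Finset.coe_insert]
      exact hσ.insert (fun J hJ _ => hKcomp J hJ)
    have := hmax (insert K σ) hchain' (Finset.subset_insert _ _)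
    have hKmem : K ∈ σ := by rw [this]; exact Finset.mem_insert_self _ _
    exact hno K hKmem hKsize
  -- injectivity of size on σ
  have hinj : Set.InjOn Adm.size (σ : Set (Adm n)) := by
    intro I hI J hJ hIJ
    rcases eq_or_ne I J with h | h
    · exact h
    · rcases hσ hI hJ h with hle | hle
      · exact eq_of_le_of_size_le hle (le_of_eq hIJ.symm)
      · exact (eq_of_le_of_size_le hle (le_of_eq hIJ)).symm
  have himg : σ.image Adm.size = Finset.Icc 1 n := by
    apply Finset.Subset.antisymm
    · intro k hk
      simp only [Finset.mem_image] at hk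
      obtain ⟨I, hI, rfl⟩ := hk
      simp only [Finset.mem_Icc]
      exact ⟨one_le_size I, size_le I⟩
    · intro k hk
      simp only [Finset.mem_Icc] at hk
      obtain ⟨I, hI, hIk⟩ := hsurj k hk.1 hk.2
      exact Finset.mem_image.2 ⟨I, hI, hIk⟩
  have := Finset.card_image_of_injOn hinj
  rw [himg] at this
  simpa using this.symm


noncomputable def predIn (S : Finset ℝ) (v : ℝ) : ℝ :=
  (insert (0:ℝ) (S.filter (· < v))).max' (Finset.insert_nonempty _ _)

lemma predIn_lt {S : Finset ℝ} {v : ℝ} (hv : 0 < v) : predIn S v < v := by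
  apply Finset.max'_lt_iff _ _ |>.2
  intro y hy
  rcases Finset.mem_insert.1 hy with rfl | hy
  · exact hv
  · exact (Finset.mem_filter.1 hy).2

lemma predIn_nonneg (S : Finset ℝ) (v : ℝ) : 0 ≤ predIn S v :=
  Finset.le_max' _ 0 (Finset.mem_insert_self _ _)

lemma max'_congr {S T : Finset ℝ} (h : S = T) (hS : S.Nonempty) :
    S.max' hS = T.max' (h ▸ hS) := by subst h; rfl

lemma predIn_congr {S T : Finset ℝ} {v : ℝ} (h : S.filter (· < v) = T.filter (· < v)) :
    predIn S v = predIn T v := max'_congr (by rw [h]) _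

lemma tel (S : Finset ℝ) (hS : ∀ v ∈ S, 0 < v) :
    ∑ v ∈ S, (v - predIn S v) = (insert (0:ℝ) S).max' (Finset.insert_nonempty _ _) := by
  induction S using Finset.induction_on_max with
  | empty => simp [predIn]
  | insert a s ha ih =>
    have has : a ∉ s := fun h => lt_irrefl a (ha a h)
    have ha0 : 0 < a := hS a (Finset.mem_insert_self _ _)
    have hs0 : ∀ v ∈ s, 0 < v := fun v hv => hS v (Finset.mem_insert_of_mem hv)
    have hfa : (insert a s).filter (· < a) = s := by
      ext x
      simp only [Finset.mem_filter, Finset.mem_insert]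
      constructor
      · rintro ⟨rfl | hx, hlt⟩
        · exact absurd hlt (lt_irrefl _)
        · exact hx
      · exact fun hx => ⟨Or.inr hx, ha x hx⟩
    have hcong : ∀ v ∈ s, predIn (insert a s) v = predIn s v := by
      intro v hv
      apply predIn_congr
      ext x
      simp only [Finset.mem_filter, Finset.mem_insert]
      constructor
      · rintro ⟨rfl | hx, hlt⟩
        · exact absurd hlt (not_lt.2 (le_of_lt (ha v hv)))
        · exact ⟨hx, hlt⟩
      · exact fun ⟨hx, hlt⟩ => ⟨Or.inr hx, hlt⟩
    rw [Finset.sum_insert has]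
    have : ∑ v ∈ s, (v - predIn (insert a s) v) = ∑ v ∈ s, (v - predIn s v) :=
      Finset.sum_congr rfl fun v hv => by rw [hcong v hv]
    rw [this, ih hs0]
    have hpa : predIn (insert a s) a = (insert (0:ℝ) s).max' (Finset.insert_nonempty _ _) :=
      max'_congr (by rw [hfa]) _
    rw [hpa]
    have hmax : (insert (0:ℝ) (insert a s)).max' (Finset.insert_nonempty _ _) = a := by
      apply le_antisymm
      · apply Finset.max'_le
        intro y hy
        rcases Finset.mem_insert.1 hy with rfl | hy
        · exact le_of_lt ha0
        · rcases Finset.mem_insert.1 hy with rfl | hy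
          · exact le_refl _
          · exact le_of_lt (ha y hy)
      · exact Finset.le_max' _ a (by simp)
    rw [hmax]; ring

lemma tel_le (S : Finset ℝ) (hS : ∀ v ∈ S, 0 < v) (t : ℝ) (ht : t ∈ S) :
    ∑ v ∈ S, (if v ≤ t then v - predIn S v else 0) = t := by
  classical
  rw [← Finset.sum_filter]
  set S' := S.filter (· ≤ t) with hS'
  have hsub : S' ⊆ S := Finset.filter_subset _ _
  have hcong : ∀ v ∈ S', predIn S v = predIn S' v := by
    intro v hv
    have hvt : v ≤ t := (Finset.mem_filter.1 hv).2
    apply predIn_congr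
    ext x
    simp only [hS', Finset.filter_filter, Finset.mem_filter]
    constructor
    · exact fun ⟨hx, hlt⟩ => ⟨hx, le_trans (le_of_lt hlt) hvt, hlt⟩
    · exact fun ⟨hx, _, hlt⟩ => ⟨hx, hlt⟩
  have := tel S' (fun v hv => hS v (hsub hv))
  rw [Finset.sum_congr rfl (fun v hv => by rw [hcong v hv]), this]
  apply le_antisymm
  · apply Finset.max'_le
    intro y hy
    rcases Finset.mem_insert.1 hy with rfl | hy
    · exact le_of_lt (hS t ht)
    · exact (Finset.mem_filter.1 hy).2
  · exact Finset.le_max' _ t (by simp [hS', Finset.mem_filter, ht])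

variable {n : ℕ}

noncomputable def ssgn : Option Bool → ℝ
  | some true => 1
  | some false => -1
  | none => 0

noncomputable def vec (I : Adm n) : Fin n → ℝ := fun i => ssgn (I.1 i) * ((I.size : ℝ))⁻¹

noncomputable def Phi (w : Adm n → ℝ) : Fin n → ℝ := fun i => ∑ I, w I * vec I i

noncomputable def Vx (x : Fin n → ℝ) : Finset ℝ :=
  (Finset.univ.filter fun i => x i ≠ 0).image (fun i => |x i|)

noncomputable def Afun (x : Fin n → ℝ) (v : ℝ) : Fin n → Option Bool :=
  fun i => if v ≤ |x i| then some (if 0 < x i then true else false) else none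

noncomputable def wfun (x : Fin n → ℝ) (I : Adm n) : ℝ :=
  ∑ v ∈ Vx x, if I.1 = Afun x v then (v - predIn (Vx x) v) * (I.size : ℝ) else 0

lemma Vx_pos {x : Fin n → ℝ} {v : ℝ} (hv : v ∈ Vx x) : 0 < v := by
  simp only [Vx, Finset.mem_image, Finset.mem_filter, Finset.mem_univ, true_and] at hv
  obtain ⟨i, hi, rfl⟩ := hv
  exact abs_pos.2 hi

lemma tel2 (x : Fin n → ℝ) (i : Fin n) :
    ∑ v ∈ Vx x, (if v ≤ |x i| then v - predIn (Vx x) v else 0) = |x i| := by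
  by_cases hxi : x i = 0
  · rw [hxi, abs_zero]
    apply Finset.sum_eq_zero
    intro v hv
    rw [if_neg (not_le.2 (Vx_pos hv))]
  · exact tel_le _ (fun v hv => Vx_pos hv) _
      (Finset.mem_image.2 ⟨i, Finset.mem_filter.2 ⟨Finset.mem_univ _, hxi⟩, rfl⟩)

lemma size_cast_pos (I : Adm n) : (0:ℝ) < (I.size : ℝ) := by
  exact_mod_cast one_le_size I

lemma size_mul_vec (I : Adm n) (i : Fin n) :
    (I.size : ℝ) * vec I i = ssgn (I.1 i) := by
  rw [vec, mul_comm (ssgn (I.1 i)), ← mul_assoc, mul_inv_cancel₀ (ne_of_gt (size_cast_pos I)), one_mul]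

lemma exists_Jv {x : Fin n → ℝ} {v : ℝ} (hv : v ∈ Vx x) :
    ∃ J : Adm n, J.1 = Afun x v := by
  simp only [Vx, Finset.mem_image, Finset.mem_filter, Finset.mem_univ, true_and] at hv
  obtain ⟨i, hi, hvi⟩ := hv
  have hne : Afun x v ≠ (fun _ => none) := by
    intro heq
    have := congrFun heq i
    rw [Afun] at this
    simp only [hvi] at this
    rw [if_pos (le_refl v)] at this
    exact absurd this (by simp)
  exact ⟨⟨Afun x v, hne⟩, rfl⟩

lemma size_J {x : Fin n → ℝ} {v : ℝ} {J : Adm n} (hJ : J.1 = Afun x v) :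
    (J.size : ℝ) = ∑ i : Fin n, (if v ≤ |x i| then (1:ℝ) else 0) := by
  rw [Adm.size, hJ]
  rw [Finset.card_eq_sum_ones, Nat.cast_sum]
  rw [Finset.sum_filter]
  congr 1
  ext i
  by_cases h : v ≤ |x i| <;> simp [Afun, h]

lemma ssgn_J {x : Fin n → ℝ} {v : ℝ} {J : Adm n} (hJ : J.1 = Afun x v) (i : Fin n) :
    (J.size : ℝ) * vec J i = if v ≤ |x i| then (if 0 < x i then (1:ℝ) else -1) else 0 := by
  rw [size_mul_vec, hJ, Afun]
  by_cases h : v ≤ |x i|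
  · rw [if_pos h, if_pos h]
    by_cases h' : 0 < x i <;> simp [ssgn, h']
  · rw [if_neg h, if_neg h]; rfl

lemma unique_J {x : Fin n → ℝ} {v : ℝ} {I J : Adm n} (hI : I.1 = Afun x v)
    (hJ : J.1 = Afun x v) : I = J := Subtype.ext (hI.trans hJ.symm)

lemma wfun_nonneg (x : Fin n → ℝ) (I : Adm n) : 0 ≤ wfun x I := by
  apply Finset.sum_nonneg
  intro v hv
  split
  · apply mul_nonneg (le_of_lt (sub_pos.2 (predIn_lt (Vx_pos hv)))) (le_of_lt (size_cast_pos I))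
  · exact le_refl 0

lemma phi_wfun (x : Fin n → ℝ) (i : Fin n) : Phi (wfun x) i = x i := by
  rw [Phi]
  have step1 : ∀ I : Adm n, wfun x I * vec I i =
      ∑ v ∈ Vx x, (if I.1 = Afun x v then (v - predIn (Vx x) v) * ((I.size : ℝ) * vec I i) else 0) := by
    intro I
    rw [wfun, Finset.sum_mul]
    apply Finset.sum_congr rfl
    intro v _
    split
    · ring
    · ring
  rw [Finset.sum_congr rfl fun I _ => step1 I, Finset.sum_comm]
  have step2 : ∀ v ∈ Vx x,
      (∑ I : Adm n, if I.1 = Afun x v then (v - predIn (Vx x) v) * ((I.size : ℝ) * vec I i) else 0) =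
      (v - predIn (Vx x) v) * (if v ≤ |x i| then (if 0 < x i then (1:ℝ) else -1) else 0) := by
    intro v hv
    obtain ⟨J, hJ⟩ := exists_Jv hv
    rw [Finset.sum_eq_single J]
    · rw [if_pos hJ, ssgn_J hJ]
    · intro I _ hne
      rw [if_neg (fun h => hne (unique_J h hJ))]
    · intro h; exact absurd (Finset.mem_univ J) h
  rw [Finset.sum_congr rfl step2]
  have step3 : ∑ v ∈ Vx x, (v - predIn (Vx x) v) * (if v ≤ |x i| then (if 0 < x i then (1:ℝ) else -1) else 0)
      = (if 0 < x i then (1:ℝ) else -1) * ∑ v ∈ Vx x, (if v ≤ |x i| then v - predIn (Vx x) v else 0) := by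
    rw [Finset.mul_sum]
    apply Finset.sum_congr rfl
    intro v _
    split <;> ring
  rw [step3, tel2]
  rcases lt_trichotomy (x i) 0 with h | h | h
  · rw [if_neg (not_lt.2 (le_of_lt h)), abs_of_neg h]; ring
  · rw [h, abs_zero, mul_zero]
  · rw [if_pos h, abs_of_pos h, one_mul]

lemma sum_wfun (x : Fin n → ℝ) : ∑ I, wfun x I = ∑ i, |x i| := by
  unfold wfun
  rw [Finset.sum_comm]
  have step2 : ∀ v ∈ Vx x,
      (∑ I : Adm n, if I.1 = Afun x v then (v - predIn (Vx x) v) * ((I.size : ℝ)) else 0) =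
      ∑ i : Fin n, (if v ≤ |x i| then v - predIn (Vx x) v else 0) := by
    intro v hv
    obtain ⟨J, hJ⟩ := exists_Jv hv
    rw [Finset.sum_eq_single J]
    · rw [if_pos hJ, size_J hJ, Finset.mul_sum]
      apply Finset.sum_congr rfl
      intro i _
      split <;> ring
    · intro I _ hne
      rw [if_neg (fun h => hne (unique_J h hJ))]
    · intro h; exact absurd (Finset.mem_univ J) h
  rw [Finset.sum_congr rfl step2, Finset.sum_comm]
  exact Finset.sum_congr rfl fun i _ => tel2 x i

lemma wfun_support_subset {x : Fin n → ℝ} {I : Adm n} (h : wfun x I ≠ 0) :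
    ∃ v ∈ Vx x, I.1 = Afun x v := by
  by_contra hno
  push_neg at hno
  apply h
  apply Finset.sum_eq_zero
  intro v hv
  rw [if_neg (hno v hv)]

lemma Afun_mono {x : Fin n → ℝ} {v v' : ℝ} (h : v ≤ v') {I J : Adm n}
    (hI : I.1 = Afun x v) (hJ : J.1 = Afun x v') : J ≤ I := by
  intro i b hb
  rw [hJ, Afun] at hb
  rw [hI, Afun]
  by_cases hc : v' ≤ |x i|
  · rw [if_pos hc] at hb
    rw [if_pos (le_trans h hc)]
    exact hb
  · rw [if_neg hc] at hb; exact absurd hb (by simp)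

lemma wfun_chain (x : Fin n → ℝ) :
    IsChain (· ≤ ·) ((Finset.univ.filter fun I : Adm n => wfun x I ≠ 0) : Set (Adm n)) := by
  intro I hI J hJ hne
  simp only [Finset.coe_filter, Set.mem_setOf_eq, Finset.mem_univ, true_and] at hI hJ
  obtain ⟨v, _, hIv⟩ := wfun_support_subset hI
  obtain ⟨v', _, hJv⟩ := wfun_support_subset hJ
  rcases le_total v v' with h | h
  · exact Or.inr (Afun_mono h hIv hJv)
  · exact Or.inl (Afun_mono h hJv hIv)

noncomputable def suppw (w : Adm n → ℝ) : Finset (Adm n) :=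
  Finset.univ.filter fun I => w I ≠ 0

noncomputable def Ci (w : Adm n → ℝ) (i : Fin n) : Finset (Adm n) :=
  (suppw w).filter fun J => J.1 i ≠ none

noncomputable def val (w : Adm n → ℝ) (I : Adm n) : ℝ :=
  ∑ J ∈ (suppw w).filter (fun J => I ≤ J), w J * ((J.size : ℝ))⁻¹

noncomputable def ui (w : Adm n → ℝ) (i : Fin n) : ℝ :=
  ∑ J ∈ Ci w i, w J * ((J.size : ℝ))⁻¹

section recovery

variable {w : Adm n → ℝ} (hw0 : ∀ I, 0 ≤ w I)
  (hwC : IsChain (· ≤ ·) ((suppw w : Finset (Adm n)) : Set (Adm n)))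

lemma mem_suppw {I : Adm n} : I ∈ suppw w ↔ w I ≠ 0 := by simp [suppw]

include hw0 in
lemma w_pos {I : Adm n} (hI : I ∈ suppw w) : 0 < w I :=
  lt_of_le_of_ne (hw0 I) (Ne.symm (mem_suppw.1 hI))

include hwC in
lemma comparable {I J : Adm n} (hI : I ∈ suppw w) (hJ : J ∈ suppw w) :
    I ≤ J ∨ J ≤ I := by
  rcases eq_or_ne I J with rfl | hne
  · exact Or.inl (le_refl _)
  · exact hwC (by exact_mod_cast hI) (by exact_mod_cast hJ) hne

include hw0 in
lemma term_nonneg (J : Adm n) : 0 ≤ w J * ((J.size : ℝ))⁻¹ :=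
  mul_nonneg (hw0 J) (le_of_lt (inv_pos.2 (size_cast_pos J)))

include hw0 in
lemma term_pos {J : Adm n} (hJ : J ∈ suppw w) : 0 < w J * ((J.size : ℝ))⁻¹ :=
  mul_pos (w_pos hw0 hJ) (inv_pos.2 (size_cast_pos J))

include hw0 in
lemma ui_nonneg (i : Fin n) : 0 ≤ ui w i :=
  Finset.sum_nonneg fun J _ => term_nonneg hw0 J

include hwC in
lemma sign_consistent (i : Fin n) : ∃ b : Bool, ∀ J ∈ Ci w i, J.1 i = some b := by
  rcases Finset.eq_empty_or_nonempty (Ci w i) with h | ⟨J₀, hJ₀⟩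
  · exact ⟨true, fun J hJ => absurd hJ (by simp [h])⟩
  · have hJ₀s : J₀ ∈ suppw w := (Finset.mem_filter.1 hJ₀).1
    have hJ₀i : J₀.1 i ≠ none := (Finset.mem_filter.1 hJ₀).2
    rcases hb₀ : J₀.1 i with _ | b₀
    · exact absurd hb₀ hJ₀i
    refine ⟨b₀, fun J hJ => ?_⟩
    have hJs : J ∈ suppw w := (Finset.mem_filter.1 hJ).1
    have hJi : J.1 i ≠ none := (Finset.mem_filter.1 hJ).2
    rcases hb : J.1 i with _ | b
    · exact absurd hb hJi
    rcases comparable hwC hJs hJ₀s with h | h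
    · rw [h i b hb] at hb₀; rw [Option.some.injEq] at hb₀; rw [hb₀]
    · rw [h i b₀ hb₀] at hb; rw [Option.some.injEq] at hb; rw [hb]

lemma xi_eq (i : Fin n) :
    Phi w i = ∑ J ∈ Ci w i, w J * vec J i := by
  rw [Phi]
  rw [← Finset.sum_filter_add_sum_filter_not Finset.univ (fun J => J ∈ Ci w i)]
  have h2 : ∑ J ∈ Finset.univ.filter (fun J => ¬ J ∈ Ci w i), w J * vec J i = 0 := by
    apply Finset.sum_eq_zero
    intro J hJ
    have hJ' : J ∉ Ci w i := (Finset.mem_filter.1 hJ).2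
    by_cases hw : w J = 0
    · rw [hw, zero_mul]
    · have : J.1 i = none := by
        by_contra hne
        exact hJ' (Finset.mem_filter.2 ⟨mem_suppw.2 hw, hne⟩)
      rw [vec, this]
      show w J * (ssgn none * _) = 0
      rw [ssgn]; ring
  rw [h2, add_zero]
  congr 1
  ext J
  simp only [Finset.mem_filter, Finset.mem_univ, true_and]

lemma xi_val {i : Fin n} {b : Bool} (hb : ∀ J ∈ Ci w i, J.1 i = some b) :
    Phi w i = (if b then (1:ℝ) else -1) * ui w i := by
  rw [xi_eq, ui, Finset.mul_sum]
  apply Finset.sum_congr rfl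
  intro J hJ
  rw [vec, hb J hJ]
  cases b <;> (simp [ssgn]; try ring)

include hw0 hwC in
lemma abs_xi (i : Fin n) : |Phi w i| = ui w i := by
  obtain ⟨b, hb⟩ := sign_consistent hwC i
  rw [xi_val hb]
  cases b
  · rw [if_neg (by simp)]
    rw [abs_mul, abs_neg, abs_one, one_mul, abs_of_nonneg (ui_nonneg hw0 i)]
  · rw [if_pos rfl, one_mul, abs_of_nonneg (ui_nonneg hw0 i)]

include hw0 in
lemma ui_pos_of_mem {i : Fin n} {I : Adm n} (hI : I ∈ Ci w i) : 0 < ui w i := by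
  apply Finset.sum_pos' (fun J _ => term_nonneg hw0 J) ⟨I, hI, term_pos hw0 (Finset.mem_filter.1 hI).1⟩

include hw0 hwC in
lemma sign_xi {i : Fin n} {b : Bool} (hb : ∀ J ∈ Ci w i, J.1 i = some b)
    (hne : (Ci w i).Nonempty) : (if 0 < Phi w i then true else false) = b := by
  obtain ⟨I, hI⟩ := hne
  have hu : 0 < ui w i := ui_pos_of_mem hw0 hI
  cases b
  · have hneg : ¬ (0 < Phi w i) := by
      rw [xi_val hb]
      simp only [Bool.false_eq_true, if_false]
      nlinarith
    rw [if_neg hneg]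
  · have hpos : 0 < Phi w i := by
      rw [xi_val hb]
      simp only [if_true]
      linarith
    rw [if_pos hpos]

include hw0 in
lemma val_pos {I : Adm n} (hI : I ∈ suppw w) : 0 < val w I := by
  apply Finset.sum_pos' (fun J _ => term_nonneg hw0 J)
  exact ⟨I, Finset.mem_filter.2 ⟨hI, le_refl _⟩, term_pos hw0 hI⟩

include hw0 in
lemma val_le_ui {I : Adm n} (hI : I ∈ suppw w) {i : Fin n} (hIi : I.1 i ≠ none) :
    val w I ≤ ui w i := by
  apply Finset.sum_le_sum_of_subset_of_nonneg
  · intro J hJ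
    obtain ⟨hJs, hIJ⟩ := Finset.mem_filter.1 hJ
    refine Finset.mem_filter.2 ⟨hJs, ?_⟩
    rcases hb : I.1 i with _ | b
    · exact absurd hb hIi
    · rw [hIJ i b hb]; simp
  · intro J _ _; exact term_nonneg hw0 J

include hw0 in
lemma val_split {I : Adm n} (hI : I ∈ suppw w) :
    val w I = w I * ((I.size : ℝ))⁻¹ + ∑ J ∈ (suppw w).filter (fun J => I < J), w J * ((J.size : ℝ))⁻¹ := by
  rw [val]
  have : (suppw w).filter (fun J => I ≤ J) = insert I ((suppw w).filter (fun J => I < J)) := by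
    ext J
    simp only [Finset.mem_filter, Finset.mem_insert]
    constructor
    · rintro ⟨hJs, hIJ⟩
      rcases eq_or_ne J I with rfl | hne
      · exact Or.inl rfl
      · exact Or.inr ⟨hJs, lt_of_le_of_ne hIJ (Ne.symm hne)⟩
    · rintro (rfl | ⟨hJs, hIJ⟩)
      · exact ⟨hI, le_refl _⟩
      · exact ⟨hJs, le_of_lt hIJ⟩
  rw [this, Finset.sum_insert (by simp)]

include hw0 hwC in
lemma ui_lt_val {I : Adm n} (hI : I ∈ suppw w) {i : Fin n} (hIi : I.1 i = none) :
    ui w i < val w I := by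
  have hsub : Ci w i ⊆ (suppw w).filter (fun J => I < J) := by
    intro J hJ
    obtain ⟨hJs, hJi⟩ := Finset.mem_filter.1 hJ
    refine Finset.mem_filter.2 ⟨hJs, ?_⟩
    have hne : J ≠ I := fun h => hJi (h ▸ hIi)
    rcases comparable hwC hI hJs with h | h
    · exact lt_of_le_of_ne h (Ne.symm hne)
    · exfalso
      rcases hb : J.1 i with _ | b
      · exact hJi hb
      · rw [h i b hb] at hIi; exact absurd hIi (by simp)
  have h1 : ui w i ≤ ∑ J ∈ (suppw w).filter (fun J => I < J), w J * ((J.size : ℝ))⁻¹ :=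
    Finset.sum_le_sum_of_subset_of_nonneg hsub (fun J _ _ => term_nonneg hw0 J)
  have h2 := val_split hw0 hI
  have h3 := term_pos hw0 hI
  linarith

include hw0 hwC in
lemma Afun_val {I : Adm n} (hI : I ∈ suppw w) :
    Afun (Phi w) (val w I) = I.1 := by
  funext i
  rw [Afun]
  rcases hb : I.1 i with _ | b
  · rw [if_neg]
    rw [abs_xi hw0 hwC]
    exact not_le.2 (ui_lt_val hw0 hwC hI hb)
  · have hval : val w I ≤ |Phi w i| := by
      rw [abs_xi hw0 hwC]
      exact val_le_ui hw0 hI (by rw [hb]; simp)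
    rw [if_pos hval]
    obtain ⟨b', hb'⟩ := sign_consistent hwC i
    have hICi : I ∈ Ci w i := Finset.mem_filter.2 ⟨hI, by rw [hb]; simp⟩
    have hbb' : b = b' := by
      have := hb' I hICi
      rw [hb] at this
      exact Option.some.inj this
    rw [sign_xi hw0 hwC hb' ⟨I, hICi⟩, hbb']

include hw0 hwC in
lemma val_strict_anti {I J : Adm n} (hI : I ∈ suppw w) (hJ : J ∈ suppw w) (hIJ : I < J) :
    val w J < val w I := by
  have hsub : (suppw w).filter (fun K => J ≤ K) ⊆ (suppw w).filter (fun K => I < K) := by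
    intro K hK
    obtain ⟨hKs, hJK⟩ := Finset.mem_filter.1 hK
    exact Finset.mem_filter.2 ⟨hKs, lt_of_lt_of_le hIJ hJK⟩
  have h1 : val w J ≤ ∑ K ∈ (suppw w).filter (fun K => I < K), w K * ((K.size : ℝ))⁻¹ :=
    Finset.sum_le_sum_of_subset_of_nonneg hsub (fun K _ _ => term_nonneg hw0 K)
  have h2 := val_split hw0 hI
  have h3 := term_pos hw0 hI
  linarith

include hw0 hwC in
lemma le_of_val_le {I J : Adm n} (hI : I ∈ suppw w) (hJ : J ∈ suppw w)
    (h : val w I ≤ val w J) : J ≤ I := by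
  rcases eq_or_ne J I with rfl | hne
  · exact le_refl _
  rcases comparable hwC hI hJ with hle | hle
  · exact absurd (val_strict_anti hw0 hwC hI hJ (lt_of_le_of_ne hle (Ne.symm hne))) (not_lt.2 h)
  · exact hle

include hw0 hwC in
lemma Ci_eq_upset_of_min {i : Fin n} {I₀ : Adm n} (hI₀ : I₀ ∈ Ci w i)
    (hmin : ∀ a ∈ Ci w i, I₀ ≤ a) :
    Ci w i = (suppw w).filter (fun J => I₀ ≤ J) := by
  ext J
  constructor
  · intro hJ
    exact Finset.mem_filter.2 ⟨(Finset.mem_filter.1 hJ).1, hmin J hJ⟩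
  · intro hJ
    obtain ⟨hJs, hIJ⟩ := Finset.mem_filter.1 hJ
    refine Finset.mem_filter.2 ⟨hJs, ?_⟩
    rcases hb : I₀.1 i with _ | b
    · exact absurd hb (Finset.mem_filter.1 hI₀).2
    · rw [hIJ i b hb]; simp

include hw0 hwC in
lemma Vx_subset_image : Vx (Phi w) ⊆ (suppw w).image (val w) := by
  intro v hv
  have hv' := hv
  simp only [Vx, Finset.mem_image, Finset.mem_filter, Finset.mem_univ, true_and] at hv'
  obtain ⟨i, hi, hvi⟩ := hv'
  -- Ci w i is nonempty
  have hCine : (Ci w i).Nonempty := by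
    by_contra hempty
    rw [Finset.not_nonempty_iff_eq_empty] at hempty
    apply hi
    rw [xi_eq, hempty, Finset.sum_empty]
  have hCichain : IsChain (· ≤ ·) ((Ci w i : Finset (Adm n)) : Set (Adm n)) := by
    refine IsChain.mono ?_ hwC
    intro J hJ
    simp only [Ci, Finset.coe_filter, Set.mem_setOf_eq] at hJ
    exact_mod_cast hJ.1
  obtain ⟨I₀, hI₀, hmin⟩ := chain_exists_min hCichain hCine
  have heq := Ci_eq_upset_of_min hw0 hwC hI₀ hmin
  refine Finset.mem_image.2 ⟨I₀, (Finset.mem_filter.1 hI₀).1, ?_⟩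
  rw [← hvi, abs_xi hw0 hwC, ui, heq, val]

include hw0 hwC in
lemma image_subset_Vx : (suppw w).image (val w) ⊆ Vx (Phi w) := by
  intro v hv
  obtain ⟨I, hI, rfl⟩ := Finset.mem_image.1 hv
  -- find i in supp I not in supp of any smaller element of suppw
  have hIsupp : ∃ i, I.1 i ≠ none ∧ ∀ J ∈ suppw w, J < I → J.1 i = none := by
    by_contra hno
    push_neg at hno
    -- every i in supp I is covered by some smaller chain element
    set L := (suppw w).filter (fun J => J < I) with hL
    have hLne : L.Nonempty := by
      have h1 : 1 ≤ I.size := one_le_size I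
      have : ∃ i, I.1 i ≠ none := by
        by_contra hnone
        push_neg at hnone
        apply I.2
        funext i
        simpa using hnone i
      obtain ⟨i, hi⟩ := this
      obtain ⟨J, hJs, hJI, hJi⟩ := hno i hi
      exact ⟨J, Finset.mem_filter.2 ⟨hJs, hJI⟩⟩
    have hLchain : IsChain (· ≤ ·) ((L : Finset (Adm n)) : Set (Adm n)) := by
      refine IsChain.mono ?_ hwC
      intro J hJ
      simp only [hL, Finset.coe_filter, Set.mem_setOf_eq] at hJ
      exact_mod_cast hJ.1
    obtain ⟨Jm, hJm, hmax⟩ := chain_exists_max hLchain hLne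
    have hJmI : Jm < I := (Finset.mem_filter.1 hJm).2
    have hsub : I.supp ⊆ Jm.supp := by
      intro i hi
      simp only [Adm.supp, Finset.mem_filter, Finset.mem_univ, true_and] at hi ⊢
      obtain ⟨J, hJs, hJI, hJi⟩ := hno i hi
      have hJJm : J ≤ Jm := hmax J (Finset.mem_filter.2 ⟨hJs, hJI⟩)
      rcases hb : J.1 i with _ | b
      · exact absurd hb hJi
      · rw [hJJm i b hb]; simp
    have : I = Jm := eq_of_le_of_size_le (le_of_lt hJmI) (Finset.card_le_card hsub) |>.symm
    exact absurd this.symm (ne_of_lt hJmI)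
  obtain ⟨i, hIi, hnone⟩ := hIsupp
  have hICi : I ∈ Ci w i := Finset.mem_filter.2 ⟨hI, hIi⟩
  have hCieq : Ci w i = (suppw w).filter (fun J => I ≤ J) := by
    apply Ci_eq_upset_of_min hw0 hwC hICi
    intro J hJ
    obtain ⟨hJs, hJi⟩ := Finset.mem_filter.1 hJ
    rcases comparable hwC hI hJs with h | h
    · exact h
    · rcases eq_or_ne J I with rfl | hne
      · exact le_refl _
      · exact absurd (hnone J hJs (lt_of_le_of_ne h hne)) hJi
  have hxi : |Phi w i| = val w I := by
    rw [abs_xi hw0 hwC, ui, hCieq, val]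
  have hxine : Phi w i ≠ 0 := by
    intro h0
    rw [h0, abs_zero] at hxi
    exact absurd hxi.symm (ne_of_gt (val_pos hw0 hI))
  simp only [Vx, Finset.mem_image, Finset.mem_filter, Finset.mem_univ, true_and]
  exact ⟨i, hxine, hxi⟩

include hw0 hwC in
lemma Vx_eq_image : Vx (Phi w) = (suppw w).image (val w) :=
  Finset.Subset.antisymm (Vx_subset_image hw0 hwC) (image_subset_Vx hw0 hwC)

include hw0 hwC in
lemma predIn_val {I : Adm n} (hI : I ∈ suppw w) :
    predIn (Vx (Phi w)) (val w I) = val w I - w I * ((I.size : ℝ))⁻¹ := by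
  have hrest : val w I - w I * ((I.size : ℝ))⁻¹
      = ∑ J ∈ (suppw w).filter (fun J => I < J), w J * ((J.size : ℝ))⁻¹ := by
    have := val_split hw0 hI
    linarith
  rw [hrest]
  set U := (suppw w).filter (fun J => I < J) with hU
  rcases Finset.eq_empty_or_nonempty U with hUe | hUne
  · -- no larger elements: filter is empty, predIn = 0
    have hfil : (Vx (Phi w)).filter (· < val w I) = ∅ := by
      rw [Finset.eq_empty_iff_forall_notMem]
      intro v hv
      obtain ⟨hvV, hvlt⟩ := Finset.mem_filter.1 hv
      rw [Vx_eq_image hw0 hwC] at hvV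
      obtain ⟨J, hJ, rfl⟩ := Finset.mem_image.1 hvV
      have hIJ : I < J := by
        rcases eq_or_ne J I with rfl | hne
        · exact absurd hvlt (lt_irrefl _)
        · rcases comparable hwC hI hJ with h | h
          · exact lt_of_le_of_ne h (by exact fun hh => hne hh.symm)
          · exact absurd (val_strict_anti hw0 hwC hJ hI (lt_of_le_of_ne h hne)) (by
              intro hh; exact absurd (lt_trans hvlt hh) (lt_irrefl _))
      exact absurd (Finset.mem_filter.2 ⟨hJ, hIJ⟩) (by rw [← hU, hUe]; simp)
    rw [hUe, Finset.sum_empty]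
    rw [show predIn (Vx (Phi w)) (val w I)
        = (insert (0:ℝ) ((Vx (Phi w)).filter (· < val w I))).max' (Finset.insert_nonempty _ _) from rfl]
    rw [max'_congr (by rw [hfil]) _]
    simp
  · -- larger elements exist
    have hUchain : IsChain (· ≤ ·) ((U : Finset (Adm n)) : Set (Adm n)) := by
      refine IsChain.mono ?_ hwC
      intro J hJ
      simp only [hU, Finset.coe_filter, Set.mem_setOf_eq] at hJ
      exact_mod_cast hJ.1
    obtain ⟨J₀, hJ₀, hmin⟩ := chain_exists_min hUchain hUne
    have hJ₀s : J₀ ∈ suppw w := (Finset.mem_filter.1 hJ₀).1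
    have hIJ₀ : I < J₀ := (Finset.mem_filter.1 hJ₀).2
    have hUeq : U = (suppw w).filter (fun J => J₀ ≤ J) := by
      ext J
      constructor
      · intro hJ
        exact Finset.mem_filter.2 ⟨(Finset.mem_filter.1 hJ).1, hmin J hJ⟩
      · intro hJ
        obtain ⟨hJs, hJ₀J⟩ := Finset.mem_filter.1 hJ
        exact Finset.mem_filter.2 ⟨hJs, lt_of_lt_of_le hIJ₀ hJ₀J⟩
    have hsum : ∑ J ∈ U, w J * ((J.size : ℝ))⁻¹ = val w J₀ := by rw [hUeq, val]
    rw [hsum]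
    -- predIn = val w J₀
    apply le_antisymm
    · apply Finset.max'_le
      intro y hy
      rcases Finset.mem_insert.1 hy with rfl | hy
      · exact le_of_lt (val_pos hw0 hJ₀s)
      · obtain ⟨hyV, hylt⟩ := Finset.mem_filter.1 hy
        rw [Vx_eq_image hw0 hwC] at hyV
        obtain ⟨J, hJ, rfl⟩ := Finset.mem_image.1 hyV
        have hIJ : I < J := by
          rcases eq_or_ne J I with rfl | hne
          · exact absurd hylt (lt_irrefl _)
          · rcases comparable hwC hI hJ with h | h
            · exact lt_of_le_of_ne h (fun hh => hne hh.symm)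
            · exact absurd (val_strict_anti hw0 hwC hJ hI (lt_of_le_of_ne h hne))
                (by intro hh; exact absurd (lt_trans hylt hh) (lt_irrefl _))
        have hJU : J ∈ U := Finset.mem_filter.2 ⟨hJ, hIJ⟩
        -- J₀ ≤ J hence val J ≤ val J₀
        have hJ₀J : J₀ ≤ J := hmin J hJU
        rcases eq_or_ne J₀ J with rfl | hne
        · exact le_refl _
        · exact le_of_lt (val_strict_anti hw0 hwC hJ₀s hJ (lt_of_le_of_ne hJ₀J hne))
    · apply Finset.le_max'
      apply Finset.mem_insert_of_mem
      refine Finset.mem_filter.2 ⟨?_, val_strict_anti hw0 hwC hI hJ₀s hIJ₀⟩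
      rw [Vx_eq_image hw0 hwC]
      exact Finset.mem_image.2 ⟨J₀, hJ₀s, rfl⟩

include hw0 hwC in
lemma wfun_phi (I : Adm n) : wfun (Phi w) I = w I := by
  by_cases hI : I ∈ suppw w
  · rw [wfun]
    rw [Finset.sum_eq_single_of_mem (val w I)]
    · rw [if_pos (Afun_val hw0 hwC hI).symm, predIn_val hw0 hwC hI]
      have : (val w I - (val w I - w I * ((I.size : ℝ))⁻¹)) = w I * ((I.size : ℝ))⁻¹ := by ring
      rw [this, mul_assoc, inv_mul_cancel₀ (ne_of_gt (size_cast_pos I)), mul_one]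
    · rw [Vx_eq_image hw0 hwC]
      exact Finset.mem_image.2 ⟨I, hI, rfl⟩
    · intro v hv hne
      rw [if_neg]
      intro hIv
      rw [Vx_eq_image hw0 hwC] at hv
      obtain ⟨J, hJ, rfl⟩ := Finset.mem_image.1 hv
      rw [Afun_val hw0 hwC hJ] at hIv
      exact hne (congrArg (val w) (Subtype.ext hIv.symm))
  · have hwI : w I = 0 := by
      by_contra h
      exact hI (mem_suppw.2 h)
    rw [hwI, wfun]
    apply Finset.sum_eq_zero
    intro v hv
    rw [if_neg]
    intro hIv
    rw [Vx_eq_image hw0 hwC] at hv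
    obtain ⟨J, hJ, rfl⟩ := Finset.mem_image.1 hv
    rw [Afun_val hw0 hwC hJ] at hIv
    exact hI ((Subtype.ext hIv : I = J) ▸ hJ)

end recovery

section topology

variable (n : ℕ)

noncomputable def KR (n : ℕ) : Set ((Adm n) → ℝ) :=
  realization (chainComplex (n := n) fun _ => True)

lemma mem_KR {w : Adm n → ℝ} : w ∈ KR n ↔
    (∀ v, 0 ≤ w v) ∧ (∑ v, w v) = 1 ∧
      IsChain (· ≤ ·) ((Finset.univ.filter fun v => w v ≠ 0 : Finset (Adm n)) : Set (Adm n)) := by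
  constructor
  · rintro ⟨h1, h2, h3⟩
    exact ⟨h1, h2, h3.2⟩
  · rintro ⟨h1, h2, h3⟩
    exact ⟨h1, h2, fun I _ => trivial, h3⟩

lemma suppw_eq_filter (w : Adm n → ℝ) :
    suppw w = (Finset.univ.filter fun v => w v ≠ 0 : Finset (Adm n)) := rfl

/-- For `w` in the realization, `wfun (Phi w) = w`. -/
lemma wfun_phi_of_mem {w : Adm n → ℝ} (hw : w ∈ KR n) : wfun (Phi w) = w := by
  obtain ⟨h1, h2, h3⟩ := (mem_KR n).1 hw
  funext I
  exact wfun_phi h1 h3 I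

lemma l1_phi {w : Adm n → ℝ} (hw : w ∈ KR n) : ∑ i, |Phi w i| = 1 := by
  obtain ⟨h1, h2, h3⟩ := (mem_KR n).1 hw
  rw [← sum_wfun (Phi w)]
  rw [show (fun I => wfun (Phi w) I) = w from wfun_phi_of_mem n hw]
  exact h2

lemma wfun_mem_KR {x : Fin n → ℝ} (hx : ∑ i, |x i| = 1) : wfun x ∈ KR n := by
  rw [mem_KR]
  exact ⟨wfun_nonneg x, by rw [sum_wfun x]; exact hx, wfun_chain x⟩

lemma phi_ne_zero {w : Adm n → ℝ} (hw : w ∈ KR n) : Phi w ≠ 0 := by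
  intro h0
  have := l1_phi n hw
  rw [h0] at this
  simp at this

/-- The realization is compact. -/
lemma isCompact_KR : IsCompact (KR n) := by
  apply IsCompact.of_isClosed_subset (isCompact_stdSimplex ℝ (Adm n))
  · -- closed
    have hdecomp : KR n = ⋃ (σ : Finset (Adm n)) (_ : σ ∈ chainComplex (n := n) fun _ => True),
        ({w : Adm n → ℝ | (∀ v, 0 ≤ w v) ∧ (∑ v, w v) = 1 ∧ ∀ v ∉ σ, w v = 0}) := by
      ext w
      simp only [Set.mem_iUnion]
      constructor
      · rintro ⟨h1, h2, h3⟩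
        refine ⟨Finset.univ.filter fun v => w v ≠ 0, h3, h1, h2, ?_⟩
        intro v hv
        by_contra h
        exact hv (Finset.mem_filter.2 ⟨Finset.mem_univ _, h⟩)
      · rintro ⟨σ, hσ, h1, h2, h3⟩
        refine ⟨h1, h2, fun I _ => trivial, ?_⟩
        refine IsChain.mono ?_ hσ.2
        intro I hI
        simp only [Finset.coe_filter, Set.mem_setOf_eq, Finset.mem_univ, true_and] at hI
        by_contra h
        exact hI (h3 I (fun hmem => h (by exact_mod_cast hmem)))
    rw [hdecomp]
    apply isClosed_iUnion_of_finite
    intro σ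
    apply isClosed_iUnion_of_finite
    intro _
    have hset : {w : Adm n → ℝ | (∀ v, 0 ≤ w v) ∧ (∑ v, w v) = 1 ∧ ∀ v ∉ σ, w v = 0}
        = (⋂ v, {w : Adm n → ℝ | 0 ≤ w v}) ∩ ({w : Adm n → ℝ | (∑ v, w v) = 1}
          ∩ ⋂ v, ⋂ (_ : v ∉ σ), {w : Adm n → ℝ | w v = 0}) := by
      ext w
      simp only [Set.mem_setOf_eq, Set.mem_inter_iff, Set.mem_iInter]
    rw [hset]
    apply IsClosed.inter
    · exact isClosed_iInter fun v => isClosed_le continuous_const (continuous_apply v)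
    apply IsClosed.inter
    · exact isClosed_eq (by continuity) continuous_const
    · exact isClosed_iInter fun v => isClosed_iInter fun _ =>
        isClosed_eq (continuous_apply v) continuous_const
  · rintro w ⟨h1, h2, _⟩
    exact ⟨h1, h2⟩

end topology

section homeo

variable (n : ℕ)

noncomputable def toE (x : Fin n → ℝ) : EuclideanSpace ℝ (Fin n) :=
  (EuclideanSpace.equiv (Fin n) ℝ).symm x

lemma toE_apply (x : Fin n → ℝ) (i : Fin n) : toE n x i = x i := rfl

lemma toE_ne_zero {x : Fin n → ℝ} (hx : x ≠ 0) : toE n x ≠ 0 := by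
  intro h
  apply hx
  funext i
  have := congrFun (congrArg (fun z : EuclideanSpace ℝ (Fin n) => (z : Fin n → ℝ)) h) i
  simpa [toE] using this

lemma norm_toE_ne_zero {w : Adm n → ℝ} (hw : w ∈ KR n) : ‖toE n (Phi w)‖ ≠ 0 :=
  norm_ne_zero_iff.2 (toE_ne_zero n (phi_ne_zero n hw))

noncomputable def Fmap (w : ↥(KR n)) : ↥(Metric.sphere (0 : EuclideanSpace ℝ (Fin n)) 1) :=
  ⟨‖toE n (Phi w.1)‖⁻¹ • toE n (Phi w.1), by
    rw [mem_sphere_zero_iff_norm, norm_smul, norm_inv, norm_norm]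
    exact inv_mul_cancel₀ (norm_toE_ne_zero n w.2)⟩

lemma Fmap_injective : Function.Injective (Fmap n) := by
  rintro ⟨w, hw⟩ ⟨w', hw'⟩ h
  have h1 : ‖toE n (Phi w)‖⁻¹ • toE n (Phi w) = ‖toE n (Phi w')‖⁻¹ • toE n (Phi w') :=
    congrArg Subtype.val h
  have hptw : ∀ i, ‖toE n (Phi w)‖⁻¹ * Phi w i = ‖toE n (Phi w')‖⁻¹ * Phi w' i := by
    intro i
    exact congrFun (congrArg (fun z : EuclideanSpace ℝ (Fin n) => (z : Fin n → ℝ)) h1) i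
  set a := ‖toE n (Phi w)‖ with ha
  set b := ‖toE n (Phi w')‖ with hb
  have ha0 : a ≠ 0 := norm_toE_ne_zero n hw
  have hb0 : b ≠ 0 := norm_toE_ne_zero n hw'
  have hann : 0 ≤ a⁻¹ := inv_nonneg.2 (norm_nonneg _)
  have hbnn : 0 ≤ b⁻¹ := inv_nonneg.2 (norm_nonneg _)
  have hsum : a⁻¹ * (∑ i, |Phi w i|) = b⁻¹ * (∑ i, |Phi w' i|) := by
    rw [Finset.mul_sum, Finset.mul_sum]
    apply Finset.sum_congr rfl
    intro i _
    rw [← abs_of_nonneg hann, ← abs_of_nonneg hbnn, ← abs_mul, ← abs_mul, hptw i]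
  rw [l1_phi n hw, l1_phi n hw', mul_one, mul_one] at hsum
  have hxx : ∀ i, Phi w i = Phi w' i := by
    intro i
    have := hptw i
    rw [hsum] at this
    exact mul_left_cancel₀ (inv_ne_zero hb0) this
  have hphys : Phi w = Phi w' := funext hxx
  apply Subtype.ext
  calc w = wfun (Phi w) := (wfun_phi_of_mem n hw).symm
  _ = wfun (Phi w') := by rw [hphys]
  _ = w' := wfun_phi_of_mem n hw'

lemma Fmap_surjective : Function.Surjective (Fmap n) := by
  rintro ⟨y, hy⟩
  rw [mem_sphere_zero_iff_norm] at hy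
  set s := ∑ i, |(y : Fin n → ℝ) i| with hs
  have hyne : y ≠ 0 := by
    intro h
    rw [h, norm_zero] at hy
    exact zero_ne_one hy
  have hspos : 0 < s := by
    rcases lt_or_eq_of_le (Finset.sum_nonneg fun i _ => abs_nonneg ((y : Fin n → ℝ) i)) with h' | h'
    · exact h'
    · exfalso
      apply hyne
      have hall := (Finset.sum_eq_zero_iff_of_nonneg
        (fun i _ => abs_nonneg ((y : Fin n → ℝ) i))).1 h'.symm
      ext i
      have := hall i (Finset.mem_univ i)
      rwa [abs_eq_zero] at this
  set x : Fin n → ℝ := fun i => s⁻¹ * (y : Fin n → ℝ) i with hx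
  have hxl1 : ∑ i, |x i| = 1 := by
    rw [hx]
    simp only []
    have : ∀ i, |s⁻¹ * (y : Fin n → ℝ) i| = s⁻¹ * |(y : Fin n → ℝ) i| := by
      intro i
      rw [abs_mul, abs_of_nonneg (inv_nonneg.2 (le_of_lt hspos))]
    rw [Finset.sum_congr rfl fun i _ => this i, ← Finset.mul_sum, ← hs,
      inv_mul_cancel₀ (ne_of_gt hspos)]
  refine ⟨⟨wfun x, wfun_mem_KR n hxl1⟩, ?_⟩
  apply Subtype.ext
  show ‖toE n (Phi (wfun x))‖⁻¹ • toE n (Phi (wfun x)) = y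
  have hphi : Phi (wfun x) = x := funext (phi_wfun x)
  rw [hphi]
  have htoE : toE n x = s⁻¹ • y := by
    ext i
    show x i = s⁻¹ * (y : Fin n → ℝ) i
    rw [hx]
  rw [htoE, norm_smul, hy, mul_one, norm_inv, Real.norm_eq_abs,
    abs_of_nonneg (le_of_lt hspos), inv_inv, smul_smul,
    mul_inv_cancel₀ (ne_of_gt hspos), one_smul]

lemma Fmap_continuous : Continuous (Fmap n) := by
  have hc1 : Continuous fun w : ↥(KR n) => Phi w.1 := by
    apply continuous_pi
    intro i
    apply continuous_finset_sum
    intro I _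
    exact ((continuous_apply I).comp continuous_subtype_val).mul continuous_const
  have hc3 : Continuous fun w : ↥(KR n) => toE n (Phi w.1) :=
    ((EuclideanSpace.equiv (Fin n) ℝ).symm.continuous).comp hc1
  have hnorm : Continuous fun w : ↥(KR n) => ‖toE n (Phi w.1)‖ := hc3.norm
  have hc4 : Continuous fun w : ↥(KR n) => ‖toE n (Phi w.1)‖⁻¹ • toE n (Phi w.1) :=
    (hnorm.inv₀ fun w => norm_toE_ne_zero n w.2).smul hc3
  exact hc4.subtype_mk _

noncomputable def sphereHomeo :
    ↥(KR n) ≃ₜ ↥(Metric.sphere (0 : EuclideanSpace ℝ (Fin n)) 1) := by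
  have : CompactSpace ↥(KR n) := isCompact_iff_compactSpace.mp (isCompact_KR n)
  exact Continuous.homeoOfEquivCompactToT2
    (f := Equiv.ofBijective (Fmap n) ⟨Fmap_injective n, Fmap_surjective n⟩)
    (Fmap_continuous n)

end homeo

end KBn

/-- `K_{B_n}`, the order complex of the admissible subsets of `[±n]` ordered by
inclusion, is a simplicial sphere of dimension `n - 1`: every maximal face
(maximal chain) has exactly `n` elements, and the geometric realization is
homeomorphic to the sphere `S^{n-1}`. -/
theorem KBn_simplicial_sphere (n : ℕ) (hn : 1 ≤ n) :
    (∀ σ : Finset (Adm n), IsChain (· ≤ ·) (σ : Set (Adm n)) →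
      (∀ τ : Finset (Adm n), IsChain (· ≤ ·) (τ : Set (Adm n)) → σ ⊆ τ → σ = τ) →
      σ.card = n) ∧
    Nonempty (↥(realization (chainComplex (n := n) fun _ => True)) ≃ₜ
      ↥(Metric.sphere (0 : EuclideanSpace ℝ (Fin n)) 1)) := by
  constructor
  · intro σ hσ hmax
    exact KBn.part1 n hn σ hσ hmax
  · exact ⟨KBn.sphereHomeo n⟩
end

section
/- If a pure simplicial complex K has a shelling F_1, ..., F_t, and K' is the complex whose facets are the sets F'_m obtained by deleting from each F_m all vertices in a fixed set E (assuming each F'_m is nonempty and all F'_m have equal cardinality), then the ordering of the distinct sets F'_m by first appearance is a shelling of K'. In particular, K_{B_n}^{odd} is shellable. -/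
open scoped Classical

/-- The Björner–Wachs shelling criterion for an ordering of facets:
for all `i < k` there is `j < k` with `F i ∩ F k ⊆ F j ∩ F k` and
`|F j ∩ F k| = |F k| - 1`. -/
def IsShellingOrder {V : Type*} [DecidableEq V] {t : ℕ} (F : Fin t → Finset V) : Prop :=
  ∀ i k : Fin t, i < k → ∃ j, j < k ∧
    F i ∩ F k ⊆ F j ∩ F k ∧ (F j ∩ F k).card = (F k).card - 1


theorem aux_deleted {V : Type*} [DecidableEq V] {t s : ℕ}
    (F : Fin t → Finset V) (E : Finset V)
    (hshell : IsShellingOrder F)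
    (hne : ∀ m, (F m \ E).Nonempty)
    (hfacet : ∀ m l : Fin t, F m \ E ⊆ F l \ E → F m \ E = F l \ E)
    (G : Fin s → Finset V)
    (hrange : ∀ j : Fin t, ∃ m : Fin s, G m = F j \ E)
    (d : Fin s → Fin t) (hdmono : StrictMono d)
    (hG : ∀ m, G m = F (d m) \ E)
    (hleast : ∀ (m : Fin s) (j : Fin t), F j \ E = G m → d m ≤ j) :
    IsShellingOrder G := by
  intro i k hik
  set a := d i with ha
  set b := d k with hb
  obtain ⟨j0, hj0b, hsub, hcardj⟩ := hshell a b (hdmono hik)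
  have hFbne : (F b).Nonempty := by
    obtain ⟨x, hx⟩ := hne b
    exact ⟨x, (Finset.mem_sdiff.1 hx).1⟩
  have hinter : F j0 ∩ F b ⊆ F b := Finset.inter_subset_right
  have hDcard : (F b \ (F j0 ∩ F b)).card = 1 := by
    rw [Finset.card_sdiff_of_subset hinter, hcardj]
    have : 1 ≤ (F b).card := Finset.card_pos.2 hFbne
    omega
  obtain ⟨x, hx⟩ := Finset.card_eq_one.1 hDcard
  have hxb : x ∈ F b := by
    have : x ∈ F b \ (F j0 ∩ F b) := by rw [hx]; exact Finset.mem_singleton_self x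
    exact (Finset.mem_sdiff.1 this).1
  have hj0eq : F j0 ∩ F b = F b \ {x} := by
    rw [← hx, Finset.sdiff_sdiff_eq_self hinter]
  have hxE : x ∉ E := by
    intro hxE
    have hsub2 : F b \ E ⊆ F j0 \ E := by
      intro y hy
      rcases Finset.mem_sdiff.1 hy with ⟨hy1, hy2⟩
      refine Finset.mem_sdiff.2 ⟨?_, hy2⟩
      have : y ∈ F b \ {x} := Finset.mem_sdiff.2 ⟨hy1, by
        simp only [Finset.mem_singleton]
        rintro rfl; exact hy2 hxE⟩
      rw [← hj0eq] at this
      exact (Finset.mem_inter.1 this).1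
    have heq := hfacet b j0 hsub2
    have := hleast k j0 (by rw [← heq, ← hG k])
    exact absurd hj0b (not_lt.2 this)
  obtain ⟨m, hm⟩ := hrange j0
  have hmk : m < k := by
    have h1 : d m ≤ j0 := hleast m j0 hm.symm
    have : d m < d k := lt_of_le_of_lt h1 hj0b
    exact hdmono.lt_iff_lt.1 this
  refine ⟨m, hmk, ?_, ?_⟩
  · rw [hG i, hG k, hm]
    intro y hy
    rcases Finset.mem_inter.1 hy with ⟨hy1, hy2⟩
    rcases Finset.mem_sdiff.1 hy1 with ⟨hy1', hyE⟩
    rcases Finset.mem_sdiff.1 hy2 with ⟨hy2', _⟩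
    have : y ∈ F j0 ∩ F b := hsub (Finset.mem_inter.2 ⟨hy1', hy2'⟩)
    exact Finset.mem_inter.2 ⟨Finset.mem_sdiff.2 ⟨(Finset.mem_inter.1 this).1, hyE⟩, hy2⟩
  · rw [hG k, hm]
    have hGeq : (F j0 \ E) ∩ (F b \ E) = (F b \ E).erase x := by
      ext y
      simp only [Finset.mem_inter, Finset.mem_sdiff, Finset.mem_erase]
      constructor
      · rintro ⟨⟨hy1, hyE⟩, hy2, -⟩
        have : y ∈ F b \ {x} := by rw [← hj0eq]; exact Finset.mem_inter.2 ⟨hy1, hy2⟩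
        rcases Finset.mem_sdiff.1 this with ⟨-, hyx⟩
        exact ⟨by simpa using hyx, hy2, hyE⟩
      · rintro ⟨hyx, hyb, hyE⟩
        have : y ∈ F j0 ∩ F b := by
          rw [hj0eq]; exact Finset.mem_sdiff.2 ⟨hyb, by simpa using hyx⟩
        exact ⟨⟨(Finset.mem_inter.1 this).1, hyE⟩, hyb, hyE⟩
    rw [hGeq, Finset.card_erase_of_mem (Finset.mem_sdiff.2 ⟨hxb, hxE⟩)]

namespace OddShelling

variable {n : ℕ}

abbrev Word (n : ℕ) := Equiv.Perm (Fin n) × (Fin n → Bool)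

/-- lex key of the letter at position `j` -/
def key (w : Word n) (j : Fin n) : ℕ :=
  (w.1 j : ℕ) + (if w.2 (w.1 j) then n else 0)

theorem key_decode {w w' : Word n} {j j' : Fin n} (h : key w j = key w' j') :
    w.1 j = w'.1 j' ∧ w.2 (w.1 j) = w'.2 (w'.1 j') := by
  unfold key at h
  have h1 : (w.1 j : ℕ) < n := (w.1 j).2
  have h2 : (w'.1 j' : ℕ) < n := (w'.1 j').2
  rcases hb : w.2 (w.1 j) <;> rcases hb' : w'.2 (w'.1 j') <;>
    rw [hb, hb'] at h <;> simp at h <;>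
    first
      | (exact ⟨Fin.ext (by omega), rfl⟩)
      | omega

/-- the `j+1`-st element of the maximal chain associated to a word -/
def pre (w : Word n) (j : Fin n) : Adm n :=
  ⟨fun i => if (w.1.symm i : ℕ) ≤ (j : ℕ) then some (w.2 i) else none, by
    intro h
    have := congrFun h (w.1 j)
    simp at this⟩

theorem pre_apply (w : Word n) (j : Fin n) (i : Fin n) :
    (pre w j).1 i = if (w.1.symm i : ℕ) ≤ (j : ℕ) then some (w.2 i) else none := rfl

theorem size_pre (w : Word n) (j : Fin n) : (pre w j).size = (j : ℕ) + 1 := by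
  unfold Adm.size
  have h1 : (Finset.univ.filter fun i => (pre w j).1 i ≠ none)
      = Finset.univ.filter fun i => ((w.1.symm i : ℕ) ≤ (j : ℕ)) := by
    apply Finset.filter_congr
    intro i _
    rw [pre_apply]
    by_cases h : (w.1.symm i : ℕ) ≤ (j : ℕ) <;> simp [h]
  have h2 : (Finset.univ.filter fun i => ((w.1.symm i : ℕ) ≤ (j : ℕ)))
      = Finset.image w.1 (Finset.Iic j) := by
    ext i
    simp only [Finset.mem_filter, Finset.mem_univ, true_and, Finset.mem_image, Finset.mem_Iic]
    constructor
    · intro h; exact ⟨w.1.symm i, h, Equiv.apply_symm_apply _ _⟩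
    · rintro ⟨m, hm, rfl⟩; rwa [Equiv.symm_apply_apply]
  rw [h1, h2, Finset.card_image_of_injective _ w.1.injective, Fin.card_Iic]

theorem pre_mono (w : Word n) {j j' : Fin n} (h : j ≤ j') : pre w j ≤ pre w j' := by
  intro i b hb
  rw [pre_apply] at hb ⊢
  split at hb
  · rename_i hc
    rw [if_pos (le_trans hc (Fin.le_def.1 h))]
    exact hb
  · exact absurd hb (by simp)

theorem pre_eq_idx {w w' : Word n} {j j' : Fin n} (h : pre w j = pre w' j') : j = j' := by
  have := size_pre w j
  rw [h, size_pre] at this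
  exact Fin.ext (by omega)

theorem pre_injective (w : Word n) : Function.Injective (pre w) :=
  fun _ _ h => pre_eq_idx h

noncomputable def chain (w : Word n) : Finset (Adm n) :=
  Finset.image (pre w) Finset.univ

theorem mem_chain {w : Word n} {x : Adm n} : x ∈ chain w ↔ ∃ j, pre w j = x := by
  simp [chain]

theorem card_chain (w : Word n) : (chain w).card = n := by
  rw [chain, Finset.card_image_of_injective _ (pre_injective w), Finset.card_univ,
    Fintype.card_fin]

theorem chain_isChain (w : Word n) : IsChain (· ≤ ·) ((chain w : Finset (Adm n)) : Set (Adm n)) := by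
  rintro x hx y hy -
  rw [Finset.mem_coe, mem_chain] at hx hy
  obtain ⟨j, rfl⟩ := hx
  obtain ⟨j', rfl⟩ := hy
  rcases le_total j j' with h | h
  · exact Or.inl (pre_mono w h)
  · exact Or.inr (pre_mono w h)

def keylt (w w' : Word n) : Prop :=
  ∃ p : Fin n, (∀ q, q < p → key w q = key w' q) ∧ key w p < key w' p

theorem mono_of_nodesc {w' : Word n} {p b : Fin n}
    (h : ∀ q q' : Fin n, p ≤ q → (q' : ℕ) = (q : ℕ) + 1 → q' ≤ b → key w' q ≤ key w' q') :
    ∀ q1 q2 : Fin n, p ≤ q1 → q1 ≤ q2 → q2 ≤ b → key w' q1 ≤ key w' q2 := by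
  intro q1 q2 hp h12 h2b
  obtain ⟨k, hk⟩ : ∃ k, (q2 : ℕ) = (q1 : ℕ) + k := ⟨(q2 : ℕ) - (q1 : ℕ), by
    have := Fin.le_def.1 h12; omega⟩
  induction k generalizing q2 with
  | zero => have : q1 = q2 := Fin.ext (by omega); rw [this]
  | succ k ih =>
      have hq2 : (q2 : ℕ) < n := q2.2
      have hlt : (q1 : ℕ) + k < n := by omega
      set qm : Fin n := ⟨(q1 : ℕ) + k, hlt⟩ with hqm
      have hb : qm ≤ b := le_trans (Fin.le_def.2 (by simp [hqm]; omega)) h2b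
      have h1 : key w' q1 ≤ key w' qm :=
        ih qm (Fin.le_def.2 (by simp [hqm])) hb (by simp [hqm])
      have h2 : key w' qm ≤ key w' q2 :=
        h qm q2 (le_trans hp (Fin.le_def.2 (by simp [hqm]))) (by simp [hqm]; omega) h2b
      exact le_trans h1 h2

theorem key_ge_coord (w : Word n) (j : Fin n) : (w.1 j : ℕ) ≤ key w j := by
  unfold key; split <;> omega

theorem no_agree {w w' : Word n} {p b : Fin n}
    (hlow : ∀ q, q < p → key w q = key w' q) (hlt : key w p < key w' p)
    (hpb : p ≤ b) (hpre : pre w b = pre w' b)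
    (hmono : ∀ q1 q2 : Fin n, p ≤ q1 → q1 ≤ q2 → q2 ≤ b → key w' q1 ≤ key w' q2) :
    False := by
  set i := w.1 p with hi
  have h1 : (pre w b).1 i = some (w.2 i) := by
    rw [pre_apply, if_pos]
    rw [hi, Equiv.symm_apply_apply]
    exact Fin.le_def.1 hpb
  rw [hpre, pre_apply] at h1
  by_cases hc : (w'.1.symm i : ℕ) ≤ (b : ℕ)
  swap
  · rw [if_neg hc] at h1; exact absurd h1 (by simp)
  rw [if_pos hc] at h1
  have hsgn : w'.2 i = w.2 i := Option.some.inj h1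
  set q := w'.1.symm i with hqdef
  have hq : w'.1 q = i := Equiv.apply_symm_apply _ _
  have hqp : ¬ q < p := by
    intro hqp
    have hdec := key_decode (hlow q hqp)
    have : w.1 q = w.1 p := by rw [hdec.1, hq, hi]
    exact absurd (w.1.injective this) (ne_of_lt hqp)
  have hpq : p ≤ q := not_lt.1 hqp
  have hkey : key w' q = key w p := by
    unfold key; rw [hq, hsgn, hi]
  have := hmono p q le_rfl hpq (Fin.le_def.2 hc)
  omega

theorem main_step {w w' : Word n} (h : keylt w w') :
    ∃ (w'' : Word n) (j0 : Fin n), keylt w'' w' ∧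
      (∀ j, j ≠ j0 → pre w'' j = pre w' j) ∧ pre w'' j0 ≠ pre w' j0 ∧
      pre w j0 ≠ pre w' j0 := by
  obtain ⟨p, hlow, hlt⟩ := h
  set KK : ℕ → ℕ := fun m => if h : m < n then key w' ⟨m, h⟩ else 0 with hKK
  have hKKval : ∀ (m : ℕ) (hm : m < n), KK m = key w' ⟨m, hm⟩ := by
    intro m hm; simp [hKK, hm]
  by_cases hd : ∃ m : ℕ, (p : ℕ) ≤ m ∧ m + 1 < n ∧ KK (m + 1) < KK m
  · -- swap at the minimal descent
    classical
    obtain ⟨hpj, hj1, hjd⟩ := Nat.find_spec hd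
    set jn := Nat.find hd with hjndef
    have hjn : jn < n := by omega
    set jf : Fin n := ⟨jn, hjn⟩ with hjf
    set js : Fin n := ⟨jn + 1, hj1⟩ with hjs
    have hfs : jf ≠ js := by simp [hjf, hjs, Fin.ext_iff]
    set w'' : Word n := ((Equiv.swap jf js).trans w'.1, w'.2) with hw''
    have happ : ∀ m, w''.1 m = w'.1 (Equiv.swap jf js m) := fun m => rfl
    have hkey'' : ∀ m, key w'' m = key w' (Equiv.swap jf js m) := fun m => rfl
    have hjd' : key w' js < key w' jf := by
      rw [← hKKval jn hjn, ← hKKval (jn+1) hj1]; exact hjd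
    have hkeyfix : ∀ m, m ≠ jf → m ≠ js → key w'' m = key w' m := by
      intro m h1 h2; rw [hkey'', Equiv.swap_apply_of_ne_of_ne h1 h2]
    refine ⟨w'', jf, ⟨jf, ?_, ?_⟩, ?_, ?_, ?_⟩
    · intro q hq
      refine hkeyfix q (ne_of_lt hq) ?_
      intro hqe
      rw [hqe] at hq
      have hcon : (jn + 1 : ℕ) < jn := Fin.lt_def.1 hq
      omega
    · rw [hkey'', Equiv.swap_apply_left]; exact hjd'
    · -- pre w'' j = pre w' j for j ≠ jf
      intro m hm
      apply Subtype.ext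
      funext i
      rw [pre_apply, pre_apply]
      have hsymm : w''.1.symm i = Equiv.swap jf js (w'.1.symm i) := by
        rw [hw'']
        simp [Equiv.symm_trans_apply, Equiv.symm_swap]
      rw [hsymm]
      set q := w'.1.symm i
      have hcond : ((Equiv.swap jf js q : Fin n) : ℕ) ≤ (m : ℕ) ↔ (q : ℕ) ≤ (m : ℕ) := by
        have hmval : (m : ℕ) ≠ jn := fun hc => hm (Fin.ext hc)
        rcases eq_or_ne q jf with hq1 | hq1
        · rw [hq1, Equiv.swap_apply_left]
          show (jn + 1 : ℕ) ≤ (m : ℕ) ↔ (jn : ℕ) ≤ (m : ℕ)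
          omega
        rcases eq_or_ne q js with hq2 | hq2
        · rw [hq2, Equiv.swap_apply_right]
          show (jn : ℕ) ≤ (m : ℕ) ↔ (jn + 1 : ℕ) ≤ (m : ℕ)
          omega
        · rw [Equiv.swap_apply_of_ne_of_ne hq1 hq2]
      by_cases hc : (q : ℕ) ≤ (m : ℕ)
      · rw [if_pos hc, if_pos (hcond.2 hc)]
      · rw [if_neg hc, if_neg (fun hcc => hc (hcond.1 hcc))]
    · -- pre w'' jf ≠ pre w' jf
      intro heq
      have := congrFun (congrArg Subtype.val heq) (w'.1 js)
      rw [pre_apply, pre_apply] at this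
      have hs1 : w''.1.symm (w'.1 js) = jf := by
        rw [hw'']
        simp [Equiv.symm_trans_apply, Equiv.symm_swap, Equiv.swap_apply_right]
      have hs2 : w'.1.symm (w'.1 js) = js := Equiv.symm_apply_apply _ _
      rw [hs1, hs2, if_pos le_rfl, if_neg (show ¬ ((jn + 1 : ℕ) ≤ jn) by omega)] at this
      exact absurd this (by simp)
    · -- pre w jf ≠ pre w' jf
      intro hpre
      have hppjf : p ≤ jf := Fin.le_def.2 hpj
      refine no_agree hlow hlt hppjf hpre ?_
      refine mono_of_nodesc ?_
      intro q q' hpq hq' hq'b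
      have hq'n : (q : ℕ) + 1 < n := by rw [← hq']; exact q'.2
      have hqlt : (q : ℕ) < jn := by
        have h := Fin.le_def.1 hq'b
        rw [hq'] at h
        have h2 : (q : ℕ) + 1 ≤ jn := h
        omega
      have hnd := Nat.find_min hd hqlt
      push_neg at hnd
      have := hnd (Fin.le_def.1 hpq) hq'n
      rw [hKKval (q : ℕ) q.2, hKKval ((q : ℕ) + 1) hq'n] at this
      have hfin : (⟨(q : ℕ), q.2⟩ : Fin n) = q := rfl
      have hfin2 : (⟨(q : ℕ) + 1, hq'n⟩ : Fin n) = q' := Fin.ext hq'.symm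
      rw [hfin, hfin2] at this
      exact this
  · -- no descent: flip the sign of the last letter
    push_neg at hd
    have hn0 : 0 < n := p.pos
    set last : Fin n := ⟨n - 1, by omega⟩ with hlast
    have hplast : p ≤ last := Fin.le_def.2 (by simp [hlast]; omega)
    have halllast : ∀ m : Fin n, m ≤ last := fun m => Fin.le_def.2 (by simp [hlast]; omega)
    have hmono_all : ∀ q1 q2 : Fin n, p ≤ q1 → q1 ≤ q2 → q2 ≤ last → key w' q1 ≤ key w' q2 := by
      refine mono_of_nodesc ?_
      intro q q' hpq hq' _
      have hq'n : (q : ℕ) + 1 < n := by rw [← hq']; exact q'.2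
      have := hd (q : ℕ) (Fin.le_def.1 hpq) hq'n
      rw [hKKval (q : ℕ) q.2, hKKval ((q : ℕ) + 1) hq'n] at this
      have hfin : (⟨(q : ℕ), q.2⟩ : Fin n) = q := rfl
      have hfin2 : (⟨(q : ℕ) + 1, hq'n⟩ : Fin n) = q' := Fin.ext hq'.symm
      rw [hfin, hfin2] at this
      exact this
    set i₀ := w'.1 last with hi₀
    have hsign : w'.2 i₀ = true := by
      by_contra hsg
      have hsg' : w'.2 i₀ = false := by
        rcases hb : w'.2 i₀
        · rfl
        · exact absurd hb hsg
      have hklast : key w' last = (i₀ : ℕ) := by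
        unfold key; rw [← hi₀, hsg']; simp
      set i := w.1 p with hi
      set q := w'.1.symm i with hqdef
      have hq : w'.1 q = i := Equiv.apply_symm_apply _ _
      have hqp : ¬ q < p := by
        intro hqp
        have hdec := key_decode (hlow q hqp)
        have : w.1 q = w.1 p := by rw [hdec.1, hq, hi]
        exact absurd (w.1.injective this) (ne_of_lt hqp)
      have hpq : p ≤ q := not_lt.1 hqp
      have h1 : key w' q ≤ key w' last := hmono_all q last hpq (halllast q) le_rfl
      have h2 : key w' q = (i : ℕ) + (if w'.2 i then n else 0) := by
        unfold key; rw [hq]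
      have h3 : w'.2 i = false := by
        rcases hb : w'.2 i
        · rfl
        · rw [hb] at h2
          simp only [if_true] at h2
          have : (i₀ : ℕ) < n := i₀.2
          omega
      have h4 : key w' q = (i : ℕ) := by rw [h2, h3]; simp
      have h5 : key w' p ≤ key w' q := hmono_all p q le_rfl hpq (halllast q)
      have h6 := key_ge_coord w p
      rw [← hi] at h6
      have hle : key w' p ≤ (i : ℕ) := by rw [← h4]; exact h5
      omega
    set w'' : Word n := (w'.1, Function.update w'.2 i₀ false) with hw''
    have hfst : w''.1 = w'.1 := rfl
    have hsnd : w''.2 = Function.update w'.2 i₀ false := rfl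
    have hs : w'.1.symm i₀ = last := by rw [hi₀, Equiv.symm_apply_apply]
    have hkeyfix : ∀ m, m ≠ last → key w'' m = key w' m := by
      intro m hm
      have hne : w'.1 m ≠ i₀ := by
        rw [hi₀]; exact fun hc => hm (w'.1.injective hc)
      show (w'.1 m : ℕ) + (if Function.update w'.2 i₀ false (w'.1 m) then n else 0)
          = (w'.1 m : ℕ) + (if w'.2 (w'.1 m) then n else 0)
      rw [Function.update_of_ne hne]
    have hklt : key w'' last < key w' last := by
      show (w'.1 last : ℕ) + (if Function.update w'.2 i₀ false (w'.1 last) then n else 0)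
          < (w'.1 last : ℕ) + (if w'.2 (w'.1 last) then n else 0)
      rw [← hi₀, Function.update_self, hsign,
        if_neg (Bool.false_ne_true), if_pos rfl]
      omega
    refine ⟨w'', last, ⟨last, fun q hq => hkeyfix q (ne_of_lt hq), hklt⟩, ?_, ?_, ?_⟩
    · intro m hm
      apply Subtype.ext
      funext i
      rw [pre_apply, pre_apply, hfst, hsnd]
      rcases eq_or_ne i i₀ with rfl | hii
      · rw [hs]
        have hcond : ¬ ((last : ℕ) ≤ (m : ℕ)) := by
          intro hc
          have hm2 : (m : ℕ) < n := m.2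
          have hc2 : (n - 1 : ℕ) ≤ (m : ℕ) := hc
          exact hm (Fin.ext (by simp [hlast]; omega))
        rw [if_neg hcond, if_neg hcond]
      · rw [Function.update_of_ne hii]
    · intro heq
      have hcf := congrFun (congrArg Subtype.val heq) i₀
      rw [pre_apply, pre_apply, hfst, hsnd, hs, if_pos (le_refl _), if_pos (le_refl _),
        Function.update_self, hsign] at hcf
      simp at hcf
    · intro hpre
      exact no_agree hlow hlt hplast hpre
        (fun q1 q2 h1 h2 _ => hmono_all q1 q2 h1 h2 (halllast q2))

theorem key_inj : Function.Injective (fun w : Word n => toLex (key w)) := by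
  intro w w' h
  have hk : key w = key w' := toLex.injective h
  have hπ : w.1 = w'.1 := by
    apply Equiv.ext
    intro j
    exact (key_decode (congrFun hk j)).1
  have hε : w.2 = w'.2 := by
    funext i
    have hd := key_decode (congrFun hk (w.1.symm i))
    rw [Equiv.apply_symm_apply] at hd
    rw [← hπ] at hd
    rw [Equiv.apply_symm_apply] at hd
    exact hd.2
  exact Prod.ext hπ hε

theorem exists_enum (n : ℕ) : ∃ (t : ℕ) (Fw : Fin t → Word n),
    Function.Surjective Fw ∧ (∀ i k : Fin t, i < k → keylt (Fw i) (Fw k)) ∧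
    (∀ i k : Fin t, keylt (Fw i) (Fw k) → i < k) := by
  letI hLO : LinearOrder (Lex (Fin n → ℕ)) :=
    @Pi.Lex.linearOrder (Fin n) (fun _ => ℕ) inferInstance
      (inferInstanceAs (WellFoundedLT (Fin n))) inferInstance
  letI : LinearOrder (Word n) :=
    LinearOrder.lift' (fun w : Word n => toLex (key w)) (key_inj (n := n))
  have hlt : ∀ w w' : Word n, w < w' ↔ keylt w w' := by
    intro w w'
    constructor
    · intro h
      exact h
    · intro h
      exact h
  set t := (Finset.univ : Finset (Word n)).card with ht
  set e := (Finset.univ : Finset (Word n)).orderIsoOfFin rfl with he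
  refine ⟨t, fun m => (e m : Word n), ?_, ?_, ?_⟩
  · intro w
    exact ⟨e.symm ⟨w, Finset.mem_univ w⟩, congrArg Subtype.val (e.apply_symm_apply _)⟩
  · intro i k hik
    exact (hlt _ _).1 (Subtype.coe_lt_coe.2 (e.strictMono hik))
  · intro i k hik
    have : (e i : Word n) < e k := (hlt _ _).2 hik
    exact e.lt_iff_lt.1 (Subtype.coe_lt_coe.1 this)

theorem shelling_chains (n : ℕ) : ∃ (t : ℕ) (F : Fin t → Finset (Adm n)),
    (∀ j, ∃ w : Word n, F j = chain w) ∧ (∀ w : Word n, ∃ j, F j = chain w) ∧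
    IsShellingOrder F := by
  obtain ⟨t, Fw, hsurj, hmono, hrefl⟩ := exists_enum n
  refine ⟨t, fun m => chain (Fw m), fun j => ⟨Fw j, rfl⟩,
    fun w => (hsurj w).imp (fun j hj => by show chain (Fw j) = chain w; rw [hj]), ?_⟩
  intro i k hik
  obtain ⟨w'', j0, hkeylt, hfix, hne'', hnew⟩ := main_step (hmono i k hik)
  obtain ⟨m, hm⟩ := hsurj w''
  have hmk : m < k := hrefl m k (by rw [hm]; exact hkeylt)
  refine ⟨m, hmk, ?_, ?_⟩
  · show chain (Fw i) ∩ chain (Fw k) ⊆ chain (Fw m) ∩ chain (Fw k)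
    intro x hx
    rcases Finset.mem_inter.1 hx with ⟨hx1, hx2⟩
    obtain ⟨j, hj⟩ := mem_chain.1 hx1
    obtain ⟨j', hj'⟩ := mem_chain.1 hx2
    have hjj : j = j' := pre_eq_idx (hj.trans hj'.symm)
    subst hjj
    have hjne : j ≠ j0 := by
      rintro rfl
      exact hnew (hj.trans hj'.symm)
    refine Finset.mem_inter.2 ⟨?_, hx2⟩
    rw [hm]
    exact mem_chain.2 ⟨j, by rw [hfix j hjne, hj']⟩
  · show (chain (Fw m) ∩ chain (Fw k)).card = (chain (Fw k)).card - 1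
    rw [hm]
    have hinter : chain w'' ∩ chain (Fw k) = (chain (Fw k)).erase (pre (Fw k) j0) := by
      ext x
      constructor
      · intro hx
        rcases Finset.mem_inter.1 hx with ⟨hx1, hx2⟩
        obtain ⟨j, hj⟩ := mem_chain.1 hx1
        obtain ⟨j', hj'⟩ := mem_chain.1 hx2
        have hjj : j = j' := pre_eq_idx (hj.trans hj'.symm)
        subst hjj
        have hjne : j ≠ j0 := by
          rintro rfl
          exact hne'' (hj.trans hj'.symm)
        refine Finset.mem_erase.2 ⟨?_, hx2⟩
        intro hc
        exact hjne (pre_eq_idx (hj'.trans hc))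
      · intro hx
        rcases Finset.mem_erase.1 hx with ⟨hxne, hx2⟩
        obtain ⟨j, hj⟩ := mem_chain.1 hx2
        have hjne : j ≠ j0 := by
          rintro rfl
          exact hxne hj.symm
        refine Finset.mem_inter.2 ⟨mem_chain.2 ⟨j, by rw [hfix j hjne, hj]⟩, hx2⟩
    rw [hinter, Finset.card_erase_of_mem (mem_chain.2 ⟨j0, rfl⟩)]

theorem dedup_exists {V : Type*} [DecidableEq V] {t : ℕ} (F : Fin t → Finset V) (E : Finset V) :
    ∃ (s : ℕ) (G : Fin s → Finset V) (d : Fin s → Fin t),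
      Function.Injective G ∧ StrictMono d ∧ (∀ m, G m = F (d m) \ E) ∧
      (∀ m j, F j \ E = G m → d m ≤ j) ∧ (∀ j, ∃ m, G m = F j \ E) := by
  classical
  set S := Finset.univ.filter (fun m : Fin t => ∀ l, l < m → F l \ E ≠ F m \ E) with hS
  set e := S.orderIsoOfFin rfl with he
  set d : Fin S.card → Fin t := fun m => (e m : Fin t) with hd
  have hdmono : StrictMono d := fun a b hab => Subtype.coe_lt_coe.2 (e.strictMono hab)
  have hdS : ∀ m, d m ∈ S := fun m => (e m).2
  have hSprop : ∀ m ∈ S, ∀ l, l < m → F l \ E ≠ F m \ E := by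
    intro m hm
    exact (Finset.mem_filter.1 hm).2
  have hmin : ∀ j : Fin t, ∃ j' : Fin t, j' ∈ S ∧ F j' \ E = F j \ E ∧ j' ≤ j := by
    intro j
    set T := Finset.univ.filter (fun l : Fin t => F l \ E = F j \ E) with hT
    have hjT : j ∈ T := Finset.mem_filter.2 ⟨Finset.mem_univ j, rfl⟩
    set j' := T.min' ⟨j, hjT⟩ with hj'
    have hj'T : j' ∈ T := T.min'_mem _
    have hj'eq : F j' \ E = F j \ E := (Finset.mem_filter.1 hj'T).2
    refine ⟨j', ?_, hj'eq, T.min'_le j hjT⟩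
    refine Finset.mem_filter.2 ⟨Finset.mem_univ j', ?_⟩
    intro l hl hle
    have hlT : l ∈ T := Finset.mem_filter.2 ⟨Finset.mem_univ l, hle.trans hj'eq⟩
    exact absurd (T.min'_le l hlT) (not_le.2 hl)
  have hSuniq : ∀ a b : Fin t, a ∈ S → b ∈ S → F a \ E = F b \ E → a = b := by
    intro a b ha hb hab
    rcases lt_trichotomy a b with h | h | h
    · exact absurd hab (hSprop b hb a h)
    · exact h
    · exact absurd hab.symm (hSprop a ha b h)
  refine ⟨S.card, fun m => F (d m) \ E, d, ?_, hdmono, fun m => rfl, ?_, ?_⟩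
  · intro a b hab
    have : d a = d b := hSuniq _ _ (hdS a) (hdS b) hab
    exact hdmono.injective this
  · intro m j hj
    obtain ⟨j', hj'S, hj'eq, hj'le⟩ := hmin j
    have : d m = j' := hSuniq _ _ (hdS m) hj'S (hj'eq.symm ▸ hj.symm ▸ rfl)
    rw [this]
    exact hj'le
  · intro j
    obtain ⟨j', hj'S, hj'eq, _⟩ := hmin j
    refine ⟨e.symm ⟨j', hj'S⟩, ?_⟩
    have hde : d (e.symm ⟨j', hj'S⟩) = j' := by
      simp [hd]
    show F (d (e.symm ⟨j', hj'S⟩)) \ E = F j \ E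
    rw [hde, hj'eq]

theorem Adm.one_le_size {n : ℕ} (x : Adm n) : 1 ≤ x.size := by
  have hex : ∃ i, x.1 i ≠ none := by
    by_contra h
    push_neg at h
    exact x.2 (funext fun i => h i)
  obtain ⟨i, hi⟩ := hex
  exact Finset.card_pos.2 ⟨i, Finset.mem_filter.2 ⟨Finset.mem_univ i, hi⟩⟩

theorem Adm.size_le {n : ℕ} (x : Adm n) : x.size ≤ n := by
  refine le_trans (Finset.card_filter_le _ _) ?_
  simp

theorem Adm.eq_of_le_size {n : ℕ} {x y : Adm n} (hxy : x ≤ y) (hs : y.size ≤ x.size) :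
    x = y := by
  have hsub : (Finset.univ.filter fun i => x.1 i ≠ none)
      ⊆ (Finset.univ.filter fun i => y.1 i ≠ none) := by
    intro i hi
    rcases hx : x.1 i with _ | b
    · exact absurd hx (Finset.mem_filter.1 hi).2
    · exact Finset.mem_filter.2 ⟨Finset.mem_univ i, by rw [hxy i b hx]; simp⟩
  have hfeq := Finset.eq_of_subset_of_card_le hsub hs
  apply Subtype.ext
  funext i
  rcases hx : x.1 i with _ | b
  · rcases hy : y.1 i with _ | b
    · rfl
    · exfalso
      have hiy : i ∈ (Finset.univ.filter fun i => y.1 i ≠ none) :=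
        Finset.mem_filter.2 ⟨Finset.mem_univ i, by rw [hy]; simp⟩
      rw [← hfeq] at hiy
      exact (Finset.mem_filter.1 hiy).2 hx
  · exact (hxy i b hx).symm

theorem oddchain_card_le {n : ℕ} (τ : Finset (Adm n)) (hodd : ∀ I ∈ τ, Odd I.size)
    (hch : IsChain (· ≤ ·) (τ : Set (Adm n))) : τ.card ≤ (n + 1) / 2 := by
  classical
  have hmaps : ∀ x ∈ τ, (x.size - 1) / 2 ∈ Finset.range ((n + 1) / 2) := by
    intro x hx
    rw [Finset.mem_range]
    have h2 := Adm.size_le x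
    obtain ⟨a, ha⟩ := hodd x hx
    omega
  have hinj : Set.InjOn (fun x : Adm n => (x.size - 1) / 2) τ := by
    intro x hx y hy hxy
    obtain ⟨a, ha⟩ := hodd x hx
    obtain ⟨b, hb⟩ := hodd y hy
    simp only at hxy
    have hsz : x.size = y.size := by omega
    rcases eq_or_ne x y with h | hne
    · exact h
    rcases hch hx hy hne with h | h
    · exact Adm.eq_of_le_size h (le_of_eq hsz.symm)
    · exact (Adm.eq_of_le_size h (le_of_eq hsz)).symm
  calc τ.card ≤ (Finset.range ((n + 1) / 2)).card :=
        Finset.card_le_card_of_injOn _ hmaps hinj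
    _ = (n + 1) / 2 := Finset.card_range _

theorem chain_sdiff_eq {n : ℕ} (w : Word n) :
    chain w \ (Finset.univ.filter fun x : Adm n => ¬ Odd x.size)
      = Finset.image (fun k : Fin ((n + 1) / 2) => pre w ⟨2 * k, by omega⟩)
          Finset.univ := by
  ext x
  simp only [Finset.mem_sdiff, Finset.mem_filter, Finset.mem_univ, true_and, not_not,
    Finset.mem_image]
  constructor
  · rintro ⟨hx, hoddx⟩
    obtain ⟨j, rfl⟩ := mem_chain.1 hx
    rw [size_pre] at hoddx
    obtain ⟨a, ha⟩ := hoddx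
    have hj2 : (j : ℕ) = 2 * a := by omega
    have hak : a < (n + 1) / 2 := by
      have := j.2
      omega
    exact ⟨⟨a, hak⟩, congrArg (pre w) (Fin.ext (by simp [hj2]))⟩
  · rintro ⟨k, rfl⟩
    refine ⟨mem_chain.2 ⟨_, rfl⟩, ?_⟩
    rw [size_pre]
    exact ⟨k, by simp⟩

theorem card_chain_sdiff {n : ℕ} (w : Word n) :
    (chain w \ (Finset.univ.filter fun x : Adm n => ¬ Odd x.size)).card = (n + 1) / 2 := by
  rw [chain_sdiff_eq]
  rw [Finset.card_image_of_injective _ ?_, Finset.card_univ, Fintype.card_fin]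
  intro a b hab
  have := pre_eq_idx hab
  have h2 : 2 * (a : ℕ) = 2 * (b : ℕ) := by
    have := Fin.ext_iff.1 this
    simpa using this
  exact Fin.ext (by omega)

theorem exists_chain_superset {n : ℕ} (σ : Finset (Adm n)) (hne : σ.Nonempty)
    (hch : IsChain (· ≤ ·) (σ : Set (Adm n))) : ∃ w : Word n, σ ⊆ chain w := by
  classical
  obtain ⟨g, hgσ, hgmax'⟩ := Finset.exists_maximal hne
  have hgmax : ∀ x ∈ σ, ¬ g < x := fun x hx hlt => hlt.not_ge (hgmax' hx hlt.le)
  have htop : ∀ x ∈ σ, x ≤ g := by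
    intro x hx
    rcases eq_or_ne x g with rfl | hne'
    · exact le_refl x
    rcases hch hx hgσ hne' with h | h
    · exact h
    · exact absurd (lt_of_le_of_ne h hne'.symm) (hgmax x hx)
  set ε : Fin n → Bool := fun i => (g.1 i).getD false with hε
  set lam : Fin n → ℕ := fun i => (σ.filter (fun x => x.1 i = none)).card with hlam
  set cnt : Adm n → ℕ := fun x => (σ.filter (fun y => y ≤ x)).card with hcnt
  have hsupp : ∀ x ∈ σ, ∀ i, x.1 i ≠ none ↔ lam i < cnt x := by
    intro x hx i
    constructor
    · intro hxi
      have hsub : σ.filter (fun y => y.1 i = none) ⊆ (σ.filter (fun y => y ≤ x)).erase x := by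
        intro y hy
        rcases Finset.mem_filter.1 hy with ⟨hyσ, hyi⟩
        have hyx : y ≠ x := by
          rintro rfl
          exact hxi hyi
        refine Finset.mem_erase.2 ⟨hyx, Finset.mem_filter.2 ⟨hyσ, ?_⟩⟩
        rcases hch hyσ hx hyx with h | h
        · exact h
        · exfalso
          rcases hxb : x.1 i with _ | b
          · exact hxi hxb
          · rw [h i b hxb] at hyi
            exact absurd hyi (by simp)
      have hxmem : x ∈ σ.filter (fun y => y ≤ x) := Finset.mem_filter.2 ⟨hx, le_refl x⟩
      have h1 := Finset.card_le_card hsub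
      rw [Finset.card_erase_of_mem hxmem] at h1
      have h2 : 1 ≤ cnt x := Finset.card_pos.2 ⟨x, hxmem⟩
      simp only [hlam, hcnt] at *
      omega
    · intro hlt hxi
      have hsub : σ.filter (fun y => y ≤ x) ⊆ σ.filter (fun y => y.1 i = none) := by
        intro y hy
        rcases Finset.mem_filter.1 hy with ⟨hyσ, hyx⟩
        refine Finset.mem_filter.2 ⟨hyσ, ?_⟩
        rcases hyb : y.1 i with _ | b
        · rfl
        · exfalso
          rw [hyx i b hyb] at hxi
          exact absurd hxi (by simp)
      have := Finset.card_le_card hsub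
      simp only [hlam, hcnt] at *
      omega
  set keyf : Fin n → ℕ := fun i => lam i * (n + 1) + (i : ℕ) with hkeyf
  set π := Tuple.sort keyf with hπ
  have hmono : Monotone (keyf ∘ π) := Tuple.monotone_sort keyf
  have hkeyiff : ∀ x ∈ σ, ∀ i, x.1 i ≠ none ↔ keyf i < cnt x * (n + 1) := by
    intro x hx i
    rw [hsupp x hx i]
    constructor
    · intro h
      calc keyf i = lam i * (n + 1) + (i : ℕ) := rfl
        _ < lam i * (n + 1) + (n + 1) := by have := i.2; omega
        _ = (lam i + 1) * (n + 1) := by ring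
        _ ≤ cnt x * (n + 1) := Nat.mul_le_mul_right _ h
    · intro h
      by_contra hc
      push_neg at hc
      have : cnt x * (n + 1) ≤ lam i * (n + 1) := Nat.mul_le_mul_right _ hc
      have h2 : keyf i = lam i * (n + 1) + (i : ℕ) := rfl
      omega
  refine ⟨(π, ε), ?_⟩
  intro x hx
  have h1 := Adm.one_le_size x
  have h2 := Adm.size_le x
  have hlt : x.size - 1 < n := by omega
  refine mem_chain.2 ⟨⟨x.size - 1, hlt⟩, ?_⟩
  set P := Finset.univ.filter (fun m : Fin n => keyf (π m) < cnt x * (n + 1)) with hP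
  have hPimg : Finset.image π P = Finset.univ.filter (fun i => x.1 i ≠ none) := by
    ext i
    simp only [Finset.mem_image, hP, Finset.mem_filter, Finset.mem_univ, true_and]
    constructor
    · rintro ⟨m, hm, rfl⟩
      exact (hkeyiff x hx (π m)).2 hm
    · intro hi
      exact ⟨π.symm i, by rw [Equiv.apply_symm_apply]; exact (hkeyiff x hx i).1 hi,
        Equiv.apply_symm_apply _ _⟩
  have hPcard : P.card = x.size := by
    rw [← Finset.card_image_of_injective P π.injective, hPimg]
    rfl
  have hPdc : ∀ m m' : Fin n, m' ≤ m → m ∈ P → m' ∈ P := by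
    intro m m' hmm hm
    rcases Finset.mem_filter.1 hm with ⟨-, hm2⟩
    exact Finset.mem_filter.2 ⟨Finset.mem_univ m', lt_of_le_of_lt (hmono hmm) hm2⟩
  have hPiff : ∀ m : Fin n, m ∈ P ↔ (m : ℕ) < x.size := by
    intro m
    constructor
    · intro hm
      have hsub : Finset.Iic m ⊆ P := fun m' hm' => hPdc m m' (Finset.mem_Iic.1 hm') hm
      have := Finset.card_le_card hsub
      rw [Fin.card_Iic, hPcard] at this
      omega
    · intro hm
      by_contra hc
      have hsub : P ⊆ Finset.Iio m := by
        intro m'' hm''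
        rw [Finset.mem_Iio]
        by_contra hc2
        push_neg at hc2
        exact hc (hPdc m'' m hc2 hm'')
      have := Finset.card_le_card hsub
      rw [Fin.card_Iio, hPcard] at this
      omega
  apply Subtype.ext
  funext i
  show (if ((π.symm i : Fin n) : ℕ) ≤ (x.size - 1 : ℕ) then some (ε i) else none) = x.1 i
  rcases hxi : x.1 i with _ | b
  · rw [if_neg]
    intro hc
    have hiP : π.symm i ∈ P := (hPiff _).2 (by omega)
    rw [hP, Finset.mem_filter] at hiP
    rw [Equiv.apply_symm_apply] at hiP
    exact ((hkeyiff x hx i).2 hiP.2) hxi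
  · rw [if_pos]
    · have hgb : g.1 i = some b := htop x hx i b hxi
      simp [hε, hgb]
    · have hiP : π.symm i ∈ P := by
        rw [hP, Finset.mem_filter, Equiv.apply_symm_apply]
        exact ⟨Finset.mem_univ _, (hkeyiff x hx i).1 (by rw [hxi]; simp)⟩
      have := (hPiff _).1 hiP
      omega

theorem part2 (n : ℕ) : ∃ (T : ℕ) (H : Fin T → Finset (Adm n)),
    Function.Injective H ∧
    (∀ σ : Finset (Adm n),
      ((∀ I ∈ σ, Odd I.size) ∧ IsChain (· ≤ ·) (σ : Set (Adm n)) ∧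
        ∀ τ : Finset (Adm n), (∀ I ∈ τ, Odd I.size) →
          IsChain (· ≤ ·) (τ : Set (Adm n)) → σ ⊆ τ → σ = τ)
      ↔ ∃ m, H m = σ) ∧
    IsShellingOrder H := by
  classical
  rcases Nat.eq_zero_or_pos n with rfl | hn
  · haveI : IsEmpty (Adm 0) := ⟨fun x => x.2 (funext fun i => i.elim0)⟩
    refine ⟨1, fun _ => (∅ : Finset (Adm 0)), fun a b _ => Subsingleton.elim a b, ?_, ?_⟩
    · intro σ
      have hσ : σ = ∅ := Subsingleton.elim σ ∅
      subst hσ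
      constructor
      · intro _
        exact ⟨0, rfl⟩
      · intro _
        refine ⟨by simp, by simp [IsChain, Set.Pairwise], ?_⟩
        intro τ _ _ _
        exact (Subsingleton.elim _ _)
    · intro i k hik
      have h1 : (i : ℕ) < 1 := i.2
      have h2 : (k : ℕ) < 1 := k.2
      have := Fin.lt_def.1 hik
      omega
  · obtain ⟨t, F, hFchain, hFsurj, hFshell⟩ := shelling_chains n
    set E := Finset.univ.filter (fun x : Adm n => ¬ Odd x.size) with hE
    obtain ⟨s, G, d, hGinj, hdmono, hG, hleast, hrange⟩ := dedup_exists F E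
    have hoddE : ∀ (A : Finset (Adm n)) (I : Adm n), I ∈ A \ E → Odd I.size := by
      intro A I hI
      have h2 := (Finset.mem_sdiff.1 hI).2
      rw [hE] at h2
      by_contra hc
      exact h2 (Finset.mem_filter.2 ⟨Finset.mem_univ _, hc⟩)
    have hne : ∀ m, (F m \ E).Nonempty := by
      intro m
      obtain ⟨w, hw⟩ := hFchain m
      rw [hw]
      refine ⟨pre w ⟨0, hn⟩, Finset.mem_sdiff.2 ⟨mem_chain.2 ⟨_, rfl⟩, ?_⟩⟩
      rw [hE]
      intro hmem
      refine (Finset.mem_filter.1 hmem).2 ?_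
      rw [size_pre]
      exact ⟨0, by simp⟩
    have hcardF : ∀ m, (F m \ E).card = (n + 1) / 2 := by
      intro m
      obtain ⟨w, hw⟩ := hFchain m
      rw [hw, hE]
      exact card_chain_sdiff w
    have hfacet : ∀ m l, F m \ E ⊆ F l \ E → F m \ E = F l \ E := by
      intro m l hsub
      apply Finset.eq_of_subset_of_card_le hsub
      rw [hcardF m, hcardF l]
    have hshellG : IsShellingOrder G :=
      aux_deleted F E hFshell hne hfacet G hrange d hdmono hG hleast
    have hchainE : ∀ w : Word n,
        IsChain (· ≤ ·) ((chain w \ E : Finset (Adm n)) : Set (Adm n)) := by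
      intro w x hx y hy hxy
      exact chain_isChain w
        (Finset.mem_coe.2 (Finset.sdiff_subset (Finset.mem_coe.1 hx)))
        (Finset.mem_coe.2 (Finset.sdiff_subset (Finset.mem_coe.1 hy))) hxy
    refine ⟨s, G, hGinj, ?_, hshellG⟩
    intro σ
    constructor
    · rintro ⟨hodd, hch, hmax⟩
      have hσne : σ.Nonempty := by
        by_contra hc
        rw [Finset.not_nonempty_iff_eq_empty] at hc
        subst hc
        set w0 : Word n := (Equiv.refl (Fin n), fun _ => false) with hw0
        set x1 : Adm n := pre w0 ⟨0, hn⟩ with hx1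
        have hodd1 : ∀ I ∈ ({x1} : Finset (Adm n)), Odd I.size := by
          intro I hI
          rw [Finset.mem_singleton] at hI
          subst hI
          rw [hx1, size_pre]
          exact ⟨0, by simp⟩
        have hch1 : IsChain (· ≤ ·) (({x1} : Finset (Adm n)) : Set (Adm n)) := by
          intro x hx y hy hxy
          simp at hx hy
          subst hx; subst hy
          exact absurd rfl hxy
        have h1 := hmax {x1} hodd1 hch1 (Finset.empty_subset _)
        exact absurd h1.symm (Finset.singleton_ne_empty x1)
      obtain ⟨w, hw⟩ := exists_chain_superset σ hσne hch
      have hsub : σ ⊆ chain w \ E := by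
        intro x hx
        refine Finset.mem_sdiff.2 ⟨hw hx, ?_⟩
        rw [hE]
        intro hmem
        exact (Finset.mem_filter.1 hmem).2 (hodd x hx)
      have hfin := hmax _ (hoddE (chain w)) (hchainE w) hsub
      obtain ⟨j, hj⟩ := hFsurj w
      obtain ⟨m, hm⟩ := hrange j
      refine ⟨m, ?_⟩
      rw [hm, hj]
      exact hfin.symm
    · rintro ⟨m, rfl⟩
      obtain ⟨w, hw⟩ := hFchain (d m)
      have hGm : G m = chain w \ E := by rw [hG m, hw]
      refine ⟨?_, ?_, ?_⟩
      · intro I hI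
        rw [hGm] at hI
        exact hoddE (chain w) I hI
      · rw [hGm]
        exact hchainE w
      · intro τ hτodd hτch hsubτ
        have h1 : τ.card ≤ (n + 1) / 2 := oddchain_card_le τ hτodd hτch
        have h2 : (G m).card = (n + 1) / 2 := by
          rw [hGm, hE]
          exact card_chain_sdiff w
        exact Finset.eq_of_subset_of_card_le hsubτ (by omega)

end OddShelling


/-- If `F 1, …, F t` is a shelling of a pure complex `K` and `E` a vertex set
such that the sets `F'_m = F m \ E` are nonempty, of equal cardinality, and
facets of the full subcomplex `K'` on the vertices outside `E`, then the
ordering `G` of the distinct sets `F'_m` by first appearance is a shelling of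
`K'`.  In particular, `K_{B_n}^{odd}` is shellable for every `n`. -/
theorem shelling_of_deleted (V : Type*) [DecidableEq V] (t s : ℕ)
    (F : Fin t → Finset V) (E : Finset V)
    (hshell : IsShellingOrder F)
    (hne : ∀ m, (F m \ E).Nonempty)
    (hcard : ∀ m l, (F m \ E).card = (F l \ E).card)
    (hfacet : ∀ m l : Fin t, F m \ E ⊆ F l \ E → F m \ E = F l \ E)
    (G : Fin s → Finset V) (hGinj : Function.Injective G)
    (hrange : Set.range G = Set.range fun m => F m \ E)
    (d : Fin s → Fin t) (hdmono : StrictMono d)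
    (hG : ∀ m, G m = F (d m) \ E)
    (hleast : ∀ (m : Fin s) (j : Fin t), F j \ E = G m → d m ≤ j) :
    IsShellingOrder G ∧
    ∀ n : ℕ, ∃ (T : ℕ) (H : Fin T → Finset (Adm n)),
      Function.Injective H ∧
      (∀ σ : Finset (Adm n),
        ((∀ I ∈ σ, Odd I.size) ∧ IsChain (· ≤ ·) (σ : Set (Adm n)) ∧
          ∀ τ : Finset (Adm n), (∀ I ∈ τ, Odd I.size) →
            IsChain (· ≤ ·) (τ : Set (Adm n)) → σ ⊆ τ → σ = τ)
        ↔ ∃ m, H m = σ) ∧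
      IsShellingOrder H := by
  constructor
  · refine aux_deleted F E hshell hne hfacet G ?_ d hdmono hG hleast
    intro j
    have hj : (F j \ E) ∈ Set.range (fun m => F m \ E) := ⟨j, rfl⟩
    rw [← hrange] at hj
    obtain ⟨m, hm⟩ := hj
    exact ⟨m, hm⟩
  · exact OddShelling.part2
end

section
/- In the poset of odd-cardinality admissible subsets of [±n] (with bottom ∅ and top adjoined), the Möbius function value μ(∅, I) for an odd-cardinality admissible set I with |I| = 2k+1 depends only on |I| and equals (-1)^{k+1} a_{2k+1}, where a_m is the m-th Euler zigzag number. -/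
open scoped Classical

/-- An odd-cardinality admissible subset of `[±n]`, encoded as a function
`Fin n → Option Bool` (`some true` at `i`: `i+1 ∈ I`; `some false`: `-(i+1) ∈ I`). -/
def AdmOdd (n : ℕ) : Type :=
  {f : Fin n → Option Bool //
    f ≠ (fun _ => none) ∧ Odd (Finset.univ.filter fun i => f i ≠ none).card}

/-- Odd admissible subsets are ordered by inclusion. -/
instance (n : ℕ) : PartialOrder (AdmOdd n) where
  le f g := ∀ i b, f.1 i = some b → g.1 i = some b
  le_refl f i b h := h
  le_trans f g h hfg hgh i b hi := hgh i b (hfg i b hi)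
  le_antisymm := by
    rintro ⟨f, hf⟩ ⟨g, hg⟩ hfg hgf
    refine Subtype.ext (funext fun i => ?_)
    show f i = g i
    rcases hfi : f i with _ | b
    · rcases hgi : g i with _ | b
      · rfl
      · exact absurd (hgf i b hgi) (by show ¬ f i = some b; rw [hfi]; simp)
    · exact (hfg i b hfi).symm

noncomputable instance (n : ℕ) : Fintype (AdmOdd n) := by
  unfold AdmOdd; exact Subtype.fintype _

/-- The poset `S̃_{B_n}^{odd}`: the odd-cardinality admissible subsets of `[±n]`
with a bottom element (`∅`) and a top element (`[±n]`) adjoined. -/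
def SBnOdd (n : ℕ) : Type := WithBot (WithTop (AdmOdd n))

noncomputable instance (n : ℕ) : PartialOrder (SBnOdd n) := by
  unfold SBnOdd; infer_instance
noncomputable instance (n : ℕ) : BoundedOrder (SBnOdd n) := by
  unfold SBnOdd; infer_instance
noncomputable instance (n : ℕ) : Fintype (SBnOdd n) := by
  unfold SBnOdd WithBot WithTop; infer_instance


section PartA
variable (a : ℕ → ℝ)
    (ha : ∀ x : ℝ, |x| < Real.pi / 2 →
      HasSum (fun m : ℕ => a m * x ^ m / (m.factorial : ℝ))
        (1 / Real.cos x + Real.tan x))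

/-- tangent-part coefficients -/
noncomputable def tanC (a : ℕ → ℝ) : ℕ → ℝ :=
  fun m => if Odd m then a m / m.factorial else 0

/-- cosine coefficients -/
noncomputable def cosC : ℕ → ℝ :=
  fun m => if Even m then (-1 : ℝ) ^ (m / 2) / m.factorial else 0

/-- sine coefficients -/
noncomputable def sinC : ℕ → ℝ :=
  fun m => if Odd m then (-1 : ℝ) ^ (m / 2) / m.factorial else 0

include ha in
lemma hasSum_tanC (x : ℝ) (hx : |x| < Real.pi / 2) :
    HasSum (fun m : ℕ => tanC a m * x ^ m) (Real.tan x) := by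
  have h1 := ha x hx
  have h2 := ha (-x) (by rwa [abs_neg])
  have h3 := (h1.sub h2).div_const 2
  have heq : ∀ m : ℕ,
      (a m * x ^ m / (m.factorial : ℝ) - a m * (-x) ^ m / (m.factorial : ℝ)) / 2
        = tanC a m * x ^ m := by
    intro m
    rcases Nat.even_or_odd m with hm | hm
    · rw [hm.neg_pow]
      simp [tanC, Nat.not_odd_iff_even.mpr hm]
    · rw [hm.neg_pow]
      simp only [tanC, if_pos hm]
      ring
  rw [show Real.tan x
      = (1 / Real.cos x + Real.tan x - (1 / Real.cos (-x) + Real.tan (-x))) / 2 by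
    rw [Real.cos_neg, Real.tan_neg]; ring]
  exact h3.congr_fun fun m => (heq m).symm

end PartA

section PartA2
variable (a : ℕ → ℝ)
    (ha : ∀ x : ℝ, |x| < Real.pi / 2 →
      HasSum (fun m : ℕ => a m * x ^ m / (m.factorial : ℝ))
        (1 / Real.cos x + Real.tan x))

include ha in
lemma summable_norm_tanC (x : ℝ) (hx : |x| < Real.pi / 2) :
    Summable (fun m : ℕ => ‖tanC a m * x ^ m‖) := by
  set y : ℝ := (|x| + Real.pi / 2) / 2 with hy
  have hx0 : 0 ≤ |x| := abs_nonneg x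
  have hxy : |x| < y := by rw [hy]; linarith
  have hy2 : |y| < Real.pi / 2 := by
    rw [abs_of_nonneg (by positivity)]; rw [hy]; linarith
  have hy0 : 0 < y := lt_of_le_of_lt hx0 hxy
  have hs := (hasSum_tanC a ha y hy2).summable
  have ht : Filter.Tendsto (fun m => tanC a m * y ^ m) Filter.atTop (nhds 0) :=
    hs.tendsto_atTop_zero
  have ht2 : Filter.Tendsto (fun m => ‖tanC a m * y ^ m‖) Filter.atTop (nhds 0) := by
    simpa using ht.norm
  obtain ⟨C, hC⟩ := ht2.bddAbove_range
  have hq : Summable fun m : ℕ => C * (|x| / y) ^ m :=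
    (summable_geometric_of_lt_one (by positivity)
      (by rw [div_lt_one hy0]; exact hxy)).mul_left C
  refine Summable.of_nonneg_of_le (fun m => norm_nonneg _) (fun m => ?_) hq
  have h1 : ‖tanC a m * y ^ m‖ ≤ C := hC ⟨m, rfl⟩
  have h2 : ‖tanC a m * x ^ m‖ = ‖tanC a m * y ^ m‖ * (|x| / y) ^ m := by
    rw [norm_mul, norm_mul, norm_pow, norm_pow, Real.norm_eq_abs, Real.norm_eq_abs,
      Real.norm_eq_abs, abs_of_nonneg hy0.le]
    rw [mul_assoc, ← mul_pow, mul_div_cancel₀ _ hy0.ne']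
  rw [h2]
  have : (0:ℝ) ≤ (|x| / y) ^ m := by positivity
  exact mul_le_mul_of_nonneg_right h1 this

end PartA2

lemma hasSum_cosC (x : ℝ) : HasSum (fun m : ℕ => cosC m * x ^ m) (Real.cos x) := by
  have hinj : Function.Injective (fun n : ℕ => 2 * n) := fun p q h => by simp only at h; omega
  have h0 : ∀ m ∉ Set.range (fun n : ℕ => 2 * n), cosC m * x ^ m = 0 := by
    intro m hm
    have hne : ¬ Even m := by
      simp only [Set.mem_range] at hm
      rintro ⟨r, hr⟩; exact hm ⟨r, by omega⟩
    simp [cosC, hne]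
  rw [← Function.Injective.hasSum_iff hinj h0]
  refine (Real.hasSum_cos x).congr_fun fun n => ?_
  show cosC (2 * n) * x ^ (2 * n) = (-1 : ℝ) ^ n * x ^ (2 * n) / (2 * n).factorial
  have h2 : (2 * n) / 2 = n := by omega
  rw [cosC, if_pos (even_two_mul n), h2]
  ring

lemma hasSum_sinC (x : ℝ) : HasSum (fun m : ℕ => sinC m * x ^ m) (Real.sin x) := by
  have hinj : Function.Injective (fun n : ℕ => 2 * n + 1) := fun p q h => by simp only at h; omega
  have h0 : ∀ m ∉ Set.range (fun n : ℕ => 2 * n + 1), sinC m * x ^ m = 0 := by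
    intro m hm
    have hne : ¬ Odd m := by
      simp only [Set.mem_range] at hm
      rintro ⟨r, hr⟩; exact hm ⟨r, by omega⟩
    simp [sinC, hne]
  rw [← Function.Injective.hasSum_iff hinj h0]
  refine (Real.hasSum_sin x).congr_fun fun n => ?_
  show sinC (2 * n + 1) * x ^ (2 * n + 1) = (-1 : ℝ) ^ n * x ^ (2 * n + 1) / (2 * n + 1).factorial
  have h2 : (2 * n + 1) / 2 = n := by omega
  have hodd : Odd (2 * n + 1) := ⟨n, by ring⟩
  rw [sinC, if_pos hodd, h2]
  ring

lemma summable_norm_cosC (x : ℝ) : Summable (fun m : ℕ => ‖cosC m * x ^ m‖) := by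
  refine Summable.of_nonneg_of_le (fun m => norm_nonneg _) (fun m => ?_)
    (Real.summable_pow_div_factorial |x|)
  rw [norm_mul, norm_pow, Real.norm_eq_abs, Real.norm_eq_abs]
  have h1 : |cosC m| ≤ 1 / m.factorial := by
    unfold cosC
    split
    · rw [abs_div, abs_pow, abs_neg, abs_one, one_pow, Nat.abs_cast]
    · simp
  calc |cosC m| * |x| ^ m ≤ (1 / m.factorial) * |x| ^ m := by
        exact mul_le_mul_of_nonneg_right h1 (by positivity)
    _ = |x| ^ m / m.factorial := by ring

lemma summable_norm_sinC (x : ℝ) : Summable (fun m : ℕ => ‖sinC m * x ^ m‖) := by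
  refine Summable.of_nonneg_of_le (fun m => norm_nonneg _) (fun m => ?_)
    (Real.summable_pow_div_factorial |x|)
  rw [norm_mul, norm_pow, Real.norm_eq_abs, Real.norm_eq_abs]
  have h1 : |sinC m| ≤ 1 / m.factorial := by
    unfold sinC
    split
    · rw [abs_div, abs_pow, abs_neg, abs_one, one_pow, Nat.abs_cast]
    · simp
  calc |sinC m| * |x| ^ m ≤ (1 / m.factorial) * |x| ^ m := by
        exact mul_le_mul_of_nonneg_right h1 (by positivity)
    _ = |x| ^ m / m.factorial := by ring

/-- Cauchy product coefficients of tan * cos -/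
noncomputable def prodC (a : ℕ → ℝ) : ℕ → ℝ :=
  fun n => ∑ i ∈ Finset.range (n + 1), tanC a i * cosC (n - i)

section PartA3
variable (a : ℕ → ℝ)
    (ha : ∀ x : ℝ, |x| < Real.pi / 2 →
      HasSum (fun m : ℕ => a m * x ^ m / (m.factorial : ℝ))
        (1 / Real.cos x + Real.tan x))

include ha in
lemma hasSum_prodC (x : ℝ) (hx : |x| < Real.pi / 2) :
    HasSum (fun n : ℕ => prodC a n * x ^ n) (Real.sin x) := by
  have h := hasSum_sum_range_mul_of_summable_norm
    (summable_norm_tanC a ha x hx) (summable_norm_cosC x)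
  rw [(hasSum_tanC a ha x hx).tsum_eq, (hasSum_cosC x).tsum_eq] at h
  have hcos : Real.cos x ≠ 0 :=
    (Real.cos_pos_of_mem_Ioo (by constructor <;> [linarith [abs_lt.mp hx]; linarith [abs_lt.mp hx]])).ne'
  have htc : Real.tan x * Real.cos x = Real.sin x := by
    rw [Real.tan_eq_sin_div_cos, div_mul_cancel₀ _ hcos]
  rw [htc] at h
  refine h.congr_fun fun n => ?_
  rw [prodC, Finset.sum_mul]
  refine Finset.sum_congr rfl fun i hi => ?_
  have hin : i ≤ n := Nat.lt_succ_iff.mp (Finset.mem_range.mp hi)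
  have : x ^ i * x ^ (n - i) = x ^ n := by rw [← pow_add]; congr 1; omega
  calc tanC a i * cosC (n - i) * x ^ n
      = tanC a i * cosC (n - i) * (x ^ i * x ^ (n - i)) := by rw [this]
    _ = tanC a i * x ^ i * (cosC (n - i) * x ^ (n - i)) := by ring

include ha in
lemma summable_norm_prodC (x : ℝ) (hx : |x| < Real.pi / 2) :
    Summable (fun n : ℕ => ‖prodC a n * x ^ n‖) := by
  have h := (hasSum_sum_range_mul_of_summable_norm (f := fun m => ‖tanC a m * x ^ m‖)
    (g := fun m => ‖cosC m * x ^ m‖) (by simpa using summable_norm_tanC a ha x hx)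
    (by simpa using summable_norm_cosC x)).summable
  refine Summable.of_nonneg_of_le (fun m => norm_nonneg _) (fun n => ?_) h
  calc ‖prodC a n * x ^ n‖ = ‖∑ i ∈ Finset.range (n + 1), tanC a i * x ^ i * (cosC (n - i) * x ^ (n - i))‖ := by
        congr 1
        rw [prodC, Finset.sum_mul]
        refine Finset.sum_congr rfl fun i hi => ?_
        have hin : i ≤ n := Nat.lt_succ_iff.mp (Finset.mem_range.mp hi)
        have hxp : x ^ i * x ^ (n - i) = x ^ n := by rw [← pow_add]; congr 1; omega
        calc tanC a i * cosC (n - i) * x ^ n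
            = tanC a i * cosC (n - i) * (x ^ i * x ^ (n - i)) := by rw [hxp]
          _ = tanC a i * x ^ i * (cosC (n - i) * x ^ (n - i)) := by ring
    _ ≤ ∑ i ∈ Finset.range (n + 1), ‖tanC a i * x ^ i * (cosC (n - i) * x ^ (n - i))‖ :=
        norm_sum_le _ _
    _ = ∑ i ∈ Finset.range (n + 1), ‖tanC a i * x ^ i‖ * ‖cosC (n - i) * x ^ (n - i)‖ := by
        refine Finset.sum_congr rfl fun i _ => norm_mul _ _

end PartA3

section PartA4
variable (a : ℕ → ℝ)
    (ha : ∀ x : ℝ, |x| < Real.pi / 2 →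
      HasSum (fun m : ℕ => a m * x ^ m / (m.factorial : ℝ))
        (1 / Real.cos x + Real.tan x))

lemma one_lt_pi_div_two : (1 : ℝ) < Real.pi / 2 := by
  have := Real.pi_gt_three
  linarith

include ha in
lemma prodC_eq_sinC : prodC a = sinC := by
  have hone : |(1 : ℝ)| < Real.pi / 2 := by rw [abs_one]; exact one_lt_pi_div_two
  have hP : HasFPowerSeriesOnBall Real.sin (FormalMultilinearSeries.ofScalars ℝ (prodC a)) 0 1 := by
    refine ⟨?_, by norm_num, fun {y} hy => ?_⟩
    · apply FormalMultilinearSeries.le_radius_of_summable_norm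
      simp only [FormalMultilinearSeries.ofScalars_norm, NNReal.coe_one, one_pow, mul_one]
      simpa [abs_one] using summable_norm_prodC a ha 1 hone
    · rw [mem_emetric_ball_zero_iff] at hy
      have hy' : |y| < Real.pi / 2 := by
        have : ‖y‖ < 1 := by rw [← ofReal_norm] at hy; exact ENNReal.ofReal_lt_one.mp hy
        rw [Real.norm_eq_abs] at this
        linarith [one_lt_pi_div_two]
      rw [zero_add]
      refine (hasSum_prodC a ha y hy').congr_fun fun n => ?_
      rw [FormalMultilinearSeries.ofScalars_apply_eq, smul_eq_mul]
  have hQ : HasFPowerSeriesOnBall Real.sin (FormalMultilinearSeries.ofScalars ℝ sinC) 0 1 := by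
    refine ⟨?_, by norm_num, fun {y} hy => ?_⟩
    · apply FormalMultilinearSeries.le_radius_of_summable_norm
      simp only [FormalMultilinearSeries.ofScalars_norm, NNReal.coe_one, one_pow, mul_one]
      simpa [abs_one] using summable_norm_sinC 1
    · rw [zero_add]
      refine (hasSum_sinC y).congr_fun fun n => ?_
      rw [FormalMultilinearSeries.ofScalars_apply_eq, smul_eq_mul]
  have := hP.hasFPowerSeriesAt.eq_formalMultilinearSeries hQ.hasFPowerSeriesAt
  exact (FormalMultilinearSeries.ofScalars_series_eq_iff ℝ _ _).mp this

end PartA4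

lemma sum_range_even_odd (K : ℕ) (F : ℕ → ℝ) :
    ∑ i ∈ Finset.range (2 * K), F i = ∑ j ∈ Finset.range K, (F (2 * j) + F (2 * j + 1)) := by
  induction K with
  | zero => simp
  | succ K ih =>
      rw [show 2 * (K + 1) = 2 * K + 1 + 1 by ring, Finset.sum_range_succ, Finset.sum_range_succ,
        ih, Finset.sum_range_succ]
      ring

section PartA5
variable (a : ℕ → ℝ)
    (ha : ∀ x : ℝ, |x| < Real.pi / 2 →
      HasSum (fun m : ℕ => a m * x ^ m / (m.factorial : ℝ))
        (1 / Real.cos x + Real.tan x))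

include ha in
lemma key_identity (k : ℕ) :
    ∑ j ∈ Finset.range (k + 1),
      (-1 : ℝ) ^ j * ((2 * k + 1).choose (2 * j + 1)) * a (2 * j + 1) = 1 := by
  have h := congrFun (prodC_eq_sinC a ha) (2 * k + 1)
  rw [prodC] at h
  rw [show 2 * k + 1 + 1 = 2 * (k + 1) by ring, sum_range_even_odd] at h
  have h2 : ∀ j ∈ Finset.range (k + 1),
      tanC a (2 * j) * cosC (2 * k + 1 - 2 * j) + tanC a (2 * j + 1) * cosC (2 * k + 1 - (2 * j + 1))
        = a (2 * j + 1) / (2 * j + 1).factorial * ((-1 : ℝ) ^ (k - j) / (2 * (k - j)).factorial) := by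
    intro j hj
    have hjk : j ≤ k := Nat.lt_succ_iff.mp (Finset.mem_range.mp hj)
    have hz : tanC a (2 * j) = 0 := by
      rw [tanC, if_neg]
      simp [Nat.even_iff, Nat.odd_iff]
    have h1 : tanC a (2 * j + 1) = a (2 * j + 1) / (2 * j + 1).factorial := by
      rw [tanC, if_pos ⟨j, by ring⟩]
    have hsub : 2 * k + 1 - (2 * j + 1) = 2 * (k - j) := by omega
    have h3 : cosC (2 * k + 1 - (2 * j + 1)) = (-1 : ℝ) ^ (k - j) / (2 * (k - j)).factorial := by
      rw [hsub, cosC, if_pos (even_two_mul _)]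
      congr 2
      omega
    rw [hz, h1, h3]
    ring
  rw [Finset.sum_congr rfl h2] at h
  have hsinC : sinC (2 * k + 1) = (-1 : ℝ) ^ k / (2 * k + 1).factorial := by
    rw [sinC, if_pos ⟨k, by ring⟩]
    congr 2
    omega
  rw [hsinC] at h
  have hgoal : ∀ j ∈ Finset.range (k + 1),
      (-1 : ℝ) ^ j * ((2 * k + 1).choose (2 * j + 1)) * a (2 * j + 1)
        = (-1 : ℝ) ^ k * (2 * k + 1).factorial *
          (a (2 * j + 1) / (2 * j + 1).factorial * ((-1 : ℝ) ^ (k - j) / (2 * (k - j)).factorial)) := by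
    intro j hj
    have hjk : j ≤ k := Nat.lt_succ_iff.mp (Finset.mem_range.mp hj)
    have hle : 2 * j + 1 ≤ 2 * k + 1 := by omega
    have hch := Nat.choose_mul_factorial_mul_factorial hle
    rw [show 2 * k + 1 - (2 * j + 1) = 2 * (k - j) by omega] at hch
    have hchR : (((2 * k + 1).choose (2 * j + 1) : ℕ) : ℝ) * (2 * j + 1).factorial
        * (2 * (k - j)).factorial = (2 * k + 1).factorial := by exact_mod_cast hch
    have hsign : (-1 : ℝ) ^ k = (-1 : ℝ) ^ (k - j) * (-1 : ℝ) ^ j := by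
      rw [← pow_add]
      congr 1
      omega
    have hf1 : ((2 * j + 1).factorial : ℝ) ≠ 0 := Nat.cast_ne_zero.mpr (Nat.factorial_ne_zero _)
    have hf2 : ((2 * (k - j)).factorial : ℝ) ≠ 0 := Nat.cast_ne_zero.mpr (Nat.factorial_ne_zero _)
    rw [← hchR, hsign]
    have e1 : (-1 : ℝ) ^ (k - j) * (-1 : ℝ) ^ (k - j) = 1 := by
      rw [← pow_add, ← two_mul, pow_mul, neg_one_sq, one_pow]
    field_simp
    rw [sq, e1, mul_one]
  rw [Finset.sum_congr rfl hgoal, ← Finset.mul_sum, h]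
  have hfz : ((2 * k + 1).factorial : ℝ) ≠ 0 := Nat.cast_ne_zero.mpr (Nat.factorial_ne_zero _)
  rw [show (-1 : ℝ) ^ k * (2 * k + 1).factorial * ((-1 : ℝ) ^ k / (2 * k + 1).factorial)
      = ((-1 : ℝ) ^ k * (-1 : ℝ) ^ k) * ((2 * k + 1).factorial / (2 * k + 1).factorial) by ring,
    ← pow_add, div_self hfz]
  simp [pow_mul]

end PartA5

namespace MobiusAux

variable {n : ℕ}

/-- support of an odd admissible set -/
noncomputable def supp (J : AdmOdd n) : Finset (Fin n) :=
  Finset.univ.filter fun i => J.1 i ≠ none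

lemma mem_supp {J : AdmOdd n} {i : Fin n} : i ∈ supp J ↔ J.1 i ≠ none := by
  simp [supp]

lemma le_iff {J I : AdmOdd n} : J ≤ I ↔ ∀ i b, J.1 i = some b → I.1 i = some b := Iff.rfl

lemma supp_subset_of_le {J I : AdmOdd n} (h : J ≤ I) : supp J ⊆ supp I := by
  intro i hi
  rw [mem_supp] at hi ⊢
  rcases hb : J.1 i with _ | b
  · exact absurd hb hi
  · rw [h i b hb]; simp

lemma eq_of_le_of_supp_eq {J I : AdmOdd n} (h : J ≤ I) (hs : supp J = supp I) : J = I := by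
  refine Subtype.ext (funext fun i => ?_)
  rcases hb : J.1 i with _ | b
  · have : i ∉ supp J := by rw [mem_supp]; simp [hb]
    rw [hs, mem_supp] at this
    push_neg at this
    rw [this]
  · exact (h i b hb).symm

/-- restrict I to a subset S of its support -/
noncomputable def restr (I : AdmOdd n) (S : Finset (Fin n)) (hS : S ⊆ supp I)
    (hodd : Odd S.card) : AdmOdd n := by
  refine ⟨fun i => if i ∈ S then I.1 i else none, ?_, ?_⟩
  · intro hc
    obtain ⟨i, hi⟩ := Finset.card_pos.mp hodd.pos
    have h1 := congrFun hc i
    simp only [if_pos hi] at h1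
    exact (mem_supp.mp (hS hi)) h1
  · have hfil : (Finset.univ.filter fun i => (if i ∈ S then I.1 i else none) ≠ none) = S := by
      ext i
      simp only [Finset.mem_filter, Finset.mem_univ, true_and]
      constructor
      · intro h
        by_contra hi
        simp [hi] at h
      · intro hi
        simp only [if_pos hi]
        exact mem_supp.mp (hS hi)
    rw [hfil]
    exact hodd

lemma supp_restr (I : AdmOdd n) (S : Finset (Fin n)) (hS : S ⊆ supp I) (hodd : Odd S.card) :
    supp (restr I S hS hodd) = S := by
  ext i
  rw [mem_supp]
  show (if i ∈ S then I.1 i else none) ≠ none ↔ i ∈ S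
  constructor
  · intro h
    by_contra hi
    simp [hi] at h
  · intro hi
    simp only [if_pos hi]
    exact mem_supp.mp (hS hi)

lemma restr_le (I : AdmOdd n) (S : Finset (Fin n)) (hS : S ⊆ supp I) (hodd : Odd S.card) :
    restr I S hS hodd ≤ I := by
  intro i b hb
  change (if i ∈ S then I.1 i else none) = some b at hb
  by_cases hi : i ∈ S
  · rwa [if_pos hi] at hb
  · rw [if_neg hi] at hb; exact absurd hb (by simp)

lemma restr_supp_eq (J I : AdmOdd n) (h : J ≤ I) (hS : supp J ⊆ supp I) :
    restr I (supp J) hS J.2.2 = J := by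
  refine Subtype.ext (funext fun i => ?_)
  show (if i ∈ supp J then I.1 i else none) = J.1 i
  by_cases hi : i ∈ supp J
  · rw [if_pos hi]
    rcases hb : J.1 i with _ | b
    · exact absurd hb (mem_supp.mp hi)
    · exact h i b hb
  · rw [if_neg hi]
    rw [mem_supp] at hi
    push_neg at hi
    rw [hi]

lemma card_supp_odd (J : AdmOdd n) : Odd (supp J).card := J.2.2

lemma sum_lt_eq (I : AdmOdd n) (φ : ℕ → ℝ) :
    ∑ J ∈ Finset.univ.filter (fun J : AdmOdd n => J < I), φ (supp J).card
      = ∑ S ∈ (supp I).powerset.filter (fun S => Odd S.card ∧ S ≠ supp I), φ S.card := by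
  refine Finset.sum_bij' (fun J _ => supp J)
    (fun S hS => restr I S ?_ ?_) ?_ ?_ ?_ ?_ ?_
  · exact Finset.mem_powerset.mp (Finset.mem_filter.mp hS).1
  · exact (Finset.mem_filter.mp hS).2.1
  · -- hi : maps into target
    intro J hJ
    rw [Finset.mem_filter] at hJ
    have hlt := hJ.2
    rw [Finset.mem_filter, Finset.mem_powerset]
    refine ⟨supp_subset_of_le hlt.le, card_supp_odd J, fun hc => ?_⟩
    exact hlt.ne (eq_of_le_of_supp_eq hlt.le hc)
  · -- hj
    intro S hS
    rw [Finset.mem_filter]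
    refine ⟨Finset.mem_univ _, lt_of_le_of_ne (restr_le I S _ _) fun hc => ?_⟩
    have h2 := (Finset.mem_filter.mp hS).2.2
    rw [← supp_restr I S (Finset.mem_powerset.mp (Finset.mem_filter.mp hS).1)
      (Finset.mem_filter.mp hS).2.1, hc] at h2
    exact h2 rfl
  · -- left inverse
    intro J hJ
    rw [Finset.mem_filter] at hJ
    exact restr_supp_eq J I hJ.2.le (supp_subset_of_le hJ.2.le)
  · -- right inverse
    intro S hS
    exact supp_restr I S _ _
  · intro J hJ
    rfl

lemma sum_odd_subsets (X : Finset (Fin n)) (k : ℕ) (hX : X.card = 2 * k + 1) (φ : ℕ → ℝ) :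
    ∑ S ∈ X.powerset.filter (fun S => Odd S.card ∧ S ≠ X), φ S.card
      = ∑ j ∈ Finset.range k, ((2 * k + 1).choose (2 * j + 1) : ℝ) * φ (2 * j + 1) := by
  have hT : X.powerset.filter (fun S => Odd S.card ∧ S ≠ X)
      = (Finset.range k).biUnion (fun j => X.powersetCard (2 * j + 1)) := by
    ext S
    simp only [Finset.mem_filter, Finset.mem_powerset, Finset.mem_biUnion, Finset.mem_range,
      Finset.mem_powersetCard]
    constructor
    · rintro ⟨hsub, ⟨j, hj⟩, hne⟩
      have hlt : S.card < 2 * k + 1 := by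
        rw [← hX]
        exact Finset.card_lt_card (lt_of_le_of_ne hsub (by simpa using hne))
      exact ⟨j, by omega, hsub, by omega⟩
    · rintro ⟨j, hjk, hsub, hcard⟩
      refine ⟨hsub, ⟨j, by omega⟩, fun hc => ?_⟩
      rw [hc, hX] at hcard
      omega
  rw [hT, Finset.sum_biUnion]
  · refine Finset.sum_congr rfl fun j _ => ?_
    have : ∀ S ∈ X.powersetCard (2 * j + 1), φ S.card = φ (2 * j + 1) := by
      intro S hS
      rw [(Finset.mem_powersetCard.mp hS).2]
    rw [Finset.sum_congr rfl this, Finset.sum_const, Finset.card_powersetCard, hX,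
      nsmul_eq_mul]
  · intro p hp q hq hpq
    simp only [Finset.coe_range, Set.mem_Iio] at hp hq
    refine Finset.disjoint_left.mpr fun S hSp hSq => ?_
    rw [Finset.mem_powersetCard] at hSp hSq
    have := hSp.2 ▸ hSq.2
    omega

lemma mem_filter_any {α : Type*} {p : α → Prop} {inst : DecidablePred p} {s : Finset α} {a : α} :
    a ∈ @Finset.filter α p inst s ↔ a ∈ s ∧ p a := Finset.mem_filter

lemma sum_decomp (F : SBnOdd n → ℤ) (I : AdmOdd n) :
    ∑ z ∈ Finset.univ.filter (fun z : SBnOdd n =>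
        ⊥ ≤ z ∧ z < ((I : WithTop (AdmOdd n)) : WithBot (WithTop (AdmOdd n)))), F z
      = F ⊥ + ∑ J ∈ Finset.univ.filter (fun J : AdmOdd n => J < I),
          F ((J : WithTop (AdmOdd n)) : WithBot (WithTop (AdmOdd n))) := by
  rw [← Finset.sum_filter_add_sum_filter_not
    (Finset.univ.filter (fun z : SBnOdd n =>
        ⊥ ≤ z ∧ z < ((I : WithTop (AdmOdd n)) : WithBot (WithTop (AdmOdd n)))))
    (fun z => z = ⊥) F]
  congr 1
  · have hsing : (Finset.univ.filter (fun z : SBnOdd n =>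
        ⊥ ≤ z ∧ z < ((I : WithTop (AdmOdd n)) : WithBot (WithTop (AdmOdd n))))).filter
          (fun z => z = ⊥) = {⊥} := by
      ext z
      simp only [Finset.mem_filter, Finset.mem_univ, true_and, Finset.mem_singleton]
      constructor
      · rintro ⟨_, hz⟩; exact hz
      · rintro rfl
        exact ⟨⟨le_refl _, WithBot.bot_lt_coe _⟩, rfl⟩
    rw [hsing, Finset.sum_singleton]
  · refine (Finset.sum_bij
      (fun (J : AdmOdd n) (_ : J ∈ Finset.univ.filter (fun J : AdmOdd n => J < I)) =>
        ((J : WithTop (AdmOdd n)) : WithBot (WithTop (AdmOdd n)))) ?_ ?_ ?_ ?_).symm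
    · intro J hJ
      rw [Finset.mem_filter] at hJ
      refine Finset.mem_filter.mpr ⟨mem_filter_any.mpr ⟨Finset.mem_univ (α := SBnOdd n) _, bot_le,
        WithBot.coe_lt_coe.mpr (WithTop.coe_lt_coe.mpr hJ.2)⟩, ?_⟩
      exact WithBot.coe_ne_bot
    · intro J _ J' _ hc
      exact WithTop.coe_injective (WithBot.coe_injective hc)
    · intro z hz
      replace hz := And.imp_left mem_filter_any.mp (mem_filter_any.mp hz)
      obtain ⟨⟨_, _, hzlt⟩, hzne⟩ := hz
      obtain _ | w := z
      · exact absurd rfl hzne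
      · obtain _ | J := w
        · exact absurd (WithBot.coe_lt_coe.mp hzlt) not_top_lt
        · exact ⟨J, Finset.mem_filter.mpr ⟨Finset.mem_univ _,
            WithTop.coe_lt_coe.mp (WithBot.coe_lt_coe.mp hzlt)⟩, rfl⟩
    · intro J _
      rfl

lemma mobius_card (a : ℕ → ℝ)
    (hkey : ∀ k, ∑ j ∈ Finset.range (k + 1),
      (-1 : ℝ) ^ j * ((2 * k + 1).choose (2 * j + 1)) * a (2 * j + 1) = 1)
    (mu : SBnOdd n → SBnOdd n → ℤ)
    (hmu_refl : ∀ x, mu x x = 1)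
    (hmu_rec : ∀ x y : SBnOdd n, x < y →
      mu x y = -∑ z ∈ Finset.univ.filter (fun z : SBnOdd n => x ≤ z ∧ z < y), mu x z) :
    ∀ k, ∀ I : AdmOdd n, (supp I).card = 2 * k + 1 →
      ((mu ⊥ ((I : WithTop (AdmOdd n)) : WithBot (WithTop (AdmOdd n))) : ℤ) : ℝ)
        = (-1 : ℝ) ^ (k + 1) * a (2 * k + 1) := by
  intro k
  induction k using Nat.strong_induction_on with
  | _ k IH =>
  intro I hI
  have h := hmu_rec ⊥ ((I : WithTop (AdmOdd n)) : WithBot (WithTop (AdmOdd n)))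
    (WithBot.bot_lt_coe _)
  rw [sum_decomp (mu ⊥) I, hmu_refl] at h
  have hcast := congrArg (fun t : ℤ => (t : ℝ)) h
  push_cast at hcast
  set ψ : ℕ → ℝ := fun m => (-1 : ℝ) ^ (m / 2 + 1) * a m with hψdef
  have hψ : ∀ j : ℕ, ψ (2 * j + 1) = (-1 : ℝ) ^ (j + 1) * a (2 * j + 1) := by
    intro j
    rw [hψdef]
    simp only []
    rw [show (2 * j + 1) / 2 = j by omega]
  have hterm : ∀ J ∈ Finset.univ.filter (fun J : AdmOdd n => J < I),
      ((mu ⊥ ((J : WithTop (AdmOdd n)) : WithBot (WithTop (AdmOdd n))) : ℤ) : ℝ)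
        = ψ (supp J).card := by
    intro J hJ
    have hJlt : J < I := (Finset.mem_filter.mp hJ).2
    obtain ⟨j, hj⟩ := card_supp_odd J
    have hj' : (supp J).card = 2 * j + 1 := by omega
    have hcardlt : (supp J).card < 2 * k + 1 := by
      rw [← hI]
      exact Finset.card_lt_card (lt_of_le_of_ne (supp_subset_of_le hJlt.le)
        fun hc => hJlt.ne (eq_of_le_of_supp_eq hJlt.le hc))
    have hjk : j < k := by omega
    rw [hj', IH j hjk J hj', hψ j]
  rw [Finset.sum_congr rfl hterm, sum_lt_eq I ψ, sum_odd_subsets (supp I) k hI ψ] at hcast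
  have hsum : ∑ j ∈ Finset.range k, ((2 * k + 1).choose (2 * j + 1) : ℝ) * ψ (2 * j + 1)
      = -(1 - (-1 : ℝ) ^ k * a (2 * k + 1)) := by
    have hkk := hkey k
    rw [Finset.sum_range_succ, Nat.choose_self] at hkk
    have h1 : ∑ j ∈ Finset.range k, ((2 * k + 1).choose (2 * j + 1) : ℝ) * ψ (2 * j + 1)
        = -∑ j ∈ Finset.range k,
            (-1 : ℝ) ^ j * ((2 * k + 1).choose (2 * j + 1)) * a (2 * j + 1) := by
      rw [← Finset.sum_neg_distrib]
      refine Finset.sum_congr rfl fun j _ => ?_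
      rw [hψ j, pow_succ]
      ring
    rw [h1]
    have h2 : ∑ j ∈ Finset.range k,
        (-1 : ℝ) ^ j * ((2 * k + 1).choose (2 * j + 1)) * a (2 * j + 1)
        = 1 - (-1 : ℝ) ^ k * a (2 * k + 1) := by
      push_cast at hkk
      linarith [hkk]
    rw [h2]
  rw [hsum] at hcast
  rw [hcast, pow_succ]
  ring

end MobiusAux

/-- In the poset of odd-cardinality admissible subsets of `[±n]` (with bottom
`∅` and top adjoined), the Möbius function value `μ(∅, I)` for a vertex `I`
with `|I| = 2k+1` depends only on `|I|` and equals `(-1)^{k+1} a_{2k+1}`,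
where `a` denotes the Euler zigzag numbers (EGF `sec x + tan x`). -/
theorem mobius_vertex (n : ℕ) (a : ℕ → ℝ)
    (ha : ∀ x : ℝ, |x| < Real.pi / 2 →
      HasSum (fun m : ℕ => a m * x ^ m / (m.factorial : ℝ))
        (1 / Real.cos x + Real.tan x))
    (mu : SBnOdd n → SBnOdd n → ℤ)
    (hmu_refl : ∀ x, mu x x = 1)
    (hmu_rec : ∀ x y : SBnOdd n, x < y →
      mu x y = -∑ z ∈ Finset.univ.filter (fun z : SBnOdd n => x ≤ z ∧ z < y), mu x z)
    (I : AdmOdd n) (k : ℕ)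
    (hI : (Finset.univ.filter fun i => I.1 i ≠ none).card = 2 * k + 1) :
    ((mu ⊥ ((I : WithTop (AdmOdd n)) : WithBot (WithTop (AdmOdd n))) : ℤ) : ℝ)
      = (-1 : ℝ) ^ (k + 1) * a (2 * k + 1) := by
  exact MobiusAux.mobius_card a (fun k' => key_identity a ha k') mu hmu_refl hmu_rec k I hI
end

section
/- For positive n ≥ 3 and S ⊆ [n], the subcomplex (K_{B_n})_S of K_{B_n} (spanned by admissible subsets I of [±n] such that |(I ∪ -I) ∩ S| is odd) is homotopy equivalent to the full subcomplex (K_{B_n})'_S obtained from (K_{B_n})_S by deleting all vertices I with (I ∪ -I) ∩ [n] ⊄ S. -/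
open scoped Classical

namespace KBnAux

variable {n : ℕ}

theorem mem_supp {I : Adm n} {i : Fin n} : i ∈ I.supp ↔ I.1 i ≠ none := by
  simp [Adm.supp]

theorem supp_nonempty (I : Adm n) : I.supp.Nonempty := by
  obtain ⟨i, hi⟩ := Function.ne_iff.1 I.2
  exact ⟨i, mem_supp.2 hi⟩

theorem supp_mono {I J : Adm n} (h : I ≤ J) : I.supp ⊆ J.supp := by
  intro i hi
  rw [mem_supp] at hi ⊢
  rcases hI : I.1 i with _ | b
  · exact absurd hI hi
  · rw [h i b hI]; simp

noncomputable def rmap (S : Finset (Fin n)) (I : Adm n) : Adm n :=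
  if h : (I.supp ∩ S).Nonempty then
    ⟨fun i => if i ∈ S then I.1 i else none, by
      obtain ⟨i, hi⟩ := h
      rw [Finset.mem_inter, mem_supp] at hi
      intro hc
      have := congrFun hc i
      rw [if_pos hi.2] at this
      exact hi.1 this⟩
  else I

theorem rmap_pos {S : Finset (Fin n)} {I : Adm n} (h : (I.supp ∩ S).Nonempty) :
    rmap S I = ⟨fun i => if i ∈ S then I.1 i else none, by
      obtain ⟨i, hi⟩ := h
      rw [Finset.mem_inter, mem_supp] at hi
      intro hc
      have := congrFun hc i
      rw [if_pos hi.2] at this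
      exact hi.1 this⟩ := dif_pos h

theorem rmap_neg {S : Finset (Fin n)} {I : Adm n} (h : ¬ (I.supp ∩ S).Nonempty) :
    rmap S I = I := dif_neg h

theorem rmap_le (S : Finset (Fin n)) (I : Adm n) : rmap S I ≤ I := by
  by_cases h : (I.supp ∩ S).Nonempty
  · rw [rmap_pos h]
    intro i b hb
    simp only at hb
    split at hb
    · exact hb
    · exact absurd hb (by simp)
  · rw [rmap_neg h]

theorem rmap_mono {S : Finset (Fin n)} {I J : Adm n} (hI : (I.supp ∩ S).Nonempty)
    (h : I ≤ J) : rmap S I ≤ rmap S J := by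
  have hJ : (J.supp ∩ S).Nonempty := by
    obtain ⟨i, hi⟩ := hI
    rw [Finset.mem_inter] at hi
    exact ⟨i, Finset.mem_inter.2 ⟨supp_mono h hi.1, hi.2⟩⟩
  rw [rmap_pos hI, rmap_pos hJ]
  intro i b hb
  simp only at hb ⊢
  split at hb
  · rw [if_pos ‹i ∈ S›]; exact h i b hb
  · exact absurd hb (by simp)

theorem supp_rmap {S : Finset (Fin n)} {I : Adm n} (hI : (I.supp ∩ S).Nonempty) :
    (rmap S I).supp = I.supp ∩ S := by
  ext i
  rw [mem_supp, Finset.mem_inter, mem_supp]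
  rw [rmap_pos hI]
  simp only
  by_cases hiS : i ∈ S <;> simp [hiS]

theorem rmap_eq_self {S : Finset (Fin n)} {I : Adm n} (hI : I.supp ⊆ S) :
    rmap S I = I := by
  have hne : (I.supp ∩ S).Nonempty := by
    obtain ⟨i, hi⟩ := supp_nonempty I
    exact ⟨i, Finset.mem_inter.2 ⟨hi, hI hi⟩⟩
  rw [rmap_pos hne]
  refine Subtype.ext (funext fun i => ?_)
  simp only
  by_cases hiS : i ∈ S
  · rw [if_pos hiS]
  · rw [if_neg hiS]
    rcases hIi : I.1 i with _ | b
    · rfl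
    · exact absurd (hI (mem_supp.2 (by rw [hIi]; simp))) hiS


variable (S : Finset (Fin n))

/-- prefix sum: total weight strictly below `I`. -/
noncomputable def pre (f : Adm n → ℝ) (I : Adm n) : ℝ :=
  ∑ J ∈ Finset.univ.filter (· < I), f J

/-- amount of weight moved from `I` to `rmap S I` at time `t`. -/
noncomputable def bet (f : Adm n → ℝ) (t : ℝ) (I : Adm n) : ℝ :=
  min (f I) (max 0 (t - pre f I))

/-- the homotopy at time `t`. -/
noncomputable def Hmap (f : Adm n → ℝ) (t : ℝ) (J : Adm n) : ℝ :=
  f J - bet f t J + ∑ I ∈ Finset.univ.filter (fun I => rmap S I = J), bet f t I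

variable {f : Adm n → ℝ} {t : ℝ}

theorem bet_nonneg (hf : ∀ v, 0 ≤ f v) (I : Adm n) : 0 ≤ bet f t I :=
  le_min (hf I) (le_max_left 0 _)

theorem bet_le (I : Adm n) : bet f t I ≤ f I := min_le_left _ _

theorem pre_nonneg (hf : ∀ v, 0 ≤ f v) (I : Adm n) : 0 ≤ pre f I :=
  Finset.sum_nonneg fun J _ => hf J

theorem Hmap_nonneg (hf : ∀ v, 0 ≤ f v) (J : Adm n) : 0 ≤ Hmap S f t J :=
  add_nonneg (sub_nonneg.2 (bet_le J)) (Finset.sum_nonneg fun I _ => bet_nonneg hf I)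

theorem Hmap_sum (hf : (∑ v, f v) = 1) : (∑ J, Hmap S f t J) = 1 := by
  unfold Hmap
  rw [Finset.sum_add_distrib, Finset.sum_sub_distrib, hf]
  have : (∑ J, ∑ I ∈ Finset.univ.filter (fun I => rmap S I = J), bet f t I)
      = ∑ I, bet f t I :=
    Finset.sum_fiberwise_of_maps_to (fun i _ => Finset.mem_univ _) _
  rw [this]
  ring

theorem Hmap_zero (hf : ∀ v, 0 ≤ f v) : Hmap S f 0 = f := by
  funext J
  have hb : ∀ I, bet f 0 I = 0 := by
    intro I
    unfold bet
    rw [zero_sub, max_eq_left (neg_nonpos.2 (pre_nonneg hf I)), min_eq_right (hf I)]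
  unfold Hmap
  rw [hb J]
  simp [hb]

theorem bet_one (hf : ∀ v, 0 ≤ f v) (hs : (∑ v, f v) = 1) (I : Adm n) :
    bet f 1 I = f I := by
  unfold bet
  have h1 : pre f I + f I ≤ 1 := by
    rw [← hs]
    have : pre f I + f I = ∑ J ∈ insert I (Finset.univ.filter (· < I)), f J := by
      rw [Finset.sum_insert (by simp)]
      unfold pre; ring
    rw [this]
    exact Finset.sum_le_sum_of_subset_of_nonneg (Finset.subset_univ _)
      (fun J _ _ => hf J)
  have : f I ≤ max 0 (1 - pre f I) := le_max_of_le_right (by linarith)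
  rw [min_eq_left this]

theorem key_lt (hf : ∀ v, 0 ≤ f v) {I J : Adm n} (hJI : J < I)
    (hbI : 0 < bet f t I) (hbJ : bet f t J < f J) : False := by
  have h1 : pre f I < t := by
    have := lt_min_iff.1 hbI
    have h2 : 0 < t - pre f I := by
      rcases max_cases 0 (t - pre f I) with ⟨he, _⟩ | ⟨he, _⟩
      · rw [he] at this; linarith [this.2]
      · rw [he] at this; exact this.2
    linarith
  have h2 : t < pre f J + f J := by
    have := min_lt_iff.1 hbJ
    rcases this with h | h
    · linarith
    · have := le_max_right 0 (t - pre f J)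
      have h3 : t - pre f J < f J := lt_of_le_of_lt this h
      linarith
  have h3 : pre f J + f J ≤ pre f I := by
    have hsub : insert J (Finset.univ.filter (· < J)) ⊆ Finset.univ.filter (· < I) := by
      intro K hK
      rcases Finset.mem_insert.1 hK with h | h
      · subst h; simp [hJI]
      · have : K < J := (Finset.mem_filter.1 h).2
        simp [this.trans hJI]
    calc pre f J + f J = ∑ K ∈ insert J (Finset.univ.filter (· < J)), f K := by
          rw [Finset.sum_insert (by simp)]; unfold pre; ring
      _ ≤ pre f I := Finset.sum_le_sum_of_subset_of_nonneg hsub (fun K _ _ => hf K)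
  linarith

theorem chainComplex_mono {P : Adm n → Prop} {σ' σ : Finset (Adm n)}
    (hsub : σ' ⊆ σ) (h : σ ∈ chainComplex P) : σ' ∈ chainComplex P :=
  ⟨fun I hI => h.1 I (hsub hI), h.2.mono (by exact_mod_cast hsub)⟩

theorem Hmap_mem_X {P : Adm n → Prop} (hP : ∀ I, P I → (I.supp ∩ S).Nonempty)
    (hPr : ∀ I, P I → P (rmap S I))
    (hf : f ∈ realization (chainComplex P)) (t : ℝ) :
    Hmap S f t ∈ realization (chainComplex P) := by
  obtain ⟨hf0, hf1, hfc⟩ := hf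
  refine ⟨Hmap_nonneg S hf0, Hmap_sum S hf1, ?_⟩
  set σ := Finset.univ.filter (fun v => f v ≠ 0) with hσdef
  set τ := σ.filter (fun J => bet f t J < f J)
    ∪ (σ.filter (fun I => 0 < bet f t I)).image (rmap S) with hτdef
  have hsup : (Finset.univ.filter fun v => Hmap S f t v ≠ 0) ⊆ τ := by
    intro J hJ
    have hJne : Hmap S f t J ≠ 0 := (Finset.mem_filter.1 hJ).2
    by_cases ha : f J - bet f t J = 0
    · have hs : (∑ I ∈ Finset.univ.filter (fun I => rmap S I = J), bet f t I) ≠ 0 := by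
        intro h0; apply hJne; unfold Hmap; rw [ha, h0]; ring
      obtain ⟨I, hI, hIne⟩ := Finset.exists_ne_zero_of_sum_ne_zero hs
      have hIpos : 0 < bet f t I := lt_of_le_of_ne (bet_nonneg hf0 I) (Ne.symm hIne)
      have hfI : f I ≠ 0 := by
        intro h0
        have := bet_le (f := f) (t := t) I
        rw [h0] at this; linarith
      refine Finset.mem_union_right _ (Finset.mem_image.2 ⟨I, ?_, (Finset.mem_filter.1 hI).2⟩)
      exact Finset.mem_filter.2 ⟨Finset.mem_filter.2 ⟨Finset.mem_univ _, hfI⟩, hIpos⟩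
    · have hlt : bet f t J < f J := lt_of_le_of_ne (bet_le J) (fun h => ha (by rw [h]; ring))
      have hfJ : f J ≠ 0 := by
        intro h0
        have h1 := bet_nonneg (t := t) hf0 J
        rw [h0] at hlt; linarith
      exact Finset.mem_union_left _
        (Finset.mem_filter.2 ⟨Finset.mem_filter.2 ⟨Finset.mem_univ _, hfJ⟩, hlt⟩)
  refine chainComplex_mono hsup ?_
  constructor
  · intro I hI
    rcases Finset.mem_union.1 hI with h | h
    · exact hfc.1 I (Finset.mem_of_mem_filter _ h)
    · obtain ⟨I', hI', rfl⟩ := Finset.mem_image.1 h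
      exact hPr I' (hfc.1 I' (Finset.mem_of_mem_filter _ hI'))
  · intro x hx y hy hxy
    rw [Finset.mem_coe, hτdef, Finset.mem_union] at hx hy
    have comp : ∀ a b : Adm n, a ∈ σ → b ∈ σ → a ≤ b ∨ b ≤ a := by
      intro a b ha hb
      by_cases hab : a = b
      · exact Or.inl (le_of_eq hab)
      · exact hfc.2 ha hb hab
    have hPσ : ∀ a : Adm n, a ∈ σ → (a.supp ∩ S).Nonempty := fun a ha => hP a (hfc.1 a ha)
    have himg : ∀ a b : Adm n, a ∈ σ → b ∈ σ → rmap S a ≤ rmap S b ∨ rmap S b ≤ rmap S a := by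
      intro a b ha hb
      rcases comp a b ha hb with h | h
      · exact Or.inl (rmap_mono (hPσ a ha) h)
      · exact Or.inr (rmap_mono (hPσ b hb) h)
    have hmix : ∀ a b : Adm n, a ∈ σ → bet f t a < f a → b ∈ σ → 0 < bet f t b →
        rmap S b ≤ a := by
      intro a b ha hba hb hbb
      rcases comp b a hb ha with h | h
      · exact (rmap_mono (hPσ b hb) h).trans (rmap_le S a)
      · rcases eq_or_lt_of_le h with rfl | h
        · exact rmap_le S _
        · exact (key_lt hf0 h hbb hba).elim
    rcases hx with hx | hx <;> rcases hy with hy | hy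
    · have hx' := Finset.mem_filter.1 hx
      have hy' := Finset.mem_filter.1 hy
      exact comp x y hx'.1 hy'.1
    · obtain ⟨I', hI', rfl⟩ := Finset.mem_image.1 hy
      have hI'' := Finset.mem_filter.1 hI'
      have hx' := Finset.mem_filter.1 hx
      exact Or.inr (hmix x I' hx'.1 hx'.2 hI''.1 hI''.2)
    · obtain ⟨I', hI', rfl⟩ := Finset.mem_image.1 hx
      have hI'' := Finset.mem_filter.1 hI'
      have hy' := Finset.mem_filter.1 hy
      exact Or.inl (hmix y I' hy'.1 hy'.2 hI''.1 hI''.2)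
    · obtain ⟨I', hI', rfl⟩ := Finset.mem_image.1 hx
      obtain ⟨J', hJ', rfl⟩ := Finset.mem_image.1 hy
      exact himg I' J' (Finset.mem_of_mem_filter _ hI') (Finset.mem_of_mem_filter _ hJ')

set_option maxHeartbeats 1000000 in
theorem Hmap_mem_Y {P : Adm n → Prop} (hP : ∀ I, P I → (I.supp ∩ S).Nonempty)
    (hPr : ∀ I, P I → P (rmap S I))
    (hf : f ∈ realization (chainComplex P)) :
    Hmap S f 1 ∈ realization (chainComplex (fun I => P I ∧ I.supp ⊆ S)) := by
  obtain ⟨hf0, hf1, hfc⟩ := hf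
  refine ⟨Hmap_nonneg S hf0, Hmap_sum S hf1, ?_⟩
  set σ := Finset.univ.filter (fun v => f v ≠ 0) with hσdef
  have hsup : (Finset.univ.filter fun v => Hmap S f 1 v ≠ 0) ⊆ σ.image (rmap S) := by
    intro J hJ
    have hJne : Hmap S f 1 J ≠ 0 := (Finset.mem_filter.1 hJ).2
    have ha : f J - bet f 1 J = 0 := by rw [bet_one hf0 hf1]; ring
    have hs : (∑ I ∈ Finset.univ.filter (fun I => rmap S I = J), bet f 1 I) ≠ 0 := by
      intro h0; apply hJne; unfold Hmap; rw [ha, h0]; ring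
    obtain ⟨I, hI, hIne⟩ := Finset.exists_ne_zero_of_sum_ne_zero hs
    rw [bet_one hf0 hf1] at hIne
    exact Finset.mem_image.2 ⟨I, Finset.mem_filter.2 ⟨Finset.mem_univ _, hIne⟩,
      (Finset.mem_filter.1 hI).2⟩
  refine chainComplex_mono hsup ?_
  have hPσ : ∀ a : Adm n, a ∈ σ → (a.supp ∩ S).Nonempty := fun a ha =>
    hP a (hfc.1 a ha)
  constructor
  · intro I hI
    obtain ⟨I', hI', rfl⟩ := Finset.mem_image.1 hI
    refine ⟨hPr I' (hfc.1 I' hI'), ?_⟩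
    rw [supp_rmap (hPσ I' hI')]
    exact Finset.inter_subset_right
  · intro x hx y hy hxy
    rw [Finset.mem_coe] at hx hy
    obtain ⟨I', hI', rfl⟩ := Finset.mem_image.1 hx
    obtain ⟨J', hJ', rfl⟩ := Finset.mem_image.1 hy
    by_cases hIJ : I' = J'
    · subst hIJ; exact Or.inl le_rfl
    rcases hfc.2 (Finset.mem_coe.2 hI') (Finset.mem_coe.2 hJ') hIJ with h | h
    · exact Or.inl (rmap_mono (hPσ I' hI') h)
    · exact Or.inr (rmap_mono (hPσ J' hJ') h)

theorem Hmap_one_id {P : Adm n → Prop}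
    (hf : f ∈ realization (chainComplex (fun I => P I ∧ I.supp ⊆ S))) :
    Hmap S f 1 = f := by
  obtain ⟨hf0, hf1, hfc⟩ := hf
  funext J
  have hgood : ∀ I : Adm n, f I ≠ 0 → rmap S I = I := by
    intro I hI
    exact rmap_eq_self ((hfc.1 I (Finset.mem_filter.2 ⟨Finset.mem_univ _, hI⟩)).2)
  have key : (∑ I ∈ Finset.univ.filter (fun I => rmap S I = J), f I) = f J := by
    by_cases hfJ : f J = 0
    · rw [hfJ]
      refine Finset.sum_eq_zero fun I hI => ?_
      by_contra hne
      have : I = J := by rw [← hgood I hne]; exact (Finset.mem_filter.1 hI).2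
      exact hne (this ▸ hfJ)
    · refine Finset.sum_eq_single_of_mem J
        (Finset.mem_filter.2 ⟨Finset.mem_univ _, hgood J hfJ⟩) fun I hI hne => ?_
      by_contra hne'
      exact hne (by rw [← hgood I hne']; exact (Finset.mem_filter.1 hI).2)
  unfold Hmap
  rw [bet_one hf0 hf1]
  have : (∑ I ∈ Finset.univ.filter (fun I => rmap S I = J), bet f 1 I)
      = ∑ I ∈ Finset.univ.filter (fun I => rmap S I = J), f I :=
    Finset.sum_congr rfl fun I _ => bet_one hf0 hf1 I
  rw [this, key]
  ring

theorem continuous_Hmap :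
    Continuous (fun p : (Adm n → ℝ) × ℝ => Hmap S p.1 p.2) := by
  apply continuous_pi
  intro J
  have hcoord : ∀ K : Adm n, Continuous (fun p : (Adm n → ℝ) × ℝ => p.1 K) :=
    fun K => (continuous_apply K).comp continuous_fst
  have hbet : ∀ K : Adm n, Continuous (fun p : (Adm n → ℝ) × ℝ => bet p.1 p.2 K) := by
    intro K
    unfold bet pre
    exact (hcoord K).min ((continuous_const).max
      (continuous_snd.sub (continuous_finset_sum _ fun L _ => hcoord L)))
  unfold Hmap
  exact ((hcoord J).sub (hbet J)).add (continuous_finset_sum _ fun I _ => hbet I)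

theorem Y_sub_X {P : Adm n → Prop}
    (hf : f ∈ realization (chainComplex (fun I : Adm n => P I ∧ I.supp ⊆ S))) :
    f ∈ realization (chainComplex P) :=
  ⟨hf.1, hf.2.1, ⟨fun I hI => (hf.2.2.1 I hI).1, hf.2.2.2⟩⟩

end KBnAux

/-- For `n ≥ 3` and `S ⊆ [n]`, the subcomplex `(K_{B_n})_S` of `K_{B_n}`
(the full subcomplex on the admissible subsets `I` of `[±n]` with
`|I^± ∩ S|` odd, where `I^± = (I ∪ -I) ∩ [n]`) is homotopy equivalent to the
full subcomplex `(K_{B_n})'_S` obtained from it by deleting all vertices `I`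
with `I^± ⊄ S`. -/
theorem KBnS_homotopyEquiv_deleted (n : ℕ) (hn : 3 ≤ n) (S : Finset (Fin n)) :
    Nonempty (ContinuousMap.HomotopyEquiv
      ↥(realization (chainComplex fun I : Adm n => Odd (I.supp ∩ S).card))
      ↥(realization (chainComplex fun I : Adm n =>
          Odd (I.supp ∩ S).card ∧ I.supp ⊆ S))) := by
  classical
  have hP : ∀ I : Adm n, Odd ((I.supp ∩ S).card) → (I.supp ∩ S).Nonempty :=
    fun I h => Finset.card_pos.1 h.pos
  have hPr : ∀ I : Adm n, Odd ((I.supp ∩ S).card) →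
      Odd (((KBnAux.rmap S I).supp ∩ S).card) := fun I h => by
    rw [KBnAux.supp_rmap (hP I h), Finset.inter_assoc, Finset.inter_self]
    exact h
  let φ : C(↥(realization (chainComplex fun I : Adm n => Odd (I.supp ∩ S).card)),
      ↥(realization (chainComplex fun I : Adm n =>
          Odd (I.supp ∩ S).card ∧ I.supp ⊆ S))) :=
    ⟨fun x => ⟨KBnAux.Hmap S x.1 1, KBnAux.Hmap_mem_Y S hP hPr x.2⟩,
      Continuous.subtype_mk ((KBnAux.continuous_Hmap S).comp
        (continuous_subtype_val.prodMk continuous_const)) _⟩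
  let ι : C(↥(realization (chainComplex fun I : Adm n =>
          Odd (I.supp ∩ S).card ∧ I.supp ⊆ S)),
      ↥(realization (chainComplex fun I : Adm n => Odd (I.supp ∩ S).card))) :=
    ⟨fun y => ⟨y.1, KBnAux.Y_sub_X S y.2⟩,
      Continuous.subtype_mk continuous_subtype_val _⟩
  refine ⟨⟨φ, ι, ⟨?_⟩, ?_⟩⟩
  · -- homotopy from ι ∘ φ to id
    refine
      { toContinuousMap := ⟨fun p => ⟨KBnAux.Hmap S p.2.1 (1 - (p.1 : ℝ)),
          KBnAux.Hmap_mem_X S hP hPr p.2.2 _⟩,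
          Continuous.subtype_mk ((KBnAux.continuous_Hmap S).comp
            ((continuous_subtype_val.comp continuous_snd).prodMk
              (continuous_const.sub
                ((continuous_subtype_val).comp continuous_fst)))) _⟩,
        map_zero_left := fun x => Subtype.ext ?_,
        map_one_left := fun x => Subtype.ext ?_ }
    · show KBnAux.Hmap S x.1 (1 - ((0 : unitInterval) : ℝ)) = KBnAux.Hmap S x.1 1
      norm_num
    · show KBnAux.Hmap S x.1 (1 - ((1 : unitInterval) : ℝ)) = x.1
      rw [show (1 : ℝ) - ((1 : unitInterval) : ℝ) = 0 by norm_num]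
      exact KBnAux.Hmap_zero S x.2.1
  · have heq : φ.comp ι = ContinuousMap.id _ :=
      ContinuousMap.ext fun y => Subtype.ext
        (KBnAux.Hmap_one_id S (P := fun I : Adm n => Odd ((I.supp ∩ S).card)) y.2)
    rw [heq]
end
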